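/- arXiv:1011.1279 — 8 statements merged into one kernel-verified Lean document; each statement's English description precedes it below -/
import Mathlib

section
/- For all i, j ∈ [N], the discrete marginal profit contribution functions satisfy the cumulative maximum identities Σ_{i'=i}^{N} f(i',j) = max_{i ≤ i' ≤ N} i'·(Σ_{t=i'}^{N} φ(t,j)) and Σ_{j'=j}^{N} g(i,j') = max_{j ≤ j' ≤ N} j'·(Σ_{t=j'}^{N} φ(i,t)). -/
lemma mpc_aux (N : ℕ) (F Φ : ℕ → ℝ)
    (hΦ : ∀ i, 0 ≤ Φ i)
    (hF : ∀ i, F i = max (Φ i - ∑ i' ∈ Finset.Icc (i+1) N, F i') 0) :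
    ∀ i (hiN : i ≤ N),
      ∑ i' ∈ Finset.Icc i N, F i' =
        (Finset.Icc i N).sup' (Finset.nonempty_Icc.mpr hiN) Φ := by
  have key : ∀ d i, i ≤ N → N - i = d →
      ∀ (h : (Finset.Icc i N).Nonempty),
      ∑ i' ∈ Finset.Icc i N, F i' = (Finset.Icc i N).sup' h Φ := by
    intro d
    induction d with
    | zero =>
        intro i hiN hd h
        have : i = N := by omega
        subst this
        simp only [Finset.Icc_self, Finset.sum_singleton, Finset.sup'_singleton]
        rw [hF i]
        rw [Finset.Icc_eq_empty (by omega), Finset.sum_empty, sub_zero,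
          max_eq_left (hΦ i)]
    | succ d ih =>
        intro i hiN hd h
        have hlt : i < N := by omega
        have hins : Finset.Icc i N = insert i (Finset.Icc (i+1) N) := by
          ext x; simp only [Finset.mem_Icc, Finset.mem_insert]; omega
        have hnm : i ∉ Finset.Icc (i+1) N := by simp
        have hne : (Finset.Icc (i+1) N).Nonempty := Finset.nonempty_Icc.mpr (by omega)
        have hS := ih (i+1) (by omega) (by omega) hne
        rw [Finset.sup'_congr h hins (fun _ _ => rfl)]
        rw [Finset.sum_congr hins (fun _ _ => rfl), Finset.sum_insert hnm,
          Finset.sup'_insert (b := i) (s := Finset.Icc (i+1) N) hne, hF i, hS]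
        rcases le_total (Φ i) ((Finset.Icc (i+1) N).sup' hne Φ) with hle | hle
        · rw [max_eq_right hle, max_eq_right (by linarith), zero_add]
        · rw [max_eq_left hle, max_eq_left (by linarith), sub_add_cancel]
  intro i hiN
  exact key (N - i) i hiN rfl _


/-- The discrete marginal profit contribution functions satisfy the
cumulative maximum identities
`Σ_{i'=i}^{N} f(i',j) = max_{i ≤ i' ≤ N} i'·(Σ_{t=i'}^{N} φ(t,j))` and
`Σ_{j'=j}^{N} g(i,j') = max_{j ≤ j' ≤ N} j'·(Σ_{t=j'}^{N} φ(i,t))`. -/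
theorem mpc_cumulative_max_identities
    (N : ℕ) (φ f g : ℕ → ℕ → ℝ)
    -- φ is a probability mass function on [N]×[N]
    (hφ : ∀ i j, 0 ≤ φ i j)
    (hφsum : ∑ i ∈ Finset.Icc 1 N, ∑ j ∈ Finset.Icc 1 N, φ i j = 1)
    -- downward recursions defining the marginal profit contribution functions
    (hf : ∀ i j, f i j =
      max ((i : ℝ) * ∑ i' ∈ Finset.Icc i N, φ i' j
            - ∑ i' ∈ Finset.Icc (i + 1) N, f i' j) 0)
    (hg : ∀ i j, g i j =
      max ((j : ℝ) * ∑ j' ∈ Finset.Icc j N, φ i j'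
            - ∑ j' ∈ Finset.Icc (j + 1) N, g i j') 0)
    (i j : ℕ) (hi1 : 1 ≤ i) (hiN : i ≤ N) (hj1 : 1 ≤ j) (hjN : j ≤ N) :
    (∑ i' ∈ Finset.Icc i N, f i' j
      = (Finset.Icc i N).sup' (Finset.nonempty_Icc.mpr hiN)
          (fun i' => (i' : ℝ) * ∑ t ∈ Finset.Icc i' N, φ t j)) ∧
    (∑ j' ∈ Finset.Icc j N, g i j'
      = (Finset.Icc j N).sup' (Finset.nonempty_Icc.mpr hjN)
          (fun j' => (j' : ℝ) * ∑ t ∈ Finset.Icc j' N, φ i t)) := by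
  constructor
  · exact mpc_aux N (fun i' => f i' j)
      (fun i' => (i' : ℝ) * ∑ t ∈ Finset.Icc i' N, φ t j)
      (fun i' => mul_nonneg (Nat.cast_nonneg i') (Finset.sum_nonneg fun t _ => hφ t j))
      (fun i' => hf i' j) i hiN
  · exact mpc_aux N (fun j' => g i j')
      (fun j' => (j' : ℝ) * ∑ t ∈ Finset.Icc j' N, φ i t)
      (fun j' => mul_nonneg (Nat.cast_nonneg j') (Finset.sum_nonneg fun t _ => hφ i t))
      (fun j' => hg i j') j hjN
end

section
/- Let (α,β) be a proper valid allocation pair inducing the pair (A,B). Then the expected threshold revenue equals the total marginal profit contribution of the allocated points: Σ_{j : α(j) ≤ N} α(j)·(Σ_{i=α(j)}^{N} φ(i,j)) + Σ_{i : β(i) ≤ N} β(i)·(Σ_{j=β(i)}^{N} φ(i,j)) = Σ_{(i,j)∈A} f(i,j) + Σ_{(i,j)∈B} g(i,j). -/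
lemma col_sum (N : ℕ) (φ f : ℕ → ℕ → ℝ)
    (hf : ∀ i j, f i j =
      max ((i : ℝ) * ∑ i' ∈ Finset.Icc i N, φ i' j
            - ∑ i' ∈ Finset.Icc (i + 1) N, f i' j) 0)
    (k j : ℕ) (hk : k ≤ N) (hpos : 0 < f k j) :
    ∑ i ∈ Finset.Icc k N, f i j = (k : ℝ) * ∑ i ∈ Finset.Icc k N, φ i j := by
  have hins : Finset.Icc k N = insert k (Finset.Icc (k + 1) N) := by
    ext x; simp [Finset.mem_Icc]; omega
  have hfk : f k j = (k : ℝ) * ∑ i' ∈ Finset.Icc k N, φ i' j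
      - ∑ i' ∈ Finset.Icc (k + 1) N, f i' j := by
    rcases le_or_gt ((k : ℝ) * ∑ i' ∈ Finset.Icc k N, φ i' j
      - ∑ i' ∈ Finset.Icc (k + 1) N, f i' j) 0 with h | h
    · exfalso; rw [hf k j, max_eq_right h] at hpos; exact lt_irrefl _ hpos
    · rw [hf k j, max_eq_left h.le]
  rw [hins, Finset.sum_insert (by simp), hfk]
  rw [← hins]; ring

/-- For a proper valid allocation pair `(α,β)` inducing `(A,B)`,
the expected threshold revenue equals the total marginal profit contribution of
the allocated points. -/
theorem threshold_revenue_eq_mpc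
    (N : ℕ) (φ f g : ℕ → ℕ → ℝ)
    -- φ is a probability mass function on [N]×[N]
    (hφ : ∀ i j, 0 ≤ φ i j)
    (hφsum : ∑ i ∈ Finset.Icc 1 N, ∑ j ∈ Finset.Icc 1 N, φ i j = 1)
    -- downward recursions defining the marginal profit contribution functions
    (hf : ∀ i j, f i j =
      max ((i : ℝ) * ∑ i' ∈ Finset.Icc i N, φ i' j
            - ∑ i' ∈ Finset.Icc (i + 1) N, f i' j) 0)
    (hg : ∀ i j, g i j =
      max ((j : ℝ) * ∑ j' ∈ Finset.Icc j N, φ i j'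
            - ∑ j' ∈ Finset.Icc (j + 1) N, g i j') 0)
    -- (α,β) is a pair of functions [N] → {1,…,N+1}
    (α β : ℕ → ℕ)
    (hα : ∀ j ∈ Finset.Icc 1 N, α j ∈ Finset.Icc 1 (N + 1))
    (hβ : ∀ i ∈ Finset.Icc 1 N, β i ∈ Finset.Icc 1 (N + 1))
    -- non-crossing property
    (hnc : ∀ i ∈ Finset.Icc 1 N, ∀ j ∈ Finset.Icc 1 N, β i ≤ j → i < α j)
    -- properness
    (hpropα : ∀ j ∈ Finset.Icc 1 N, α j ≤ N → 0 < f (α j) j)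
    (hpropβ : ∀ i ∈ Finset.Icc 1 N, β i ≤ N → 0 < g i (β i))
    -- the induced pair (A,B)
    (A B : Finset (ℕ × ℕ))
    (hA : A = (Finset.Icc 1 N ×ˢ Finset.Icc 1 N).filter (fun p => α p.2 ≤ p.1))
    (hB : B = (Finset.Icc 1 N ×ˢ Finset.Icc 1 N).filter (fun p => β p.1 ≤ p.2)) :
    (∑ j ∈ (Finset.Icc 1 N).filter (fun j => α j ≤ N),
        (α j : ℝ) * ∑ i ∈ Finset.Icc (α j) N, φ i j)
    + (∑ i ∈ (Finset.Icc 1 N).filter (fun i => β i ≤ N),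
        (β i : ℝ) * ∑ j ∈ Finset.Icc (β i) N, φ i j)
    = (∑ p ∈ A, f p.1 p.2) + (∑ p ∈ B, g p.1 p.2) := by
  have keyA : ∀ j ∈ Finset.Icc 1 N,
      (∑ i ∈ Finset.Icc 1 N, if α j ≤ i then f i j else 0)
      = if α j ≤ N then (α j : ℝ) * ∑ i ∈ Finset.Icc (α j) N, φ i j else 0 := by
    intro j hj
    by_cases h : α j ≤ N
    · rw [if_pos h, ← col_sum N φ f hf (α j) j h (hpropα j hj h), ← Finset.sum_filter]
      apply Finset.sum_congr _ (fun _ _ => rfl)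
      have h1 := hα j hj; simp only [Finset.mem_Icc] at h1
      ext x; simp only [Finset.mem_filter, Finset.mem_Icc]; omega
    · rw [if_neg h]
      apply Finset.sum_eq_zero
      intro i hi; simp only [Finset.mem_Icc] at hi
      have h1 := hα j hj; simp only [Finset.mem_Icc] at h1
      rw [if_neg (by omega)]
  have keyB : ∀ i ∈ Finset.Icc 1 N,
      (∑ j ∈ Finset.Icc 1 N, if β i ≤ j then g i j else 0)
      = if β i ≤ N then (β i : ℝ) * ∑ j ∈ Finset.Icc (β i) N, φ i j else 0 := by
    intro i hi
    have hg' : ∀ a b, (fun a b => g b a) a b =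
        max ((a : ℝ) * ∑ a' ∈ Finset.Icc a N, (fun a b => φ b a) a' b
          - ∑ a' ∈ Finset.Icc (a + 1) N, (fun a b => g b a) a' b) 0 := by
      intro a b; exact hg b a
    by_cases h : β i ≤ N
    · rw [if_pos h,
        ← col_sum N (fun a b => φ b a) (fun a b => g b a) hg' (β i) i h (hpropβ i hi h),
        ← Finset.sum_filter]
      apply Finset.sum_congr _ (fun _ _ => rfl)
      have h1 := hβ i hi; simp only [Finset.mem_Icc] at h1
      ext x; simp only [Finset.mem_filter, Finset.mem_Icc]; omega
    · rw [if_neg h]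
      apply Finset.sum_eq_zero
      intro j hj; simp only [Finset.mem_Icc] at hj
      have h1 := hβ i hi; simp only [Finset.mem_Icc] at h1
      rw [if_neg (by omega)]
  have hAeq : (∑ p ∈ A, f p.1 p.2)
      = ∑ j ∈ (Finset.Icc 1 N).filter (fun j => α j ≤ N),
          (α j : ℝ) * ∑ i ∈ Finset.Icc (α j) N, φ i j := by
    rw [hA, Finset.sum_filter, Finset.sum_product, Finset.sum_comm,
      Finset.sum_congr rfl keyA, ← Finset.sum_filter]
  have hBeq : (∑ p ∈ B, g p.1 p.2)
      = ∑ i ∈ (Finset.Icc 1 N).filter (fun i => β i ≤ N),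
          (β i : ℝ) * ∑ j ∈ Finset.Icc (β i) N, φ i j := by
    rw [hB, Finset.sum_filter, Finset.sum_product,
      Finset.sum_congr rfl keyB, ← Finset.sum_filter]
  rw [hAeq, hBeq]
end

section
/- Let (A,B) be a pair of disjoint subsets of [N]×[N]. Then (A,B) ∈ Π(φ) if and only if (A,B) is monotone and proper and the vertex set {u_{i,j} : (i,j) ∈ A} ∪ {w_{i,j} : (i,j) ∈ B} is an independent set of the bipartite graph G^φ. -/
/-- The bipartite graph `G^φ`: one part `U` consists of vertices `u_{i,j}`
(encoded as `Sum.inl (i,j)`), the other part `W` of vertices `w_{i,j}`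
(encoded as `Sum.inr (i,j)`); `u_{i,j}` is adjacent to `w_{i',j'}` iff
`i ≤ i'` and `j' ≤ j`. -/
def Gphi : SimpleGraph ((ℕ × ℕ) ⊕ (ℕ × ℕ)) :=
  SimpleGraph.fromRel (fun a b =>
    ∃ i j i' j', a = Sum.inl (i, j) ∧ b = Sum.inr (i', j') ∧ i ≤ i' ∧ j' ≤ j)

/-- A set of vertices is independent if it contains no edge. -/
def IsIndepSetOf {V : Type*} (G : SimpleGraph V) (s : Set V) : Prop :=
  ∀ a ∈ s, ∀ b ∈ s, ¬ G.Adj a b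

/-- `(α,β)` is a valid allocation pair for `[N]`: functions `[N] → {1,…,N+1}`
satisfying the non-crossing property. -/
def ValidPair (N : ℕ) (α β : ℕ → ℕ) : Prop :=
  (∀ j ∈ Finset.Icc 1 N, α j ∈ Finset.Icc 1 (N + 1)) ∧
  (∀ i ∈ Finset.Icc 1 N, β i ∈ Finset.Icc 1 (N + 1)) ∧
  (∀ i ∈ Finset.Icc 1 N, ∀ j ∈ Finset.Icc 1 N, β i ≤ j → i < α j)

/-- `(α,β)` is proper with respect to marginal profit contributions `f`, `g`. -/
def ProperPairFn (N : ℕ) (f g : ℕ → ℕ → ℝ) (α β : ℕ → ℕ) : Prop :=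
  (∀ j ∈ Finset.Icc 1 N, α j ≤ N → 0 < f (α j) j) ∧
  (∀ i ∈ Finset.Icc 1 N, β i ≤ N → 0 < g i (β i))

/-- `(α,β)` induces the pair of sets `(A,B)`. -/
def InducedBy (N : ℕ) (α β : ℕ → ℕ) (A B : Finset (ℕ × ℕ)) : Prop :=
  A = (Finset.Icc 1 N ×ˢ Finset.Icc 1 N).filter (fun p => α p.2 ≤ p.1) ∧
  B = (Finset.Icc 1 N ×ˢ Finset.Icc 1 N).filter (fun p => β p.1 ≤ p.2)

/-- `(A,B) ∈ Π(φ)`: the pair is induced by some proper valid allocation pair. -/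
def InPi (N : ℕ) (f g : ℕ → ℕ → ℝ) (A B : Finset (ℕ × ℕ)) : Prop :=
  ∃ α β : ℕ → ℕ, ValidPair N α β ∧ ProperPairFn N f g α β ∧ InducedBy N α β A B

/-- A pair of disjoint subsets `(A,B)` of `[N]×[N]` is monotone. -/
def MonoPair (N : ℕ) (A B : Finset (ℕ × ℕ)) : Prop :=
  (∀ i j i', (i, j) ∈ A → i < i' → i' ≤ N → (i', j) ∈ A) ∧
  (∀ i j j', (i, j) ∈ B → j < j' → j' ≤ N → (i, j') ∈ B)

/-- A pair of disjoint subsets `(A,B)` of `[N]×[N]` is proper: all lower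
boundary points have positive marginal profit contribution. -/
def ProperPair (N : ℕ) (f g : ℕ → ℕ → ℝ) (A B : Finset (ℕ × ℕ)) : Prop :=
  (∀ i j, (i, j) ∈ A → (∀ i' < i, (i', j) ∉ A) → 0 < f i j) ∧
  (∀ i j, (i, j) ∈ B → (∀ j' < j, (i, j') ∉ B) → 0 < g i j)

/-- The vertex set `{u_{i,j} : (i,j) ∈ A} ∪ {w_{i,j} : (i,j) ∈ B}`. -/
def pairVerts (A B : Finset (ℕ × ℕ)) : Set ((ℕ × ℕ) ⊕ (ℕ × ℕ)) :=
  (Sum.inl '' (A : Set (ℕ × ℕ))) ∪ (Sum.inr '' (B : Set (ℕ × ℕ)))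

open Classical in
/-- The least index satisfying `P`, or `N+1` if there is none. -/
noncomputable def firstIdx (N : ℕ) (P : ℕ → Prop) : ℕ :=
  if h : ∃ i, P i then Nat.find h else N + 1

open Classical in
lemma firstIdx_le {N : ℕ} {P : ℕ → Prop} {i : ℕ} (h : P i) : firstIdx N P ≤ i := by
  rw [firstIdx, dif_pos ⟨i, h⟩]
  exact Nat.find_le h

open Classical in
lemma firstIdx_spec {N : ℕ} {P : ℕ → Prop} (h : firstIdx N P ≤ N) : P (firstIdx N P) := by
  by_cases hex : ∃ i, P i
  · rw [firstIdx, dif_pos hex] at h ⊢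
    exact Nat.find_spec hex
  · rw [firstIdx, dif_neg hex] at h
    omega

open Classical in
lemma firstIdx_le_succ {N : ℕ} {P : ℕ → Prop} (h : ∀ i, P i → i ≤ N) :
    firstIdx N P ≤ N + 1 := by
  by_cases hex : ∃ i, P i
  · obtain ⟨i, hi⟩ := hex
    exact le_trans (firstIdx_le hi) (le_trans (h i hi) (Nat.le_succ N))
  · rw [firstIdx, dif_neg hex]

open Classical in
lemma firstIdx_pos {N : ℕ} {P : ℕ → Prop} (h : ∀ i, P i → 1 ≤ i) :
    1 ≤ firstIdx N P := by
  by_cases hle : firstIdx N P ≤ N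
  · exact h _ (firstIdx_spec hle)
  · omega

open Classical in
lemma firstIdx_min {N : ℕ} {P : ℕ → Prop} {i : ℕ} (h : i < firstIdx N P) : ¬ P i := by
  intro hp
  exact absurd h (not_lt.mpr (firstIdx_le hp))

/-- `(A,B) ∈ Π(φ)` iff `(A,B)` is monotone and proper and the
corresponding vertex set is an independent set of the bipartite graph `G^φ`. -/
theorem inPi_iff_monotone_proper_indep
    (N : ℕ) (φ f g : ℕ → ℕ → ℝ)
    (hφ : ∀ i j, 0 ≤ φ i j)
    (hφsum : ∑ i ∈ Finset.Icc 1 N, ∑ j ∈ Finset.Icc 1 N, φ i j = 1)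
    (hf : ∀ i j, f i j =
      max ((i : ℝ) * ∑ i' ∈ Finset.Icc i N, φ i' j
            - ∑ i' ∈ Finset.Icc (i + 1) N, f i' j) 0)
    (hg : ∀ i j, g i j =
      max ((j : ℝ) * ∑ j' ∈ Finset.Icc j N, φ i j'
            - ∑ j' ∈ Finset.Icc (j + 1) N, g i j') 0)
    (A B : Finset (ℕ × ℕ))
    (hA : A ⊆ Finset.Icc 1 N ×ˢ Finset.Icc 1 N)
    (hB : B ⊆ Finset.Icc 1 N ×ˢ Finset.Icc 1 N)
    (hdisj : Disjoint A B) :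
    InPi N f g A B ↔
      (MonoPair N A B ∧ ProperPair N f g A B ∧
        IsIndepSetOf Gphi (pairVerts A B)) := by
  classical
  constructor
  · rintro ⟨α, β, ⟨hα1, hβ1, hcross⟩, ⟨hpf, hpg⟩, hAe, hBe⟩
    have hmemA : ∀ i j, (i, j) ∈ A ↔ 1 ≤ i ∧ i ≤ N ∧ 1 ≤ j ∧ j ≤ N ∧ α j ≤ i := by
      intro i j
      rw [hAe]
      simp only [Finset.mem_filter, Finset.mem_product, Finset.mem_Icc]
      tauto
    have hmemB : ∀ i j, (i, j) ∈ B ↔ 1 ≤ i ∧ i ≤ N ∧ 1 ≤ j ∧ j ≤ N ∧ β i ≤ j := by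
      intro i j
      rw [hBe]
      simp only [Finset.mem_filter, Finset.mem_product, Finset.mem_Icc]
      tauto
    refine ⟨⟨?_, ?_⟩, ⟨?_, ?_⟩, ?_⟩
    · intro i j i' hij hlt hle
      rw [hmemA] at hij ⊢; omega
    · intro i j j' hij hlt hle
      rw [hmemB] at hij ⊢; omega
    · intro i j hij hmin
      rw [hmemA] at hij
      obtain ⟨h1i, hiN, h1j, hjN, hαj⟩ := hij
      have hαeq : α j = i := by
        by_contra hne
        have h1α : 1 ≤ α j :=
          (Finset.mem_Icc.mp (hα1 j (Finset.mem_Icc.mpr ⟨h1j, hjN⟩))).1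
        exact hmin (α j) (by omega)
          ((hmemA _ _).mpr ⟨h1α, by omega, h1j, hjN, le_refl _⟩)
      have := hpf j (Finset.mem_Icc.mpr ⟨h1j, hjN⟩) (by omega)
      rwa [hαeq] at this
    · intro i j hij hmin
      rw [hmemB] at hij
      obtain ⟨h1i, hiN, h1j, hjN, hβi⟩ := hij
      have hβeq : β i = j := by
        by_contra hne
        have h1β : 1 ≤ β i :=
          (Finset.mem_Icc.mp (hβ1 i (Finset.mem_Icc.mpr ⟨h1i, hiN⟩))).1
        exact hmin (β i) (by omega)
          ((hmemB _ _).mpr ⟨h1i, hiN, h1β, by omega, le_refl _⟩)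
      have := hpg i (Finset.mem_Icc.mpr ⟨h1i, hiN⟩) (by omega)
      rwa [hβeq] at this
    · intro a ha b hb hadj
      rw [Gphi, SimpleGraph.fromRel_adj] at hadj
      obtain ⟨hne, h | h⟩ := hadj
      · obtain ⟨i, j, i', j', hae, hbe, hii, hjj⟩ := h
        subst hae hbe
        simp only [pairVerts, Set.mem_union, Set.mem_image, Finset.mem_coe,
          Sum.inl.injEq, Sum.inr.injEq, and_false, exists_false, or_false,
          false_or, reduceCtorEq, exists_eq_right] at ha hb
        rw [hmemA] at ha
        rw [hmemB] at hb
        obtain ⟨h1i, hiN, h1j, hjN, hαj⟩ := ha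
        obtain ⟨h1i', hi'N, h1j', hj'N, hβi'⟩ := hb
        have := hcross i' (Finset.mem_Icc.mpr ⟨h1i', hi'N⟩) j
          (Finset.mem_Icc.mpr ⟨h1j, hjN⟩) (by omega)
        omega
      · obtain ⟨i, j, i', j', hbe, hae, hii, hjj⟩ := h
        subst hae hbe
        simp only [pairVerts, Set.mem_union, Set.mem_image, Finset.mem_coe,
          Sum.inl.injEq, Sum.inr.injEq, and_false, exists_false, or_false,
          false_or, reduceCtorEq, exists_eq_right] at ha hb
        rw [hmemA] at hb
        rw [hmemB] at ha
        obtain ⟨h1i, hiN, h1j, hjN, hαj⟩ := hb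
        obtain ⟨h1i', hi'N, h1j', hj'N, hβi'⟩ := ha
        have := hcross i' (Finset.mem_Icc.mpr ⟨h1i', hi'N⟩) j
          (Finset.mem_Icc.mpr ⟨h1j, hjN⟩) (by omega)
        omega
  · rintro ⟨⟨hmA, hmB⟩, ⟨hpA, hpB⟩, _hind⟩
    refine ⟨fun j => firstIdx N (fun i => (i, j) ∈ A),
      fun i => firstIdx N (fun j => (i, j) ∈ B), ?_, ?_, ?_⟩
    all_goals
      have hmemA : ∀ i j, (i, j) ∈ A ↔ 1 ≤ i ∧ i ≤ N ∧ 1 ≤ j ∧ j ≤ N ∧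
          firstIdx N (fun i => (i, j) ∈ A) ≤ i := by
        intro i j
        constructor
        · intro hij
          have hm := hA hij
          simp only [Finset.mem_product, Finset.mem_Icc] at hm
          exact ⟨hm.1.1, hm.1.2, hm.2.1, hm.2.2, firstIdx_le hij⟩
        · rintro ⟨h1i, hiN, h1j, hjN, hfi⟩
          have hsp : (firstIdx N (fun i => (i, j) ∈ A), j) ∈ A :=
            firstIdx_spec (le_trans hfi hiN)
          rcases eq_or_lt_of_le hfi with heq | hlt
          · rwa [heq] at hsp
          · exact hmA _ _ _ hsp hlt hiN
      have hmemB : ∀ i j, (i, j) ∈ B ↔ 1 ≤ i ∧ i ≤ N ∧ 1 ≤ j ∧ j ≤ N ∧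
          firstIdx N (fun j => (i, j) ∈ B) ≤ j := by
        intro i j
        constructor
        · intro hij
          have hm := hB hij
          simp only [Finset.mem_product, Finset.mem_Icc] at hm
          exact ⟨hm.1.1, hm.1.2, hm.2.1, hm.2.2, firstIdx_le hij⟩
        · rintro ⟨h1i, hiN, h1j, hjN, hfi⟩
          have hsp : (i, firstIdx N (fun j => (i, j) ∈ B)) ∈ B :=
            firstIdx_spec (le_trans hfi hjN)
          rcases eq_or_lt_of_le hfi with heq | hlt
          · rwa [heq] at hsp
          · exact hmB _ _ _ hsp hlt hjN
      skip
    · -- ValidPair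
      refine ⟨?_, ?_, ?_⟩
      · intro j hj
        dsimp only
        rw [Finset.mem_Icc]
        refine ⟨firstIdx_pos ?_, firstIdx_le_succ ?_⟩ <;>
          · intro i hi
            have hm := hA hi
            simp only [Finset.mem_product, Finset.mem_Icc] at hm
            omega
      · intro i hi
        dsimp only
        rw [Finset.mem_Icc]
        refine ⟨firstIdx_pos ?_, firstIdx_le_succ ?_⟩ <;>
          · intro j hj
            have hm := hB hj
            simp only [Finset.mem_product, Finset.mem_Icc] at hm
            omega
      · intro i hi j hj hβ
        dsimp only at hβ ⊢
        rw [Finset.mem_Icc] at hi hj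
        by_contra hcon
        push_neg at hcon
        have hijA : (i, j) ∈ A := (hmemA i j).mpr ⟨hi.1, hi.2, hj.1, hj.2, hcon⟩
        have hijB : (i, j) ∈ B := (hmemB i j).mpr ⟨hi.1, hi.2, hj.1, hj.2, hβ⟩
        exact (Finset.disjoint_left.mp hdisj hijA) hijB
    · -- ProperPairFn
      refine ⟨?_, ?_⟩
      · intro j hj hle
        dsimp only at hle ⊢
        have hsp := firstIdx_spec hle
        exact hpA _ _ hsp (fun i' hi' => firstIdx_min hi')
      · intro i hi hle
        dsimp only at hle ⊢
        have hsp := firstIdx_spec hle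
        exact hpB _ _ hsp (fun j' hj' => firstIdx_min hj')
    · -- InducedBy
      constructor
      · ext ⟨i, j⟩
        simp only [Finset.mem_filter, Finset.mem_product, Finset.mem_Icc, hmemA i j]
        tauto
      · ext ⟨i, j⟩
        simp only [Finset.mem_filter, Finset.mem_product, Finset.mem_Icc, hmemB i j]
        tauto
end

section
/- Let S be an independent set of the bipartite graph G^φ and define its monotone closure S↑ = {u_{i',j} : there exists i ≤ i' with u_{i,j} ∈ S} ∪ {w_{i,j'} : there exists j ≤ j' with w_{i,j} ∈ S}. Then S↑ is also an independent set of G^φ, and since all vertex weights are nonnegative, the weight of S↑ is at least the weight of S. -/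
/-- All vertices of `G^φ`: both parts are indexed by `[N]×[N]`. -/
def gridVerts (N : ℕ) : Set ((ℕ × ℕ) ⊕ (ℕ × ℕ)) :=
  (Sum.inl '' ((Finset.Icc 1 N ×ˢ Finset.Icc 1 N : Finset (ℕ × ℕ)) : Set (ℕ × ℕ))) ∪
  (Sum.inr '' ((Finset.Icc 1 N ×ˢ Finset.Icc 1 N : Finset (ℕ × ℕ)) : Set (ℕ × ℕ)))

/-- The weight of a set of vertices: `u_{i,j}` weighs `f(i,j)`, `w_{i,j}`
weighs `g(i,j)`. -/
def vertWeight (f g : ℕ → ℕ → ℝ) (S : Finset ((ℕ × ℕ) ⊕ (ℕ × ℕ))) : ℝ :=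
  ∑ v ∈ S, Sum.elim (fun p => f p.1 p.2) (fun p => g p.1 p.2) v

/-- The monotone (upward) closure `S↑` of a vertex set `S`:
`u_{i',j} ∈ S↑` iff `i' ∈ [N]` and there is `i ≤ i'` with `u_{i,j} ∈ S`,
and symmetrically for the `w`-part. -/
def upClosure (N : ℕ) (S : Finset ((ℕ × ℕ) ⊕ (ℕ × ℕ))) :
    Finset ((ℕ × ℕ) ⊕ (ℕ × ℕ)) :=
  ((Finset.Icc 1 N ×ˢ Finset.Icc 1 N).filter
      (fun p => ∃ i ∈ Finset.Iic p.1, Sum.inl (i, p.2) ∈ S)).image Sum.inl ∪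
  ((Finset.Icc 1 N ×ˢ Finset.Icc 1 N).filter
      (fun p => ∃ j ∈ Finset.Iic p.2, Sum.inr (p.1, j) ∈ S)).image Sum.inr

/-- the monotone closure `S↑` of an independent set `S` of `G^φ`
is again independent, and (all vertex weights being nonnegative) its weight is
at least the weight of `S`. -/
theorem upClosure_indep_and_weight
    (N : ℕ) (φ f g : ℕ → ℕ → ℝ)
    (hφ : ∀ i j, 0 ≤ φ i j)
    (hφsum : ∑ i ∈ Finset.Icc 1 N, ∑ j ∈ Finset.Icc 1 N, φ i j = 1)
    (hf : ∀ i j, f i j =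
      max ((i : ℝ) * ∑ i' ∈ Finset.Icc i N, φ i' j
            - ∑ i' ∈ Finset.Icc (i + 1) N, f i' j) 0)
    (hg : ∀ i j, g i j =
      max ((j : ℝ) * ∑ j' ∈ Finset.Icc j N, φ i j'
            - ∑ j' ∈ Finset.Icc (j + 1) N, g i j') 0)
    (S : Finset ((ℕ × ℕ) ⊕ (ℕ × ℕ)))
    (hS : (S : Set ((ℕ × ℕ) ⊕ (ℕ × ℕ))) ⊆ gridVerts N)
    (hind : IsIndepSetOf Gphi (S : Set ((ℕ × ℕ) ⊕ (ℕ × ℕ)))) :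
    IsIndepSetOf Gphi ((upClosure N S : Finset ((ℕ × ℕ) ⊕ (ℕ × ℕ))) :
        Set ((ℕ × ℕ) ⊕ (ℕ × ℕ))) ∧
    vertWeight f g S ≤ vertWeight f g (upClosure N S) := by
  have hmemL : ∀ p : ℕ × ℕ, Sum.inl p ∈ upClosure N S ↔
      (p ∈ Finset.Icc 1 N ×ˢ Finset.Icc 1 N ∧ ∃ i ≤ p.1, Sum.inl (i, p.2) ∈ S) := by
    rintro ⟨a, b⟩
    simp only [upClosure, Finset.mem_union, Finset.mem_image, Finset.mem_filter,
      Finset.mem_Iic, Finset.mem_product, Finset.mem_Icc, Prod.mk.injEq,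
      Sum.inl.injEq, Sum.inr.injEq, reduceCtorEq, exists_false, or_false, false_or,
      Prod.exists, and_false, exists_and_right]
    aesop
  have hmemR : ∀ p : ℕ × ℕ, Sum.inr p ∈ upClosure N S ↔
      (p ∈ Finset.Icc 1 N ×ˢ Finset.Icc 1 N ∧ ∃ j ≤ p.2, Sum.inr (p.1, j) ∈ S) := by
    rintro ⟨a, b⟩
    simp only [upClosure, Finset.mem_union, Finset.mem_image, Finset.mem_filter,
      Finset.mem_Iic, Finset.mem_product, Finset.mem_Icc, Prod.mk.injEq,
      Sum.inl.injEq, Sum.inr.injEq, reduceCtorEq, exists_false, or_false, false_or,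
      Prod.exists, and_false, exists_and_right]
    aesop
  constructor
  · intro a ha b hb hadj
    rw [Gphi, SimpleGraph.fromRel_adj] at hadj
    obtain ⟨hne, h⟩ := hadj
    simp only [Finset.mem_coe] at ha hb
    rcases h with ⟨i, j, i', j', rfl, rfl, hii, hjj⟩ | ⟨i, j, i', j', rfl, rfl, hii, hjj⟩
    · obtain ⟨-, i0, hi0, hi0S⟩ := (hmemL _).1 ha
      obtain ⟨-, j0, hj0, hj0S⟩ := (hmemR _).1 hb
      refine hind _ hi0S _ hj0S ?_
      rw [Gphi, SimpleGraph.fromRel_adj]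
      exact ⟨by simp, Or.inl ⟨i0, j, i', j0, rfl, rfl, hi0.trans hii, hj0.trans hjj⟩⟩
    · obtain ⟨-, i0, hi0, hi0S⟩ := (hmemL _).1 hb
      obtain ⟨-, j0, hj0, hj0S⟩ := (hmemR _).1 ha
      refine hind _ hi0S _ hj0S ?_
      rw [Gphi, SimpleGraph.fromRel_adj]
      exact ⟨by simp, Or.inl ⟨i0, j, i', j0, rfl, rfl, hi0.trans hii, hj0.trans hjj⟩⟩
  · apply Finset.sum_le_sum_of_subset_of_nonneg
    · intro v hv
      have hg := hS hv
      rcases v with p | p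
      · refine (hmemL p).2 ⟨?_, p.1, le_refl _, hv⟩
        rcases hg with ⟨q, hq, hqe⟩ | ⟨q, hq, hqe⟩
        · obtain rfl : q = p := Sum.inl.inj hqe; exact hq
        · exact absurd hqe (by simp)
      · refine (hmemR p).2 ⟨?_, p.2, le_refl _, hv⟩
        rcases hg with ⟨q, hq, hqe⟩ | ⟨q, hq, hqe⟩
        · exact absurd hqe (by simp)
        · obtain rfl : q = p := Sum.inr.inj hqe; exact hq
    · intro v _ _
      rcases v with p | p
      · simpa using (hf p.1 p.2).ge.trans' (le_max_right _ _)
      · simpa using (hg p.1 p.2).ge.trans' (le_max_right _ _)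
end

section
/- The optimal profit over all proper valid allocation pairs equals the maximum weight of an independent set in G^φ: max_{(A,B) ∈ Π(φ)} ( Σ_{(i,j)∈A} f(i,j) + Σ_{(i,j)∈B} g(i,j) ) = max { Σ_{u_{i,j} ∈ S} f(i,j) + Σ_{w_{i,j} ∈ S} g(i,j) : S an independent set of G^φ }. -/
/- ------------------- auxiliary lemmas ------------------- -/

lemma Gphi_adj_of {i j i' j' : ℕ} (h1 : i ≤ i') (h2 : j' ≤ j) :
    Gphi.Adj (Sum.inl (i, j)) (Sum.inr (i', j')) := by
  rw [Gphi, SimpleGraph.fromRel_adj]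
  exact ⟨by simp, Or.inl ⟨i, j, i', j', rfl, rfl, h1, h2⟩⟩

lemma Gphi_adj_elim {p q : ℕ × ℕ} (h : Gphi.Adj (Sum.inl p) (Sum.inr q)) :
    p.1 ≤ q.1 ∧ q.2 ≤ p.2 := by
  rw [Gphi, SimpleGraph.fromRel_adj] at h
  rcases h.2 with ⟨i, j, i', j', h1, h2, h3, h4⟩ | ⟨i, j, i', j', h1, h2, h3, h4⟩
  · rw [Sum.inl.injEq] at h1; rw [Sum.inr.injEq] at h2
    subst h1; subst h2; exact ⟨h3, h4⟩
  · exact absurd h1 (by simp)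

lemma Gphi_not_adj_ll {p q : ℕ × ℕ} : ¬ Gphi.Adj (Sum.inl p) (Sum.inl q) := by
  rw [Gphi, SimpleGraph.fromRel_adj]
  rintro ⟨-, ⟨i, j, i', j', h1, h2, -⟩ | ⟨i, j, i', j', h1, h2, -⟩⟩ <;> simp at h2

lemma Gphi_not_adj_rr {p q : ℕ × ℕ} : ¬ Gphi.Adj (Sum.inr p) (Sum.inr q) := by
  rw [Gphi, SimpleGraph.fromRel_adj]
  rintro ⟨-, ⟨i, j, i', j', h1, h2, -⟩ | ⟨i, j, i', j', h1, h2, -⟩⟩ <;> simp at h1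

/-- Minimum of a finite set of naturals, with default value for the empty set. -/
noncomputable def minOr (T : Finset ℕ) (d : ℕ) : ℕ :=
  if h : T.Nonempty then T.min' h else d

lemma minOr_le {T : Finset ℕ} {d i : ℕ} (hi : i ∈ T) : minOr T d ≤ i := by
  rw [minOr, dif_pos ⟨i, hi⟩]; exact Finset.min'_le T i hi

lemma minOr_mem {T : Finset ℕ} {d : ℕ} (h : minOr T d ≠ d) : minOr T d ∈ T := by
  by_cases hne : T.Nonempty
  · rw [minOr, dif_pos hne]; exact T.min'_mem hne
  · exact absurd (by rw [minOr, dif_neg hne]) h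

lemma minOr_mem_Icc {N : ℕ} {T : Finset ℕ} (h : T ⊆ Finset.Icc 1 N) :
    minOr T (N + 1) ∈ Finset.Icc 1 (N + 1) := by
  by_cases hne : T.Nonempty
  · rw [minOr, dif_pos hne]
    have := h (T.min'_mem hne)
    rw [Finset.mem_Icc] at this ⊢; omega
  · rw [minOr, dif_neg hne, Finset.mem_Icc]; omega

/-- the optimal profit over all proper valid allocation pairs
equals the maximum weight of an independent set in `G^φ`. -/
theorem optimal_profit_eq_max_weight_indep
    (N : ℕ) (φ f g : ℕ → ℕ → ℝ)
    (hφ : ∀ i j, 0 ≤ φ i j)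
    (hφsum : ∑ i ∈ Finset.Icc 1 N, ∑ j ∈ Finset.Icc 1 N, φ i j = 1)
    (hf : ∀ i j, f i j =
      max ((i : ℝ) * ∑ i' ∈ Finset.Icc i N, φ i' j
            - ∑ i' ∈ Finset.Icc (i + 1) N, f i' j) 0)
    (hg : ∀ i j, g i j =
      max ((j : ℝ) * ∑ j' ∈ Finset.Icc j N, φ i j'
            - ∑ j' ∈ Finset.Icc (j + 1) N, g i j') 0) :
    sSup {r : ℝ | ∃ A B : Finset (ℕ × ℕ), InPi N f g A B ∧
        r = (∑ p ∈ A, f p.1 p.2) + (∑ p ∈ B, g p.1 p.2)}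
    = sSup {r : ℝ | ∃ S : Finset ((ℕ × ℕ) ⊕ (ℕ × ℕ)),
        (S : Set ((ℕ × ℕ) ⊕ (ℕ × ℕ))) ⊆ gridVerts N ∧
        IsIndepSetOf Gphi (S : Set ((ℕ × ℕ) ⊕ (ℕ × ℕ))) ∧
        r = vertWeight f g S} := by
  classical
  -- nonnegativity of the weights
  have hf0 : ∀ i j, 0 ≤ f i j := fun i j => by rw [hf i j]; exact le_max_right _ _
  have hg0 : ∀ i j, 0 ≤ g i j := fun i j => by rw [hg i j]; exact le_max_right _ _
  set wt : (ℕ × ℕ) ⊕ (ℕ × ℕ) → ℝ :=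
    Sum.elim (fun p => f p.1 p.2) (fun p => g p.1 p.2) with hwt
  have hwt0 : ∀ v, 0 ≤ wt v := by
    rintro (p | q)
    · exact hf0 p.1 p.2
    · exact hg0 q.1 q.2
  set G2 : Finset (ℕ × ℕ) := Finset.Icc 1 N ×ˢ Finset.Icc 1 N with hG2
  set GV : Finset ((ℕ × ℕ) ⊕ (ℕ × ℕ)) := G2.image Sum.inl ∪ G2.image Sum.inr with hGV
  have hdisj : Disjoint (G2.image Sum.inl) (G2.image Sum.inr) := by
    rw [Finset.disjoint_left]
    rintro v hv hv'
    obtain ⟨p, -, rfl⟩ := Finset.mem_image.mp hv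
    obtain ⟨q, -, hq⟩ := Finset.mem_image.mp hv'
    exact absurd hq (by simp)
  have hGVsub : ∀ {S : Finset ((ℕ × ℕ) ⊕ (ℕ × ℕ))},
      (S : Set ((ℕ × ℕ) ⊕ (ℕ × ℕ))) ⊆ gridVerts N → S ⊆ GV := by
    intro S hS v hv
    have := hS hv
    rw [gridVerts] at this
    rcases this with ⟨p, hp, rfl⟩ | ⟨q, hq, rfl⟩
    · exact Finset.mem_union_left _ (Finset.mem_image_of_mem _ hp)
    · exact Finset.mem_union_right _ (Finset.mem_image_of_mem _ hq)
  -- the two sets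
  set P1 : Set ℝ := {r : ℝ | ∃ A B : Finset (ℕ × ℕ), InPi N f g A B ∧
      r = (∑ p ∈ A, f p.1 p.2) + (∑ p ∈ B, g p.1 p.2)} with hP1
  set P2 : Set ℝ := {r : ℝ | ∃ S : Finset ((ℕ × ℕ) ⊕ (ℕ × ℕ)),
      (S : Set ((ℕ × ℕ) ⊕ (ℕ × ℕ))) ⊆ gridVerts N ∧
      IsIndepSetOf Gphi (S : Set ((ℕ × ℕ) ⊕ (ℕ × ℕ))) ∧
      r = vertWeight f g S} with hP2
  -- boundedness
  have hbdd1 : BddAbove P1 := by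
    refine ⟨(∑ p ∈ G2, f p.1 p.2) + (∑ p ∈ G2, g p.1 p.2), ?_⟩
    rintro r ⟨A, B, ⟨α, β, hv, hp, hA, hB⟩, rfl⟩
    refine add_le_add ?_ ?_
    · exact Finset.sum_le_sum_of_subset_of_nonneg (hA ▸ Finset.filter_subset _ _)
        (fun p _ _ => hf0 p.1 p.2)
    · exact Finset.sum_le_sum_of_subset_of_nonneg (hB ▸ Finset.filter_subset _ _)
        (fun p _ _ => hg0 p.1 p.2)
  have hbdd2 : BddAbove P2 := by
    refine ⟨∑ v ∈ GV, wt v, ?_⟩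
    rintro r ⟨S, hSsub, -, rfl⟩
    exact Finset.sum_le_sum_of_subset_of_nonneg (hGVsub hSsub) (fun v _ _ => hwt0 v)
  -- nonemptiness of P1
  have hne1 : P1.Nonempty := by
    refine ⟨(∑ p ∈ G2.filter (fun p => N + 1 ≤ p.1), f p.1 p.2) +
      (∑ p ∈ G2.filter (fun p => N + 1 ≤ p.2), g p.1 p.2),
      G2.filter (fun p => N + 1 ≤ p.1), G2.filter (fun p => N + 1 ≤ p.2),
      ⟨fun _ => N + 1, fun _ => N + 1, ⟨?_, ?_, ?_⟩, ⟨?_, ?_⟩, rfl, rfl⟩, rfl⟩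
    · intro j _; simp [Finset.mem_Icc]
    · intro i _; simp [Finset.mem_Icc]
    · intro i hi j hj hle
      have h' : N + 1 ≤ j := hle
      rw [Finset.mem_Icc] at hj; omega
    · intro j _ h
      have h' : N + 1 ≤ N := h; omega
    · intro i _ h
      have h' : N + 1 ≤ N := h; omega
  -- direction 1 : P1 ⊆ P2
  have hsub : P1 ⊆ P2 := by
    rintro r ⟨A, B, ⟨α, β, hv, hp, hA, hB⟩, rfl⟩
    have hAg : A ⊆ G2 := hA ▸ Finset.filter_subset _ _
    have hBg : B ⊆ G2 := hB ▸ Finset.filter_subset _ _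
    refine ⟨A.image Sum.inl ∪ B.image Sum.inr, ?_, ?_, ?_⟩
    · intro v hv'
      rw [Finset.coe_union, Finset.coe_image, Finset.coe_image] at hv'
      rw [gridVerts]
      rcases hv' with ⟨p, hp', rfl⟩ | ⟨q, hq', rfl⟩
      · exact Or.inl ⟨p, hAg hp', rfl⟩
      · exact Or.inr ⟨q, hBg hq', rfl⟩
    · -- independence from non-crossing
      intro a ha b hb hadj
      rw [Finset.mem_coe, Finset.mem_union] at ha hb
      have key : ∀ p q : ℕ × ℕ, p ∈ A → q ∈ B → ¬ Gphi.Adj (Sum.inl p) (Sum.inr q) := by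
        intro p q hpA hqB hadj'
        obtain ⟨h1, h2⟩ := Gphi_adj_elim hadj'
        have hpA' := hA ▸ hpA
        have hqB' := hB ▸ hqB
        rw [Finset.mem_filter] at hpA' hqB'
        have hpg := hpA'.1
        have hqg := hqB'.1
        rw [Finset.mem_product] at hpg hqg
        -- β q.1 ≤ q.2 ≤ p.2, so q.1 < α p.2 ≤ p.1 ≤ q.1
        have := hv.2.2 q.1 hqg.1 p.2 hpg.2 (le_trans hqB'.2 h2)
        omega
      rcases ha with ha | ha <;> rcases hb with hb | hb
      · obtain ⟨p, -, rfl⟩ := Finset.mem_image.mp ha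
        obtain ⟨q, -, rfl⟩ := Finset.mem_image.mp hb
        exact Gphi_not_adj_ll hadj
      · obtain ⟨p, hpA, rfl⟩ := Finset.mem_image.mp ha
        obtain ⟨q, hqB, rfl⟩ := Finset.mem_image.mp hb
        exact key p q hpA hqB hadj
      · obtain ⟨p, hpB, rfl⟩ := Finset.mem_image.mp ha
        obtain ⟨q, hqA, rfl⟩ := Finset.mem_image.mp hb
        exact key q p hqA hpB hadj.symm
      · obtain ⟨p, -, rfl⟩ := Finset.mem_image.mp ha
        obtain ⟨q, -, rfl⟩ := Finset.mem_image.mp hb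
        exact Gphi_not_adj_rr hadj
    · have hdj : Disjoint (A.image Sum.inl) (B.image Sum.inr) := by
        rw [Finset.disjoint_left]
        rintro v hv' hv''
        obtain ⟨p, -, rfl⟩ := Finset.mem_image.mp hv'
        obtain ⟨q, -, hq⟩ := Finset.mem_image.mp hv''
        exact absurd hq (by simp)
      rw [vertWeight, Finset.sum_union hdj,
        Finset.sum_image (fun a _ b _ h => Sum.inl.inj h),
        Finset.sum_image (fun a _ b _ h => Sum.inr.inj h)]
      simp only [Sum.elim_inl, Sum.elim_inr]
  -- direction 2 : every element of P2 is dominated by an element of P1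
  have hdom : ∀ r ∈ P2, ∃ r' ∈ P1, r ≤ r' := by
    rintro r ⟨S, hSsub, hInd, rfl⟩
    set S' : Finset ((ℕ × ℕ) ⊕ (ℕ × ℕ)) := S.filter (fun v => 0 < wt v) with hS'
    have hS'S : S' ⊆ S := Finset.filter_subset _ _
    have hsum' : ∑ v ∈ S', wt v = ∑ v ∈ S, wt v := by
      refine Finset.sum_subset hS'S ?_
      intro v hv hv'
      rw [hS', Finset.mem_filter] at hv'
      have := hwt0 v
      push_neg at hv'
      linarith [hv' hv]
    set Tl : ℕ → Finset ℕ :=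
      fun j => (Finset.Icc 1 N).filter (fun i => Sum.inl (i, j) ∈ S') with hTl
    set Tr : ℕ → Finset ℕ :=
      fun i => (Finset.Icc 1 N).filter (fun j => Sum.inr (i, j) ∈ S') with hTr
    set α : ℕ → ℕ := fun j => minOr (Tl j) (N + 1) with hα
    set β : ℕ → ℕ := fun i => minOr (Tr i) (N + 1) with hβ
    have hαmem : ∀ j, α j ≤ N → α j ∈ Finset.Icc 1 N ∧ Sum.inl (α j, j) ∈ S' := by
      intro j h
      have : α j ≠ N + 1 := by omega
      have := minOr_mem this
      rw [Finset.mem_filter] at this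
      exact ⟨this.1, this.2⟩
    have hβmem : ∀ i, β i ≤ N → β i ∈ Finset.Icc 1 N ∧ Sum.inr (i, β i) ∈ S' := by
      intro i h
      have : β i ≠ N + 1 := by omega
      have := minOr_mem this
      rw [Finset.mem_filter] at this
      exact ⟨this.1, this.2⟩
    -- non-crossing via independence
    have hcross : ∀ i ∈ Finset.Icc 1 N, ∀ j ∈ Finset.Icc 1 N, β i ≤ j → i < α j := by
      intro i hi j hj hβj
      by_contra hcon
      push_neg at hcon
      rw [Finset.mem_Icc] at hi hj
      have hβN : β i ≤ N := le_trans hβj hj.2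
      have hαN : α j ≤ N := le_trans hcon hi.2
      obtain ⟨-, hβS⟩ := hβmem i hβN
      obtain ⟨-, hαS⟩ := hαmem j hαN
      exact hInd _ (Finset.mem_coe.mpr (hS'S hαS)) _ (Finset.mem_coe.mpr (hS'S hβS))
        (Gphi_adj_of hcon hβj)
    set A : Finset (ℕ × ℕ) := G2.filter (fun p => α p.2 ≤ p.1) with hAdef
    set B : Finset (ℕ × ℕ) := G2.filter (fun p => β p.1 ≤ p.2) with hBdef
    refine ⟨(∑ p ∈ A, f p.1 p.2) + (∑ p ∈ B, g p.1 p.2),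
      ⟨A, B, ⟨α, β, ⟨?_, ?_, hcross⟩, ⟨?_, ?_⟩, rfl, rfl⟩, rfl⟩, ?_⟩
    · intro j _
      exact minOr_mem_Icc (Finset.filter_subset _ _)
    · intro i _
      exact minOr_mem_Icc (Finset.filter_subset _ _)
    · -- properness for α
      intro j _ h
      have hmem := (hαmem j h).2
      rw [hS', Finset.mem_filter] at hmem
      exact hmem.2
    · -- properness for β
      intro i _ h
      have hmem := (hβmem i h).2
      rw [hS', Finset.mem_filter] at hmem
      exact hmem.2
    · -- weight of S is dominated by the profit
      set Sl : Finset (ℕ × ℕ) := G2.filter (fun p => Sum.inl p ∈ S') with hSl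
      set Sr : Finset (ℕ × ℕ) := G2.filter (fun p => Sum.inr p ∈ S') with hSr
      have hS'eq : S' = Sl.image Sum.inl ∪ Sr.image Sum.inr := by
        ext v
        constructor
        · intro hv
          have hvS : v ∈ S := hS'S hv
          have := hSsub (Finset.mem_coe.mpr hvS)
          rw [gridVerts] at this
          rcases this with ⟨p, hp, rfl⟩ | ⟨q, hq, rfl⟩
          · exact Finset.mem_union_left _ (Finset.mem_image_of_mem _
              (Finset.mem_filter.mpr ⟨by exact_mod_cast hp, hv⟩))
          · exact Finset.mem_union_right _ (Finset.mem_image_of_mem _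
              (Finset.mem_filter.mpr ⟨by exact_mod_cast hq, hv⟩))
        · intro hv
          rw [Finset.mem_union] at hv
          rcases hv with hv | hv
          · obtain ⟨p, hp, rfl⟩ := Finset.mem_image.mp hv
            exact (Finset.mem_filter.mp hp).2
          · obtain ⟨q, hq, rfl⟩ := Finset.mem_image.mp hv
            exact (Finset.mem_filter.mp hq).2
      have hSlA : Sl ⊆ A := by
        intro p hp
        rw [hSl, Finset.mem_filter] at hp
        rw [hAdef, Finset.mem_filter]
        refine ⟨hp.1, ?_⟩
        have hp1 : p.1 ∈ Tl p.2 := by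
          rw [hTl, Finset.mem_filter]
          have := hp.1
          rw [hG2, Finset.mem_product] at this
          exact ⟨this.1, by simpa using hp.2⟩
        exact minOr_le hp1
      have hSrB : Sr ⊆ B := by
        intro p hp
        rw [hSr, Finset.mem_filter] at hp
        rw [hBdef, Finset.mem_filter]
        refine ⟨hp.1, ?_⟩
        have hp2 : p.2 ∈ Tr p.1 := by
          rw [hTr, Finset.mem_filter]
          have := hp.1
          rw [hG2, Finset.mem_product] at this
          exact ⟨this.2, by simpa using hp.2⟩
        exact minOr_le hp2
      have hdisj' : Disjoint (Sl.image Sum.inl) (Sr.image Sum.inr) := by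
        rw [Finset.disjoint_left]
        rintro v hv hv'
        obtain ⟨p, -, rfl⟩ := Finset.mem_image.mp hv
        obtain ⟨q, -, hq⟩ := Finset.mem_image.mp hv'
        exact absurd hq (by simp)
      calc vertWeight f g S = ∑ v ∈ S, wt v := rfl
        _ = ∑ v ∈ S', wt v := hsum'.symm
        _ = (∑ p ∈ Sl, f p.1 p.2) + (∑ p ∈ Sr, g p.1 p.2) := by
            rw [hS'eq, Finset.sum_union hdisj',
              Finset.sum_image (fun a _ b _ h => Sum.inl.inj h),
              Finset.sum_image (fun a _ b _ h => Sum.inr.inj h)]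
            simp only [hwt, Sum.elim_inl, Sum.elim_inr]
        _ ≤ (∑ p ∈ A, f p.1 p.2) + (∑ p ∈ B, g p.1 p.2) := by
            refine add_le_add ?_ ?_
            · exact Finset.sum_le_sum_of_subset_of_nonneg hSlA (fun p _ _ => hf0 p.1 p.2)
            · exact Finset.sum_le_sum_of_subset_of_nonneg hSrB (fun p _ _ => hg0 p.1 p.2)
  -- conclude
  refine le_antisymm (csSup_le_csSup hbdd2 hne1 hsub) ?_
  refine csSup_le (hne1.mono hsub) ?_
  intro r hr
  obtain ⟨r', hr', hle⟩ := hdom r hr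
  exact le_trans hle (le_csSup hbdd1 hr')
end

section
/- For every valid allocation pair (α,β) there exists a proper valid allocation pair (α',β') (with α' ≥ α and β' ≥ β pointwise) such that Profit(α',β',φ) ≥ Profit(α,β,φ). -/
open MeasureTheory

/-- Expected revenue from bidder 1 at price `x` when bidder 2's value is `y`. -/
noncomputable def RevF (φ : ℝ → ℝ → ℝ) (x y : ℝ) : ℝ := x * ∫ t in x..1, φ t y

/-- Expected revenue from bidder 2 at price `y` when bidder 1's value is `x`. -/
noncomputable def RevG (φ : ℝ → ℝ → ℝ) (x y : ℝ) : ℝ := y * ∫ t in y..1, φ x t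

/-- A valid allocation pair: Borel measurable `α, β : [0,1] → [0,1]` with the
non-crossing property. -/
def ValidPairC (α β : ℝ → ℝ) : Prop :=
  Measurable α ∧ Measurable β ∧
  (∀ y ∈ Set.Icc (0:ℝ) 1, α y ∈ Set.Icc (0:ℝ) 1) ∧
  (∀ x ∈ Set.Icc (0:ℝ) 1, β x ∈ Set.Icc (0:ℝ) 1) ∧
  (∀ x ∈ Set.Icc (0:ℝ) 1, ∀ y ∈ Set.Icc (0:ℝ) 1, β x ≤ y → x ≤ α y)

/-- A valid allocation pair is proper for density `φ`. -/
def ProperPairC (φ : ℝ → ℝ → ℝ) (α β : ℝ → ℝ) : Prop :=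
  (∀ y ∈ Set.Icc (0:ℝ) 1,
    RevF φ (α y) y = sSup ((fun x' => RevF φ x' y) '' Set.Icc (α y) 1)) ∧
  (∀ x ∈ Set.Icc (0:ℝ) 1,
    RevG φ x (β x) = sSup ((fun y' => RevG φ x y') '' Set.Icc (β x) 1))

/-- The profit of the auction with allocation curves `(α,β)` and threshold
payments, for valuation density `φ`. -/
noncomputable def Profit (α β : ℝ → ℝ) (φ : ℝ → ℝ → ℝ) : ℝ :=
  (∫ y in (0:ℝ)..1, RevF φ (α y) y) + (∫ x in (0:ℝ)..1, RevG φ x (β x))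


/-- sup over `[a,1]` of a continuous function as a countable sup. -/
private lemma sSup_image_Icc_eq (G : ℝ → ℝ → ℝ) (y a : ℝ) (ha1 : a ≤ 1)
    (hc : Continuous fun x => G x y) :
    sSup ((fun x => G x y) '' Set.Icc a 1)
      = max (G a y) (⨆ q : ℚ, G (max a (min (q : ℝ) 1)) y) := by
  obtain ⟨xs, hxsmem, hxsmax⟩ :=
    isCompact_Icc.exists_isMaxOn (Set.nonempty_Icc.2 ha1) hc.continuousOn
  have hgr : IsGreatest ((fun x => G x y) '' Set.Icc a 1) (G xs y) :=
    ⟨Set.mem_image_of_mem _ hxsmem, by rintro z ⟨x, hx, rfl⟩; exact hxsmax hx⟩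
  rw [hgr.csSup_eq]
  have hptmem : ∀ q : ℚ, max a (min (q : ℝ) 1) ∈ Set.Icc a 1 :=
    fun q => ⟨le_max_left _ _, max_le ha1 (min_le_right _ _)⟩
  have hbdd : BddAbove (Set.range fun q : ℚ => G (max a (min (q : ℝ) 1)) y) :=
    ⟨G xs y, by rintro z ⟨q, rfl⟩; exact hxsmax (hptmem q)⟩
  apply le_antisymm
  · by_contra hlt
    push_neg at hlt
    set B := max (G a y) (⨆ q : ℚ, G (max a (min (q : ℝ) 1)) y) with hB
    have hε : 0 < G xs y - B := by linarith
    rcases eq_or_lt_of_le hxsmem.1 with h | h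
    · have : G xs y = G a y := by rw [← h]
      have : G xs y ≤ B := this.le.trans (le_max_left _ _)
      linarith
    · obtain ⟨δ, hδpos, hδ⟩ := Metric.continuousAt_iff.1 hc.continuousAt _ hε
      obtain ⟨q, hq1, hq2⟩ := exists_rat_btwn
        (show max a (xs - δ) < xs from max_lt h (by linarith))
      have hq1a : a < (q : ℝ) := (le_max_left _ _).trans_lt hq1
      have hqd : xs - δ < (q : ℝ) := (le_max_right _ _).trans_lt hq1
      have hqle : (q : ℝ) ≤ 1 := hq2.le.trans hxsmem.2
      have hpt : max a (min ((q : ℝ)) 1) = (q : ℝ) := by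
        rw [min_eq_left hqle, max_eq_right hq1a.le]
      have hdist : dist ((q : ℝ)) xs < δ := by
        rw [Real.dist_eq, abs_lt]; constructor <;> linarith
      have hGd := hδ hdist
      rw [Real.dist_eq, abs_lt] at hGd
      have hle : G (max a (min ((q : ℝ)) 1)) y
          ≤ ⨆ q : ℚ, G (max a (min (q : ℝ) 1)) y := le_ciSup hbdd q
      rw [hpt] at hle
      have : G ((q : ℝ)) y ≤ B := hle.trans (le_max_right _ _)
      linarith [hGd.1]
  · exact max_le (hxsmax ⟨le_rfl, ha1⟩) (ciSup_le fun q => hxsmax (hptmem q))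

private lemma measurable_ite_sSup (G : ℝ → ℝ → ℝ)
    (hG : Continuous fun p : ℝ × ℝ => G p.1 p.2)
    (g : ℝ → ℝ) (hg : Measurable g)
    (hgI : ∀ y ∈ Set.Icc (0:ℝ) 1, g y ∈ Set.Icc (0:ℝ) 1) :
    Measurable (fun y => if y ∈ Set.Icc (0:ℝ) 1
      then sSup ((fun x => G x y) '' Set.Icc (g y) 1) else 0) := by
  have hGy : ∀ y : ℝ, Continuous fun x => G x y := fun y =>
    hG.comp (continuous_id.prodMk continuous_const)
  have heq : (fun y => if y ∈ Set.Icc (0:ℝ) 1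
      then sSup ((fun x => G x y) '' Set.Icc (g y) 1) else 0)
      = fun y => if y ∈ Set.Icc (0:ℝ) 1
        then max (G (g y) y) (⨆ q : ℚ, G (max (g y) (min (q : ℝ) 1)) y) else 0 := by
    funext y
    by_cases hy : y ∈ Set.Icc (0:ℝ) 1
    · rw [if_pos hy, if_pos hy, sSup_image_Icc_eq G y (g y) (hgI y hy).2 (hGy y)]
    · rw [if_neg hy, if_neg hy]
  rw [heq]
  have h1 : Measurable fun y => G (g y) y :=
    hG.measurable.comp (hg.prodMk measurable_id)
  have h2 : Measurable fun y => ⨆ q : ℚ, G (max (g y) (min (q : ℝ) 1)) y :=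
    Measurable.iSup fun q =>
      hG.measurable.comp ((hg.max measurable_const).prodMk measurable_id)
  exact Measurable.ite measurableSet_Icc (h1.max h2) measurable_const

private lemma improve (G : ℝ → ℝ → ℝ) (hG : Continuous fun p : ℝ × ℝ => G p.1 p.2)
    (α : ℝ → ℝ) (hα : Measurable α)
    (hαI : ∀ y ∈ Set.Icc (0:ℝ) 1, α y ∈ Set.Icc (0:ℝ) 1) :
    ∃ α' : ℝ → ℝ, Measurable α' ∧
      (∀ y ∈ Set.Icc (0:ℝ) 1, α' y ∈ Set.Icc (0:ℝ) 1) ∧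
      (∀ y ∈ Set.Icc (0:ℝ) 1, α y ≤ α' y) ∧
      (∀ y ∈ Set.Icc (0:ℝ) 1,
        G (α' y) y = sSup ((fun x => G x y) '' Set.Icc (α' y) 1)) ∧
      (∀ y ∈ Set.Icc (0:ℝ) 1, G (α y) y ≤ G (α' y) y) := by
  have hGy : ∀ y : ℝ, Continuous fun x => G x y := fun y =>
    hG.comp (continuous_id.prodMk continuous_const)
  set M : ℝ → ℝ → ℝ := fun a y => sSup ((fun x => G x y) '' Set.Icc a 1) with hMdef
  set m : ℝ → ℝ := fun y =>
    sSup {x | x ∈ Set.Icc (α y) 1 ∧ G x y = M (α y) y} with hmdef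
  have key : ∀ y ∈ Set.Icc (0:ℝ) 1,
      m y ∈ Set.Icc (α y) 1 ∧ G (m y) y = M (α y) y ∧
      (∀ x ∈ Set.Icc (α y) 1, G x y ≤ M (α y) y) ∧
      (∀ x, x ∈ Set.Icc (α y) 1 → G x y = M (α y) y → x ≤ m y) := by
    intro y hy
    obtain ⟨ha0, ha1⟩ := hαI y hy
    obtain ⟨xs, hxsmem, hxsmax⟩ :=
      isCompact_Icc.exists_isMaxOn (Set.nonempty_Icc.2 ha1) (hGy y).continuousOn
    have hgr : IsGreatest ((fun x => G x y) '' Set.Icc (α y) 1) (G xs y) :=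
      ⟨Set.mem_image_of_mem _ hxsmem, by rintro z ⟨x, hx, rfl⟩; exact hxsmax hx⟩
    have hMv : M (α y) y = G xs y := hgr.csSup_eq
    have hub : ∀ x ∈ Set.Icc (α y) 1, G x y ≤ M (α y) y := by
      intro x hx; rw [hMv]; exact hxsmax hx
    have hTclosed : IsClosed {x | x ∈ Set.Icc (α y) 1 ∧ G x y = M (α y) y} := by
      have : {x | x ∈ Set.Icc (α y) 1 ∧ G x y = M (α y) y}
          = Set.Icc (α y) 1 ∩ (fun x => G x y) ⁻¹' {M (α y) y} := by
        ext x; simp [Set.mem_setOf_eq]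
      rw [this]
      exact isClosed_Icc.inter (isClosed_singleton.preimage (hGy y))
    have hTbdd : BddAbove {x | x ∈ Set.Icc (α y) 1 ∧ G x y = M (α y) y} :=
      ⟨1, fun x hx => hx.1.2⟩
    have hTne : {x | x ∈ Set.Icc (α y) 1 ∧ G x y = M (α y) y}.Nonempty :=
      ⟨xs, hxsmem, hMv.symm⟩
    have hmem : m y ∈ {x | x ∈ Set.Icc (α y) 1 ∧ G x y = M (α y) y} :=
      hTclosed.csSup_mem hTne hTbdd
    exact ⟨hmem.1, hmem.2, hub, fun x hx hxe => le_csSup hTbdd ⟨hx, hxe⟩⟩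
  refine ⟨fun y => if y ∈ Set.Icc (0:ℝ) 1 then m y else 1, ?_, ?_, ?_, ?_, ?_⟩
  · -- measurability
    apply measurable_of_Iio
    intro c
    by_cases hc : 1 < c
    · have huniv : (fun y => if y ∈ Set.Icc (0:ℝ) 1 then m y else 1) ⁻¹' Set.Iio c
          = Set.univ := by
        ext y
        simp only [Set.mem_preimage, Set.mem_Iio, Set.mem_univ, iff_true]
        by_cases hy : y ∈ Set.Icc (0:ℝ) 1
        · rw [if_pos hy]; exact lt_of_le_of_lt (key y hy).1.2 hc
        · rw [if_neg hy]; exact hc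
      rw [huniv]; exact MeasurableSet.univ
    · push_neg at hc
      have hΦ1 := measurable_ite_sSup G hG α hα hαI
      have hΦ2 : Measurable (fun y => if y ∈ Set.Icc (0:ℝ) 1
          then sSup ((fun x => G x y) '' Set.Icc (max (α y) c) 1) else 0) :=
        measurable_ite_sSup G hG _ (hα.max measurable_const)
          (fun y hy => ⟨le_max_of_le_left (hαI y hy).1, max_le (hαI y hy).2 hc⟩)
      have hset : (fun y => if y ∈ Set.Icc (0:ℝ) 1 then m y else 1) ⁻¹' Set.Iio c =
          (Set.Icc (0:ℝ) 1 ∩ α ⁻¹' Set.Iio c) ∩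
          {y | (if y ∈ Set.Icc (0:ℝ) 1
                then sSup ((fun x => G x y) '' Set.Icc (max (α y) c) 1) else 0)
             < (if y ∈ Set.Icc (0:ℝ) 1
                then sSup ((fun x => G x y) '' Set.Icc (α y) 1) else 0)} := by
        ext y
        simp only [Set.mem_preimage, Set.mem_Iio, Set.mem_inter_iff, Set.mem_setOf_eq]
        by_cases hy : y ∈ Set.Icc (0:ℝ) 1
        · simp only [hy, if_true, true_and]
          obtain ⟨hm1, hm2, hub, hsup⟩ := key y hy
          constructor
          · intro hmc
            have hac : α y < c := lt_of_le_of_lt hm1.1 hmc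
            refine ⟨hac, ?_⟩
            rw [max_eq_right hac.le]
            obtain ⟨x0, hx0mem, hx0max⟩ :=
              isCompact_Icc.exists_isMaxOn (Set.nonempty_Icc.2 hc) (hGy y).continuousOn
            have hgr0 : IsGreatest ((fun x => G x y) '' Set.Icc c 1) (G x0 y) :=
              ⟨Set.mem_image_of_mem _ hx0mem, by rintro z ⟨x, hx, rfl⟩; exact hx0max hx⟩
            rw [hgr0.csSup_eq]
            have hx0mem' : x0 ∈ Set.Icc (α y) 1 := ⟨hac.le.trans hx0mem.1, hx0mem.2⟩
            rcases lt_or_eq_of_le (hub x0 hx0mem') with h | h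
            · exact h
            · exact absurd (hsup x0 hx0mem' h)
                (by push_neg; exact lt_of_lt_of_le hmc hx0mem.1)
          · rintro ⟨hac, hlt⟩
            rw [max_eq_right hac.le] at hlt
            by_contra hcm
            push_neg at hcm
            have hmemc : m y ∈ Set.Icc c 1 := ⟨hcm, hm1.2⟩
            have hbddc : BddAbove ((fun x => G x y) '' Set.Icc c 1) := by
              refine ⟨M (α y) y, ?_⟩
              rintro z ⟨x, hx, rfl⟩
              exact hub x ⟨hac.le.trans hx.1, hx.2⟩
            have hle : G (m y) y ≤ sSup ((fun x => G x y) '' Set.Icc c 1) :=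
              le_csSup hbddc (Set.mem_image_of_mem _ hmemc)
            rw [hm2] at hle
            exact absurd (lt_of_le_of_lt hle hlt) (lt_irrefl _)
        · simp [hy, not_lt.2 hc]
      rw [hset]
      exact (measurableSet_Icc.inter (hα measurableSet_Iio)).inter
        (measurableSet_lt hΦ2 hΦ1)
  · intro y hy
    simp only [if_pos hy]
    exact ⟨(hαI y hy).1.trans (key y hy).1.1, (key y hy).1.2⟩
  · intro y hy
    simp only [if_pos hy]
    exact (key y hy).1.1
  · intro y hy
    simp only [if_pos hy]
    obtain ⟨hm1, hm2, hub, _⟩ := key y hy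
    have hgr : IsGreatest ((fun x => G x y) '' Set.Icc (m y) 1) (G (m y) y) := by
      constructor
      · exact Set.mem_image_of_mem _ ⟨le_rfl, hm1.2⟩
      · rintro z ⟨x, hx, rfl⟩
        exact (hub x ⟨hm1.1.trans hx.1, hx.2⟩).trans_eq hm2.symm
    exact hgr.csSup_eq.symm
  · intro y hy
    simp only [if_pos hy]
    obtain ⟨hm1, hm2, hub, _⟩ := key y hy
    exact (hub (α y) ⟨le_rfl, (hαI y hy).2⟩).trans_eq hm2.symm


/-- any valid allocation pair is (weakly) dominated by a proper
valid allocation pair with pointwise larger allocation curves. -/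
theorem exists_proper_dominating
    (φ : ℝ → ℝ → ℝ) (α β : ℝ → ℝ)
    (hφcont : ContinuousOn (fun p : ℝ × ℝ => φ p.1 p.2)
      (Set.Icc (0:ℝ) 1 ×ˢ Set.Icc (0:ℝ) 1))
    (hφpos : ∀ p ∈ (Set.Icc (0:ℝ) 1 ×ˢ Set.Icc (0:ℝ) 1), 0 < φ p.1 p.2)
    (hvalid : ValidPairC α β) :
    ∃ α' β' : ℝ → ℝ,
      ValidPairC α' β' ∧ ProperPairC φ α' β' ∧
      (∀ y ∈ Set.Icc (0:ℝ) 1, α y ≤ α' y) ∧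
      (∀ x ∈ Set.Icc (0:ℝ) 1, β x ≤ β' x) ∧
      Profit α β φ ≤ Profit α' β' φ := by
  obtain ⟨hαm, hβm, hαI, hβI, hcross⟩ := hvalid
  -- clamp to [0,1]
  set cl : ℝ → ℝ := fun t => max 0 (min t 1) with hcl
  have hclcont : Continuous cl := continuous_const.max (continuous_id.min continuous_const)
  have hclmem : ∀ t, cl t ∈ Set.Icc (0:ℝ) 1 :=
    fun t => ⟨le_max_left _ _, max_le zero_le_one (min_le_right _ _)⟩
  have hclid : ∀ t ∈ Set.Icc (0:ℝ) 1, cl t = t := fun t ht => by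
    simp only [hcl]; rw [min_eq_left ht.2, max_eq_right ht.1]
  -- extended density
  set ψ : ℝ → ℝ → ℝ := fun s t => φ (cl s) (cl t) with hψ
  have hψcont : Continuous fun p : ℝ × ℝ => ψ p.1 p.2 := by
    have : (fun p : ℝ × ℝ => ψ p.1 p.2)
        = (fun p : ℝ × ℝ => φ p.1 p.2) ∘ (fun p : ℝ × ℝ => (cl p.1, cl p.2)) := rfl
    rw [this]
    exact hφcont.comp_continuous
      ((hclcont.comp continuous_fst).prodMk (hclcont.comp continuous_snd))
      (fun p => ⟨hclmem _, hclmem _⟩)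
  have hψeq : ∀ s ∈ Set.Icc (0:ℝ) 1, ∀ t ∈ Set.Icc (0:ℝ) 1, ψ s t = φ s t := by
    intro s hs t ht
    simp only [hψ, hclid s hs, hclid t ht]
  -- continuous revenue functions
  set G1 : ℝ → ℝ → ℝ := fun x y => x * ∫ t in x..1, ψ t y with hG1
  set G2 : ℝ → ℝ → ℝ := fun b x => b * ∫ t in b..1, ψ x t with hG2
  have hG1cont : Continuous fun p : ℝ × ℝ => G1 p.1 p.2 := by
    have h := intervalIntegral.continuous_parametric_intervalIntegral_of_continuous
      (μ := volume) (f := fun (p : ℝ × ℝ) t => ψ t p.2) (a₀ := 1)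
      (by exact hψcont.comp (continuous_snd.prodMk (continuous_fst.snd)))
      (s := fun p : ℝ × ℝ => p.1) continuous_fst
    have heq : (fun p : ℝ × ℝ => G1 p.1 p.2)
        = fun p : ℝ × ℝ => p.1 * (-(∫ t in (1:ℝ)..p.1, ψ t p.2)) := by
      funext p
      simp only [hG1, ← intervalIntegral.integral_symm]
    rw [heq]
    exact continuous_fst.mul h.neg
  have hG2cont : Continuous fun p : ℝ × ℝ => G2 p.1 p.2 := by
    have h := intervalIntegral.continuous_parametric_intervalIntegral_of_continuous
      (μ := volume) (f := fun (p : ℝ × ℝ) t => ψ p.2 t) (a₀ := 1)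
      (by exact hψcont.comp ((continuous_fst.snd).prodMk continuous_snd))
      (s := fun p : ℝ × ℝ => p.1) continuous_fst
    have heq : (fun p : ℝ × ℝ => G2 p.1 p.2)
        = fun p : ℝ × ℝ => p.1 * (-(∫ t in (1:ℝ)..p.1, ψ p.2 t)) := by
      funext p
      simp only [hG2, ← intervalIntegral.integral_symm]
    rw [heq]
    exact continuous_fst.mul h.neg
  -- bridges
  have hRevF : ∀ x ∈ Set.Icc (0:ℝ) 1, ∀ y ∈ Set.Icc (0:ℝ) 1, RevF φ x y = G1 x y := by
    intro x hx y hy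
    unfold RevF
    simp only [hG1]
    congr 1
    apply intervalIntegral.integral_congr
    intro t ht
    rw [Set.uIcc_of_le hx.2] at ht
    exact (hψeq t ⟨hx.1.trans ht.1, ht.2⟩ y hy).symm
  have hRevG : ∀ x ∈ Set.Icc (0:ℝ) 1, ∀ b ∈ Set.Icc (0:ℝ) 1, RevG φ x b = G2 b x := by
    intro x hx b hb
    unfold RevG
    simp only [hG2]
    congr 1
    apply intervalIntegral.integral_congr
    intro t ht
    rw [Set.uIcc_of_le hb.2] at ht
    exact (hψeq x hx t ⟨hb.1.trans ht.1, ht.2⟩).symm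
  -- improved curves
  obtain ⟨α', hα'm, hα'I, hα'dom, hα'prop, hα'mono⟩ := improve G1 hG1cont α hαm hαI
  obtain ⟨β', hβ'm, hβ'I, hβ'dom, hβ'prop, hβ'mono⟩ := improve G2 hG2cont β hβm hβI
  -- integrability helper
  obtain ⟨C1, hC1⟩ := (isCompact_Icc.prod isCompact_Icc).exists_bound_of_continuousOn
    (s := Set.Icc (0:ℝ) 1 ×ˢ Set.Icc (0:ℝ) 1) hG1cont.continuousOn
  obtain ⟨C2, hC2⟩ := (isCompact_Icc.prod isCompact_Icc).exists_bound_of_continuousOn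
    (s := Set.Icc (0:ℝ) 1 ×ˢ Set.Icc (0:ℝ) 1) hG2cont.continuousOn
  have hint1 : ∀ γ : ℝ → ℝ, Measurable γ → (∀ y ∈ Set.Icc (0:ℝ) 1, γ y ∈ Set.Icc (0:ℝ) 1) →
      IntervalIntegrable (fun y => RevF φ (γ y) y) volume 0 1 := by
    intro γ hγ hγI
    rw [intervalIntegrable_iff_integrableOn_Icc_of_le zero_le_one]
    have hmeas : Measurable fun y => G1 (γ y) y :=
      hG1cont.measurable.comp (hγ.prodMk measurable_id)
    have hint : IntegrableOn (fun y => G1 (γ y) y) (Set.Icc (0:ℝ) 1) volume := by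
      refine ⟨hmeas.aestronglyMeasurable, ?_⟩
      apply HasFiniteIntegral.restrict_of_bounded (C := C1)
        (measure_Icc_lt_top)
      filter_upwards [ae_restrict_mem measurableSet_Icc] with y hy
      exact hC1 (γ y, y) ⟨hγI y hy, hy⟩
    exact hint.congr_fun (fun y hy => (hRevF (γ y) (hγI y hy) y hy).symm) measurableSet_Icc
  have hint2 : ∀ γ : ℝ → ℝ, Measurable γ → (∀ x ∈ Set.Icc (0:ℝ) 1, γ x ∈ Set.Icc (0:ℝ) 1) →
      IntervalIntegrable (fun x => RevG φ x (γ x)) volume 0 1 := by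
    intro γ hγ hγI
    rw [intervalIntegrable_iff_integrableOn_Icc_of_le zero_le_one]
    have hmeas : Measurable fun x => G2 (γ x) x :=
      hG2cont.measurable.comp (hγ.prodMk measurable_id)
    have hint : IntegrableOn (fun x => G2 (γ x) x) (Set.Icc (0:ℝ) 1) volume := by
      refine ⟨hmeas.aestronglyMeasurable, ?_⟩
      apply HasFiniteIntegral.restrict_of_bounded (C := C2)
        (measure_Icc_lt_top)
      filter_upwards [ae_restrict_mem measurableSet_Icc] with x hx
      exact hC2 (γ x, x) ⟨hγI x hx, hx⟩
    exact hint.congr_fun (fun x hx => (hRevG x hx (γ x) (hγI x hx)).symm) measurableSet_Icc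
  refine ⟨α', β', ⟨hα'm, hβ'm, hα'I, hβ'I, ?_⟩, ⟨?_, ?_⟩, hα'dom, hβ'dom, ?_⟩
  · -- non-crossing
    intro x hx y hy h
    exact (hcross x hx y hy ((hβ'dom x hx).trans h)).trans (hα'dom y hy)
  · -- proper for α'
    intro y hy
    rw [hRevF (α' y) (hα'I y hy) y hy, hα'prop y hy]
    congr 1
    exact Set.image_congr (s := Set.Icc (α' y) 1) fun x hx =>
      (hRevF x ⟨(hα'I y hy).1.trans hx.1, hx.2⟩ y hy).symm
  · -- proper for β'
    intro x hx
    rw [hRevG x hx (β' x) (hβ'I x hx), hβ'prop x hx]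
    congr 1
    exact Set.image_congr (s := Set.Icc (β' x) 1) fun b hb =>
      (hRevG x hx b ⟨(hβ'I x hx).1.trans hb.1, hb.2⟩).symm
  · -- profit
    unfold Profit
    have h1 : (∫ y in (0:ℝ)..1, RevF φ (α y) y) ≤ ∫ y in (0:ℝ)..1, RevF φ (α' y) y := by
      apply intervalIntegral.integral_mono_on zero_le_one (hint1 α hαm hαI)
        (hint1 α' hα'm hα'I)
      intro y hy
      rw [hRevF (α y) (hαI y hy) y hy, hRevF (α' y) (hα'I y hy) y hy]
      exact hα'mono y hy
    have h2 : (∫ x in (0:ℝ)..1, RevG φ x (β x)) ≤ ∫ x in (0:ℝ)..1, RevG φ x (β' x) := by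
      apply intervalIntegral.integral_mono_on zero_le_one (hint2 β hβm hβI)
        (hint2 β' hβ'm hβ'I)
      intro x hx
      rw [hRevG x hx (β x) (hβI x hx), hRevG x hx (β' x) (hβ'I x hx)]
      exact hβ'mono x hx
    exact add_le_add h1 h2
end

section
/- Transshipment upper bound (OPT(D) ≥ OPT(B)): let f, g : [0,1]² → ℝ be nonnegative continuous functions, fix n ≥ 2 with ε = 1/n, and form the grid weights f_d, g_d and the bipartite graph G_n. Suppose y : E(G_n) → ℝ is feasible for Problem D, i.e. y ≥ 0, Σ_{v : (u,v)∈E} y_{uv} ≥ f_d(u) for every u ∈ U, and Σ_{u : (u,v)∈E} y_{uv} ≥ g_d(v) for every v ∈ V. Then there exists a measurable γ feasible for Problem B (with data f, g) whose cost is at most Σ_{(u,v)∈E} y_{uv}. -/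
open MeasureTheory

/-- The grid weight of little square `Q_{ij}` for a function `h` on `[0,1]²`
(`ε = 1/n`). -/
noncomputable def gridWeight (n : ℕ) (h : ℝ → ℝ → ℝ) (i j : Fin n) : ℝ :=
  ∫ x in ((i : ℝ) * (1 / n))..(((i : ℝ) + 1) * (1 / n)),
    ∫ y in ((j : ℝ) * (1 / n))..(((j : ℝ) + 1) * (1 / n)), h x y

/-- `γ` is feasible for Problem B with data `f, g`. -/
def ProblemBFeasible (f g : ℝ → ℝ → ℝ) (γ : ℝ → ℝ → ℝ → ℝ → ℝ) : Prop :=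
  Measurable (fun q : ℝ × ℝ × ℝ × ℝ => γ q.1 q.2.1 q.2.2.1 q.2.2.2) ∧
  (∀ᵐ q : ℝ × ℝ × ℝ × ℝ
      ∂(volume.restrict (Set.Icc (0:ℝ) 1 ×ˢ Set.Icc (0:ℝ) 1 ×ˢ
          Set.Icc (0:ℝ) 1 ×ˢ Set.Icc (0:ℝ) 1)),
    0 ≤ γ q.1 q.2.1 q.2.2.1 q.2.2.2) ∧
  (∀ᵐ p : ℝ × ℝ ∂(volume.restrict (Set.Icc (0:ℝ) 1 ×ˢ Set.Icc (0:ℝ) 1)),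
    f p.1 p.2 ≤ ∫ y₂ in (0:ℝ)..p.2, ∫ x₂ in p.1..1, γ p.1 p.2 x₂ y₂) ∧
  (∀ᵐ p : ℝ × ℝ ∂(volume.restrict (Set.Icc (0:ℝ) 1 ×ˢ Set.Icc (0:ℝ) 1)),
    g p.1 p.2 ≤ ∫ y₁ in p.2..1, ∫ x₁ in (0:ℝ)..p.1, γ x₁ y₁ p.1 p.2)

/-- The cost of a plan `γ` in Problem B. -/
noncomputable def BCost (γ : ℝ → ℝ → ℝ → ℝ → ℝ) : ℝ :=
  ∫ x₁ in (0:ℝ)..1, ∫ y₁ in (0:ℝ)..1, ∫ y₂ in (0:ℝ)..y₁, ∫ x₂ in x₁..1,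
    γ x₁ y₁ x₂ y₂

namespace TUB

variable {n : ℕ}

noncomputable def cL (n : ℕ) (i : Fin n) : ℝ := (i : ℝ) * (1 / n)
noncomputable def cR (n : ℕ) (i : Fin n) : ℝ := ((i : ℝ) + 1) * (1 / n)
def cell (n : ℕ) (i : Fin n) : Set ℝ := Set.Ioc (cL n i) (cR n i)

lemma gridWeight_def (h : ℝ → ℝ → ℝ) (i j : Fin n) :
    gridWeight n h i j = ∫ x in cL n i..cR n i, ∫ y in cL n j..cR n j, h x y := rfl

lemma inv_pos' (hn : 0 < n) : (0:ℝ) < 1 / n := by positivity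

lemma cL_lt_cR (hn : 0 < n) (i : Fin n) : cL n i < cR n i := by
  have := inv_pos' hn
  simp only [cL, cR]; nlinarith

lemma cL_le_cR (hn : 0 < n) (i : Fin n) : cL n i ≤ cR n i := (cL_lt_cR hn i).le

lemma cL_nonneg (i : Fin n) : 0 ≤ cL n i := by
  have : (0:ℝ) ≤ (i:ℝ) := by positivity
  have : (0:ℝ) ≤ 1/(n:ℝ) := by positivity
  simp only [cL]; positivity

lemma cR_le_one (hn : 0 < n) (i : Fin n) : cR n i ≤ 1 := by
  have hi : ((i:ℝ) + 1) ≤ (n:ℝ) := by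
    have := i.2
    exact_mod_cast Nat.succ_le_of_lt this
  have h0 : (0:ℝ) < (n:ℝ) := by exact_mod_cast hn
  calc cR n i = ((i:ℝ)+1) * (1/n) := rfl
    _ ≤ (n:ℝ) * (1/n) := by
        apply mul_le_mul_of_nonneg_right hi (by positivity)
    _ = 1 := by field_simp

lemma cR_le_cL (hn : 0 < n) {i i' : Fin n} (hii : i < i') : cR n i ≤ cL n i' := by
  have : ((i:ℝ) + 1) ≤ (i':ℝ) := by exact_mod_cast Nat.succ_le_of_lt hii
  have h0 : (0:ℝ) ≤ 1/(n:ℝ) := by positivity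
  exact mul_le_mul_of_nonneg_right this h0

lemma cell_unique {x : ℝ} {i i' : Fin n} (hn : 0 < n) (h1 : x ∈ cell n i)
    (h2 : x ∈ cell n i') : i = i' := by
  by_contra hne
  rcases lt_or_gt_of_ne hne with hlt | hlt
  · exact absurd (h1.2.trans (cR_le_cL hn hlt)) (not_le.2 h2.1)
  · exact absurd (h2.2.trans (cR_le_cL hn hlt)) (not_le.2 h1.1)

lemma cell_exists (hn : 0 < n) {x : ℝ} (hx : x ∈ Set.Ioc (0:ℝ) 1) :
    ∃ i : Fin n, x ∈ cell n i := by
  have hn0 : (0:ℝ) < (n:ℝ) := by exact_mod_cast hn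
  have hxn : 0 < x * n := by nlinarith [hx.1]
  have hxn1 : x * n ≤ n := by nlinarith [hx.2]
  set k : ℤ := ⌈x * n⌉ - 1 with hk
  have hk0 : 0 ≤ k := by
    have : (1:ℤ) ≤ ⌈x * n⌉ := by
      rw [Int.le_ceil_iff]; simpa using hxn
    omega
  have hkn : k < (n:ℤ) := by
    have : ⌈x * n⌉ ≤ (n:ℤ) := Int.ceil_le.2 (by exact_mod_cast hxn1)
    omega
  refine ⟨⟨k.toNat, by omega⟩, ?_, ?_⟩
  · show (↑(k.toNat) : ℝ) * (1/n) < x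
    have h1 : ((k:ℝ)) < x * n := by
      have := Int.ceil_lt_add_one (x * n)
      have hkr : (k:ℝ) = (⌈x * n⌉ : ℝ) - 1 := by push_cast [hk]; ring
      linarith
    have : ((k.toNat : ℤ) : ℝ) = (k:ℝ) := by rw [Int.toNat_of_nonneg hk0]
    rw [show ((k.toNat : ℕ) : ℝ) = (k:ℝ) by exact_mod_cast this]
    rw [div_eq_mul_inv, one_mul, ← div_eq_mul_inv, div_lt_iff₀ hn0]
    linarith
  · show x ≤ ((↑(k.toNat) : ℝ) + 1) * (1/n)
    have h1 : x * n ≤ (k:ℝ) + 1 := by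
      have := Int.le_ceil (x * n)
      have hkr : (k:ℝ) = (⌈x * n⌉ : ℝ) - 1 := by push_cast [hk]; ring
      linarith
    have : ((k.toNat : ℤ) : ℝ) = (k:ℝ) := by rw [Int.toNat_of_nonneg hk0]
    rw [show ((k.toNat : ℕ) : ℝ) = (k:ℝ) by exact_mod_cast this]
    rw [div_eq_mul_inv, one_mul, ← div_eq_mul_inv, le_div_iff₀ hn0]
    linarith

end TUB

open MeasureTheory
section
variable {k : ℝ → ℝ}

-- shrink lemma
lemma shrink (hk : Continuous k) (hk0 : ∀ x, 0 ≤ k x) {a p q b : ℝ}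
    (h1 : a ≤ p) (h2 : p ≤ q) (h3 : q ≤ b) :
    ∫ x in p..q, k x ≤ ∫ x in a..b, k x := by
  have i1 : IntervalIntegrable k volume a p := hk.intervalIntegrable _ _
  have i2 : IntervalIntegrable k volume p q := hk.intervalIntegrable _ _
  have i3 : IntervalIntegrable k volume q b := hk.intervalIntegrable _ _
  have e1 : (∫ x in a..p, k x) + ∫ x in p..b, k x = ∫ x in a..b, k x :=
    intervalIntegral.integral_add_adjacent_intervals i1 (i2.trans i3)
  have e2 : (∫ x in p..q, k x) + ∫ x in q..b, k x = ∫ x in p..b, k x :=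
    intervalIntegral.integral_add_adjacent_intervals i2 i3
  have n1 : 0 ≤ ∫ x in a..p, k x :=
    intervalIntegral.integral_nonneg h1 (fun x _ => hk0 x)
  have n3 : 0 ≤ ∫ x in q..b, k x :=
    intervalIntegral.integral_nonneg h3 (fun x _ => hk0 x)
  linarith

-- indicator integral lemma
lemma ind_int (k : ℝ → ℝ) {a b s t : ℝ} (hs : s ≤ a) (hab : a ≤ b) (ht : b ≤ t) :
    ∫ x in s..t, (Set.Ioc a b).indicator k x = ∫ x in a..b, k x := by
  rw [intervalIntegral.integral_of_le (hs.trans (hab.trans ht)),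
    intervalIntegral.integral_of_le hab,
    MeasureTheory.integral_indicator measurableSet_Ioc]
  rw [Measure.restrict_restrict measurableSet_Ioc,
    Set.inter_eq_left.2 (Set.Ioc_subset_Ioc hs ht)]

-- general indicator integral
lemma ind_int' (k : ℝ → ℝ) {a b s t : ℝ} (hst : s ≤ t) :
    ∫ x in s..t, (Set.Ioc a b).indicator k x
      = ∫ x in Set.Ioc (max a s) (min b t), k x := by
  rw [intervalIntegral.integral_of_le hst,
    MeasureTheory.integral_indicator measurableSet_Ioc,
    Measure.restrict_restrict measurableSet_Ioc, Set.Ioc_inter_Ioc]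

-- interval integrability of indicators
lemma ind_ii {k : ℝ → ℝ} {s : Set ℝ} (hs : MeasurableSet s) {a b : ℝ}
    (hk : IntervalIntegrable k volume a b) :
    IntervalIntegrable (s.indicator k) volume a b := by
  rw [intervalIntegrable_iff] at hk ⊢
  exact hk.indicator hs

-- Fubini swap for continuous functions on rectangles
lemma swap_int {h : ℝ → ℝ → ℝ} (hc : Continuous fun p : ℝ × ℝ => h p.1 p.2)
    {a b c d : ℝ} (hab : a ≤ b) (hcd : c ≤ d) :
    ∫ x in a..b, ∫ y in c..d, h x y = ∫ y in c..d, ∫ x in a..b, h x y := by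
  simp only [intervalIntegral.integral_of_le hab, intervalIntegral.integral_of_le hcd]
  apply MeasureTheory.integral_integral_swap
  have : IntegrableOn (Function.uncurry h) (Set.Icc a b ×ˢ Set.Icc c d)
      (volume.prod volume) := by
    rw [← Measure.volume_eq_prod]
    exact hc.continuousOn.integrableOn_compact (isCompact_Icc.prod isCompact_Icc)
  have h2 : IntegrableOn (Function.uncurry h) (Set.Ioc a b ×ˢ Set.Ioc c d)
      (volume.prod volume) :=
    this.mono_set (Set.prod_mono Set.Ioc_subset_Icc_self Set.Ioc_subset_Icc_self)
  rwa [IntegrableOn, ← Measure.prod_restrict] at h2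

-- continuity of one-variable slices
lemma cont_fst {h : ℝ → ℝ → ℝ} (hc : Continuous fun p : ℝ × ℝ => h p.1 p.2) (y : ℝ) :
    Continuous fun x => h x y := hc.comp (continuous_id.prodMk continuous_const)

lemma cont_snd {h : ℝ → ℝ → ℝ} (hc : Continuous fun p : ℝ × ℝ => h p.1 p.2) (x : ℝ) :
    Continuous fun y => h x y := hc.comp (continuous_const.prodMk continuous_id)

-- continuity of parametric set integral over a fixed Ioc
lemma cont_param_fst {h : ℝ → ℝ → ℝ} (hc : Continuous fun p : ℝ × ℝ => h p.1 p.2)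
    (c d : ℝ) : Continuous fun y => ∫ x in Set.Ioc c d, h x y := by
  by_cases hcd : c ≤ d
  · have : ∀ y, ∫ x in Set.Ioc c d, h x y = ∫ x in c..d, h x y := fun y =>
      (intervalIntegral.integral_of_le hcd).symm
    simp only [this]
    exact intervalIntegral.continuous_parametric_intervalIntegral_of_continuous'
      (f := fun y x => h x y) (hc.comp continuous_swap) c d
  · have : Set.Ioc c d = ∅ := Set.Ioc_eq_empty (fun h' => hcd h'.le)
    simp only [this, Measure.restrict_empty, integral_zero_measure]
    exact continuous_const

lemma cont_param_snd {h : ℝ → ℝ → ℝ} (hc : Continuous fun p : ℝ × ℝ => h p.1 p.2)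
    (c d : ℝ) : Continuous fun x => ∫ y in Set.Ioc c d, h x y := by
  by_cases hcd : c ≤ d
  · have : ∀ x, ∫ y in Set.Ioc c d, h x y = ∫ y in c..d, h x y := fun x =>
      (intervalIntegral.integral_of_le hcd).symm
    simp only [this]
    exact intervalIntegral.continuous_parametric_intervalIntegral_of_continuous'
      (f := fun x y => h x y) hc c d
  · have : Set.Ioc c d = ∅ := Set.Ioc_eq_empty (fun h' => hcd h'.le)
    simp only [this, Measure.restrict_empty, integral_zero_measure]
    exact continuous_const

-- continuity of parametric interval integral
lemma cont_param_int_snd {h : ℝ → ℝ → ℝ} (hc : Continuous fun p : ℝ × ℝ => h p.1 p.2)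
    (c d : ℝ) : Continuous fun x => ∫ y in c..d, h x y :=
  intervalIntegral.continuous_parametric_intervalIntegral_of_continuous'
    (f := fun x y => h x y) hc c d

end

open MeasureTheory
namespace TUB
open scoped Classical
variable {n : ℕ} {h : ℝ → ℝ → ℝ}

noncomputable def Wgt (n : ℕ) (h : ℝ → ℝ → ℝ) (i j : Fin n) (x y : ℝ) : ℝ :=
  if gridWeight n h i j = 0 then (n:ℝ)^2 else h x y / gridWeight n h i j

open Classical in
noncomputable def bump (n : ℕ) (h : ℝ → ℝ → ℝ) (i j : Fin n) (x y : ℝ) : ℝ :=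
  if x ∈ cell n i ∧ y ∈ cell n j then Wgt n h i j x y else 0

lemma Wgt_cont (hc : Continuous fun p : ℝ × ℝ => h p.1 p.2) (i j : Fin n) :
    Continuous fun p : ℝ × ℝ => Wgt n h i j p.1 p.2 := by
  unfold Wgt
  by_cases h0 : gridWeight n h i j = 0
  · simp only [h0, if_true]; exact continuous_const
  · simp only [h0, if_false]; exact hc.div_const _

lemma gridWeight_nonneg (hpos : ∀ x y, 0 ≤ h x y) (hn : 0 < n) (i j : Fin n) :
    0 ≤ gridWeight n h i j := by
  rw [gridWeight_def]
  apply intervalIntegral.integral_nonneg (cL_le_cR hn i)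
  intro x _
  exact intervalIntegral.integral_nonneg (cL_le_cR hn j) (fun y _ => hpos x y)

lemma Wgt_nonneg (hpos : ∀ x y, 0 ≤ h x y) (hn : 0 < n) (i j : Fin n) (x y : ℝ) :
    0 ≤ Wgt n h i j x y := by
  unfold Wgt
  by_cases h0 : gridWeight n h i j = 0
  · simp only [h0, if_true]; positivity
  · simp only [h0, if_false]
    exact div_nonneg (hpos x y) (gridWeight_nonneg hpos hn i j)

lemma bump_nonneg (hpos : ∀ x y, 0 ≤ h x y) (hn : 0 < n) (i j : Fin n) (x y : ℝ) :
    0 ≤ bump n h i j x y := by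
  unfold bump
  split
  · exact Wgt_nonneg hpos hn i j x y
  · exact le_rfl

lemma bump_mem {i j : Fin n} {x y : ℝ} (hb : bump n h i j x y ≠ 0) :
    x ∈ cell n i ∧ y ∈ cell n j := by
  by_contra hmem
  exact hb (by simp [bump, hmem])

lemma zero_cell (hc : Continuous fun p : ℝ × ℝ => h p.1 p.2)
    (hpos : ∀ x y, 0 ≤ h x y) (hn : 0 < n) {i j : Fin n}
    (h0 : gridWeight n h i j = 0) {x y : ℝ}
    (hx : x ∈ cell n i) (hy : y ∈ cell n j) : h x y = 0 := by
  by_contra hne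
  have hcpos : 0 < h x y := lt_of_le_of_ne (hpos x y) (Ne.symm hne)
  have hev : {p : ℝ × ℝ | h x y / 2 < h p.1 p.2} ∈ nhds (x, y) := by
    have := (hc.continuousAt (x := (x, y))).preimage_mem_nhds
      (Ioi_mem_nhds (half_lt_self hcpos))
    exact this
  obtain ⟨δ, hδ, hball⟩ := Metric.mem_nhds_iff.1 hev
  have hpq : max (cL n i) (x - δ/2) < x := max_lt hx.1 (by linarith)
  have hrs : max (cL n j) (y - δ/2) < y := max_lt hy.1 (by linarith)
  set p := max (cL n i) (x - δ/2)
  set r := max (cL n j) (y - δ/2)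
  have hqb : x ≤ cR n i := hx.2
  have hsb : y ≤ cR n j := hy.2
  have hap : cL n i ≤ p := le_max_left _ _
  have har : cL n j ≤ r := le_max_left _ _
  have hlow : ∀ z₁ ∈ Set.Icc p x, ∀ z₂ ∈ Set.Icc r y, h x y / 2 ≤ h z₁ z₂ := by
    intro z₁ hz₁ z₂ hz₂
    have e1 : x - δ/2 ≤ z₁ := le_trans (le_max_right _ _) hz₁.1
    have e2 : y - δ/2 ≤ z₂ := le_trans (le_max_right _ _) hz₂.1
    have h1 : |z₁ - x| < δ := by rw [abs_lt]; constructor <;> [linarith [hz₁.1]; linarith [hz₁.2]]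
    have h2 : |z₂ - y| < δ := by rw [abs_lt]; constructor <;> [linarith [hz₂.1]; linarith [hz₂.2]]
    have : (z₁, z₂) ∈ Metric.ball (x, y) δ := by
      rw [Metric.mem_ball, Prod.dist_eq]
      simp only [Real.dist_eq]
      exact max_lt h1 h2
    exact (hball this).le
  have hinner_cont : Continuous fun z₁ => ∫ z₂ in cL n j..cR n j, h z₁ z₂ :=
    cont_param_int_snd hc _ _
  have key : h x y / 2 * ((x - p) * (y - r)) ≤ gridWeight n h i j := by
    have step1 : ∀ z₁ ∈ Set.Icc p x, h x y / 2 * (y - r) ≤ ∫ z₂ in r..y, h z₁ z₂ := by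
      intro z₁ hz₁
      have t1 : ∫ z₂ in r..y, (h x y / 2) ≤ ∫ z₂ in r..y, h z₁ z₂ := by
        apply intervalIntegral.integral_mono_on hrs.le
          (intervalIntegrable_const) ((cont_snd hc z₁).intervalIntegrable _ _)
        intro z₂ hz₂
        exact hlow z₁ hz₁ z₂ hz₂
      rw [intervalIntegral.integral_const, smul_eq_mul] at t1
      nlinarith [t1]
    have step2 : ∀ z₁ ∈ Set.Icc p x,
        (∫ z₂ in r..y, h z₁ z₂) ≤ ∫ z₂ in cL n j..cR n j, h z₁ z₂ := by
      intro z₁ _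
      exact shrink (cont_snd hc z₁) (hpos z₁) har hrs.le hsb
    have c1 : ∫ z₁ in p..x, (h x y / 2 * (y - r)) ≤
        ∫ z₁ in p..x, ∫ z₂ in cL n j..cR n j, h z₁ z₂ := by
      apply intervalIntegral.integral_mono_on hpq.le
        (intervalIntegrable_const) (hinner_cont.intervalIntegrable _ _)
      intro z₁ hz₁
      exact (step1 z₁ hz₁).trans (step2 z₁ hz₁)
    rw [intervalIntegral.integral_const, smul_eq_mul] at c1
    have step4 : (∫ z₁ in p..x, ∫ z₂ in cL n j..cR n j, h z₁ z₂) ≤ gridWeight n h i j := by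
      rw [gridWeight_def]
      apply shrink hinner_cont
        (fun z₁ => intervalIntegral.integral_nonneg (cL_le_cR hn j) (fun z₂ _ => hpos z₁ z₂))
        hap hpq.le hqb
    nlinarith [c1, step4]
  rw [h0] at key
  nlinarith [key, mul_pos (mul_pos (half_pos hcpos) (sub_pos.2 hpq)) (sub_pos.2 hrs)]

end TUB

namespace TUB
open scoped Classical
open MeasureTheory
variable {n : ℕ} {h : ℝ → ℝ → ℝ}

lemma cell_ms (i : Fin n) : MeasurableSet (cell n i) := measurableSet_Ioc

lemma h_le_bump (hc : Continuous fun p : ℝ × ℝ => h p.1 p.2)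
    (hpos : ∀ x y, 0 ≤ h x y) (hn : 0 < n) {i j : Fin n} {x y : ℝ}
    (hx : x ∈ cell n i) (hy : y ∈ cell n j) :
    h x y ≤ gridWeight n h i j * bump n h i j x y := by
  unfold bump
  rw [if_pos ⟨hx, hy⟩]
  unfold Wgt
  by_cases h0 : gridWeight n h i j = 0
  · rw [if_pos h0, h0, zero_mul, zero_cell hc hpos hn h0 hx hy]
  · rw [if_neg h0, mul_div_cancel₀ _ h0]

lemma Wmass (hn : 0 < n) (i j : Fin n) :
    ∫ x in cL n i..cR n i, ∫ y in cL n j..cR n j, Wgt n h i j x y = 1 := by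
  have hn0 : (n:ℝ) ≠ 0 := by positivity
  unfold Wgt
  by_cases h0 : gridWeight n h i j = 0
  · simp only [h0, if_pos rfl, if_true]
    have hlen : ∀ k : Fin n, cR n k - cL n k = 1/n := by
      intro k; unfold cR cL; ring
    simp only [intervalIntegral.integral_const, smul_eq_mul, hlen]
    field_simp
  · simp only [h0, if_false]
    simp only [intervalIntegral.integral_div]
    rw [← gridWeight_def, div_self h0]

lemma Wmass_swap (hc : Continuous fun p : ℝ × ℝ => h p.1 p.2) (hn : 0 < n)
    (i j : Fin n) :
    ∫ y in cL n j..cR n j, ∫ x in cL n i..cR n i, Wgt n h i j x y = 1 := by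
  rw [← swap_int (Wgt_cont hc i j) (cL_le_cR hn i) (cL_le_cR hn j)]
  exact Wmass hn i j

lemma bump_eq_ind_fst (i j : Fin n) (y : ℝ) :
    (fun x => bump n h i j x y)
      = (cell n i).indicator (fun x => if y ∈ cell n j then Wgt n h i j x y else 0) := by
  funext x
  by_cases hx : x ∈ cell n i <;> by_cases hy : y ∈ cell n j <;>
    simp [bump, hx, hy]

lemma bump_eq_ind_snd (i j : Fin n) (x : ℝ) :
    (fun y => bump n h i j x y)
      = (cell n j).indicator (fun y => if x ∈ cell n i then Wgt n h i j x y else 0) := by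
  funext y
  by_cases hx : x ∈ cell n i <;> by_cases hy : y ∈ cell n j <;>
    simp [bump, hx, hy]

lemma bump_int_fst {s t : ℝ} (hst : s ≤ t) (i j : Fin n) (y : ℝ) :
    ∫ x in s..t, bump n h i j x y
      = if y ∈ cell n j then
          ∫ x in Set.Ioc (max (cL n i) s) (min (cR n i) t), Wgt n h i j x y else 0 := by
  rw [show (∫ x in s..t, bump n h i j x y)
      = ∫ x in s..t, (cell n i).indicator
          (fun x => if y ∈ cell n j then Wgt n h i j x y else 0) x from
    intervalIntegral.integral_congr (fun x _ => congrFun (bump_eq_ind_fst i j y) x)]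
  rw [show cell n i = Set.Ioc (cL n i) (cR n i) from rfl, ind_int' _ hst]
  by_cases hy : y ∈ cell n j
  · simp only [if_pos hy]
  · simp only [if_neg hy, MeasureTheory.integral_zero]

lemma bump_int_snd {p q : ℝ} (hpq : p ≤ q) (i j : Fin n) (x : ℝ) :
    ∫ y in p..q, bump n h i j x y
      = if x ∈ cell n i then
          ∫ y in Set.Ioc (max (cL n j) p) (min (cR n j) q), Wgt n h i j x y else 0 := by
  rw [show (∫ y in p..q, bump n h i j x y)
      = ∫ y in p..q, (cell n j).indicator
          (fun y => if x ∈ cell n i then Wgt n h i j x y else 0) y from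
    intervalIntegral.integral_congr (fun y _ => congrFun (bump_eq_ind_snd i j x) y)]
  rw [show cell n j = Set.Ioc (cL n j) (cR n j) from rfl, ind_int' _ hpq]
  by_cases hx : x ∈ cell n i
  · simp only [if_pos hx]
  · simp only [if_neg hx, MeasureTheory.integral_zero]

lemma bump_ii_fst (hc : Continuous fun p : ℝ × ℝ => h p.1 p.2) (i j : Fin n)
    (y s t : ℝ) : IntervalIntegrable (fun x => bump n h i j x y) volume s t := by
  rw [bump_eq_ind_fst]
  apply ind_ii (cell_ms i)
  by_cases hy : y ∈ cell n j
  · simp only [if_pos hy]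
    exact (cont_fst (Wgt_cont hc i j) y).intervalIntegrable _ _
  · simp only [if_neg hy]
    exact intervalIntegrable_const

lemma bump_ii_snd (hc : Continuous fun p : ℝ × ℝ => h p.1 p.2) (i j : Fin n)
    (x p q : ℝ) : IntervalIntegrable (fun y => bump n h i j x y) volume p q := by
  rw [bump_eq_ind_snd]
  apply ind_ii (cell_ms j)
  by_cases hx : x ∈ cell n i
  · simp only [if_pos hx]
    exact (cont_snd (Wgt_cont hc i j) x).intervalIntegrable _ _
  · simp only [if_neg hx]
    exact intervalIntegrable_const

lemma bump_pii_fst (hc : Continuous fun p : ℝ × ℝ => h p.1 p.2) (i j : Fin n)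
    {s t : ℝ} (hst : s ≤ t) (p q : ℝ) :
    IntervalIntegrable (fun y => ∫ x in s..t, bump n h i j x y) volume p q := by
  have e : (fun y => ∫ x in s..t, bump n h i j x y)
      = (cell n j).indicator
          (fun y => ∫ x in Set.Ioc (max (cL n i) s) (min (cR n i) t),
            Wgt n h i j x y) := by
    funext y
    rw [bump_int_fst hst i j y]
    by_cases hy : y ∈ cell n j <;> simp [hy]
  rw [e]
  exact ind_ii (cell_ms j)
    ((cont_param_fst (Wgt_cont hc i j) _ _).intervalIntegrable _ _)

lemma bump_pii_snd (hc : Continuous fun p : ℝ × ℝ => h p.1 p.2) (i j : Fin n)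
    {p q : ℝ} (hpq : p ≤ q) (s t : ℝ) :
    IntervalIntegrable (fun x => ∫ y in p..q, bump n h i j x y) volume s t := by
  have e : (fun x => ∫ y in p..q, bump n h i j x y)
      = (cell n i).indicator
          (fun x => ∫ y in Set.Ioc (max (cL n j) p) (min (cR n j) q),
            Wgt n h i j x y) := by
    funext x
    rw [bump_int_snd hpq i j x]
    by_cases hx : x ∈ cell n i <;> simp [hx]
  rw [e]
  exact ind_ii (cell_ms i)
    ((cont_param_snd (Wgt_cont hc i j) _ _).intervalIntegrable _ _)

lemma mass_xy (hc : Continuous fun p : ℝ × ℝ => h p.1 p.2) (hn : 0 < n)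
    {i j : Fin n} {s t p q : ℝ}
    (hs : s ≤ cL n i) (ht : cR n i ≤ t) (hp : p ≤ cL n j) (hq : cR n j ≤ q) :
    ∫ x in s..t, ∫ y in p..q, bump n h i j x y = 1 := by
  have hpq : p ≤ q := hp.trans ((cL_le_cR hn j).trans hq)
  have e : ∀ x, (∫ y in p..q, bump n h i j x y)
      = (cell n i).indicator (fun x => ∫ y in cL n j..cR n j, Wgt n h i j x y) x := by
    intro x
    rw [bump_int_snd hpq i j x, max_eq_left hp, min_eq_left hq,
      ← intervalIntegral.integral_of_le (cL_le_cR hn j)]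
    by_cases hx : x ∈ cell n i <;> simp [hx]
  rw [intervalIntegral.integral_congr (fun x _ => e x),
    show cell n i = Set.Ioc (cL n i) (cR n i) from rfl, ind_int _ hs (cL_le_cR hn i) ht]
  exact Wmass hn i j

lemma mass_yx (hc : Continuous fun p : ℝ × ℝ => h p.1 p.2) (hn : 0 < n)
    {i j : Fin n} {s t p q : ℝ}
    (hs : s ≤ cL n i) (ht : cR n i ≤ t) (hp : p ≤ cL n j) (hq : cR n j ≤ q) :
    ∫ y in p..q, ∫ x in s..t, bump n h i j x y = 1 := by
  have hst : s ≤ t := hs.trans ((cL_le_cR hn i).trans ht)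
  have e : ∀ y, (∫ x in s..t, bump n h i j x y)
      = (cell n j).indicator (fun y => ∫ x in cL n i..cR n i, Wgt n h i j x y) y := by
    intro y
    rw [bump_int_fst hst i j y, max_eq_left hs, min_eq_left ht,
      ← intervalIntegral.integral_of_le (cL_le_cR hn i)]
    by_cases hy : y ∈ cell n j <;> simp [hy]
  rw [intervalIntegral.integral_congr (fun y _ => e y),
    show cell n j = Set.Ioc (cL n j) (cR n j) from rfl, ind_int _ hp (cL_le_cR hn j) hq]
  exact Wmass_swap hc hn i j

lemma bump_meas (hc : Continuous fun p : ℝ × ℝ => h p.1 p.2) (i j : Fin n) :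
    Measurable fun p : ℝ × ℝ => bump n h i j p.1 p.2 := by
  unfold bump
  have hset : MeasurableSet {p : ℝ × ℝ | p.1 ∈ cell n i ∧ p.2 ∈ cell n j} :=
    (cell_ms i).prod (cell_ms j)
  exact Measurable.ite hset (Wgt_cont hc i j).measurable measurable_const

end TUB

open MeasureTheory TUB
open scoped Classical


set_option maxHeartbeats 1000000 in
/-- transshipment upper bound `OPT(D) ≥ OPT(B)`: any feasible
solution of the discrete transshipment Problem D on the grid graph `G_n`
(edges `u(i,j)–v(i',j')` for `i < i'`, `j' < j`) yields a feasible plan for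
Problem B with no larger cost. -/
theorem transshipment_upper_bound
    (f g : ℝ → ℝ → ℝ) (n : ℕ) (hn : 2 ≤ n)
    (hfcont : Continuous (fun p : ℝ × ℝ => f p.1 p.2))
    (hgcont : Continuous (fun p : ℝ × ℝ => g p.1 p.2))
    (hfpos : ∀ x y, 0 ≤ f x y) (hgpos : ∀ x y, 0 ≤ g x y)
    (y : (Fin n × Fin n) → (Fin n × Fin n) → ℝ)
    -- y ≥ 0 on the edges of G_n
    (hynn : ∀ u v : Fin n × Fin n, u.1 < v.1 → v.2 < u.2 → 0 ≤ y u v)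
    -- Σ_{v : (u,v) ∈ E} y_{uv} ≥ f_d(u) for every u ∈ U
    (hu : ∀ u : Fin n × Fin n,
      gridWeight n f u.1 u.2 ≤
        ∑ v ∈ Finset.univ.filter (fun v : Fin n × Fin n => u.1 < v.1 ∧ v.2 < u.2),
          y u v)
    -- Σ_{u : (u,v) ∈ E} y_{uv} ≥ g_d(v) for every v ∈ V
    (hv : ∀ v : Fin n × Fin n,
      gridWeight n g v.1 v.2 ≤
        ∑ u ∈ Finset.univ.filter (fun u : Fin n × Fin n => u.1 < v.1 ∧ v.2 < u.2),
          y u v) :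
    ∃ γ : ℝ → ℝ → ℝ → ℝ → ℝ, ProblemBFeasible f g γ ∧
      BCost γ ≤
        ∑ u : Fin n × Fin n,
          ∑ v ∈ Finset.univ.filter (fun v : Fin n × Fin n => u.1 < v.1 ∧ v.2 < u.2),
            y u v := by
  have hn0 : 0 < n := by omega
  set E : Finset ((Fin n × Fin n) × (Fin n × Fin n)) :=
    Finset.univ.filter (fun e => e.1.1 < e.2.1 ∧ e.2.2 < e.1.2) with hE
  set γ : ℝ → ℝ → ℝ → ℝ → ℝ := fun x₁ y₁ x₂ y₂ =>
    ∑ e ∈ E, y e.1 e.2 * bump n f e.1.1 e.1.2 x₁ y₁ * bump n g e.2.1 e.2.2 x₂ y₂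
    with hγ
  have hmemE : ∀ e ∈ E, e.1.1 < e.2.1 ∧ e.2.2 < e.1.2 := by
    intro e he
    exact (Finset.mem_filter.1 he).2
  have hyE : ∀ e ∈ E, 0 ≤ y e.1 e.2 := fun e he =>
    hynn _ _ (hmemE e he).1 (hmemE e he).2
  -- the key inner computation for constraint 1 and the cost
  have key_inner : ∀ x₁ y₁ : ℝ, x₁ ≤ 1 →
      (∫ y₂ in (0:ℝ)..y₁, ∫ x₂ in x₁..1, γ x₁ y₁ x₂ y₂)
        = ∑ e ∈ E, y e.1 e.2 * bump n f e.1.1 e.1.2 x₁ y₁ := by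
    intro x₁ y₁ hx₁
    have step1 : ∀ y₂ : ℝ, (∫ x₂ in x₁..1, γ x₁ y₁ x₂ y₂)
        = ∑ e ∈ E, y e.1 e.2 * bump n f e.1.1 e.1.2 x₁ y₁ *
            ∫ x₂ in x₁..1, bump n g e.2.1 e.2.2 x₂ y₂ := by
      intro y₂
      simp only [hγ]
      have ii1 : ∀ e ∈ E, IntervalIntegrable
          (fun x₂ => y e.1 e.2 * bump n f e.1.1 e.1.2 x₁ y₁ *
            bump n g e.2.1 e.2.2 x₂ y₂) volume x₁ 1 := fun e _ =>
        (bump_ii_fst hgcont e.2.1 e.2.2 y₂ x₁ 1).const_mul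
          (y e.1 e.2 * bump n f e.1.1 e.1.2 x₁ y₁)
      rw [intervalIntegral.integral_finset_sum ii1]
      exact Finset.sum_congr rfl (fun e _ => intervalIntegral.integral_const_mul _ _)
    rw [intervalIntegral.integral_congr (fun y₂ _ => step1 y₂)]
    have ii2 : ∀ e ∈ E, IntervalIntegrable
        (fun y₂ => y e.1 e.2 * bump n f e.1.1 e.1.2 x₁ y₁ *
          ∫ x₂ in x₁..1, bump n g e.2.1 e.2.2 x₂ y₂) volume 0 y₁ := fun e _ =>
      (bump_pii_fst hgcont e.2.1 e.2.2 hx₁ 0 y₁).const_mul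
        (y e.1 e.2 * bump n f e.1.1 e.1.2 x₁ y₁)
    rw [intervalIntegral.integral_finset_sum ii2]
    refine Finset.sum_congr rfl (fun e he => ?_)
    rw [intervalIntegral.integral_const_mul]
    by_cases hce : bump n f e.1.1 e.1.2 x₁ y₁ = 0
    · simp [hce]
    · obtain ⟨hx₁c, hy₁c⟩ := bump_mem hce
      rw [mass_yx hgcont hn0 (hx₁c.2.trans (cR_le_cL hn0 (hmemE e he).1))
        (cR_le_one hn0 _) (cL_nonneg _)
        ((cR_le_cL hn0 (hmemE e he).2).trans hy₁c.1.le), mul_one]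
  -- the key inner computation for constraint 2
  have key_inner2 : ∀ x₂ y₂ : ℝ, 0 ≤ x₂ →
      (∫ y₁ in y₂..(1:ℝ), ∫ x₁ in (0:ℝ)..x₂, γ x₁ y₁ x₂ y₂)
        = ∑ e ∈ E, y e.1 e.2 * bump n g e.2.1 e.2.2 x₂ y₂ := by
    intro x₂ y₂ hx₂
    have γcomm : ∀ x₁ y₁, γ x₁ y₁ x₂ y₂
        = ∑ e ∈ E, y e.1 e.2 * bump n g e.2.1 e.2.2 x₂ y₂ *
            bump n f e.1.1 e.1.2 x₁ y₁ := by
      intro x₁ y₁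
      simp only [hγ]
      exact Finset.sum_congr rfl (fun e _ => by ring)
    have step1 : ∀ y₁ : ℝ, (∫ x₁ in (0:ℝ)..x₂, γ x₁ y₁ x₂ y₂)
        = ∑ e ∈ E, y e.1 e.2 * bump n g e.2.1 e.2.2 x₂ y₂ *
            ∫ x₁ in (0:ℝ)..x₂, bump n f e.1.1 e.1.2 x₁ y₁ := by
      intro y₁
      rw [intervalIntegral.integral_congr (fun x₁ _ => γcomm x₁ y₁)]
      have ii1 : ∀ e ∈ E, IntervalIntegrable
          (fun x₁ => y e.1 e.2 * bump n g e.2.1 e.2.2 x₂ y₂ *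
            bump n f e.1.1 e.1.2 x₁ y₁) volume 0 x₂ := fun e _ =>
        (bump_ii_fst hfcont e.1.1 e.1.2 y₁ 0 x₂).const_mul
          (y e.1 e.2 * bump n g e.2.1 e.2.2 x₂ y₂)
      rw [intervalIntegral.integral_finset_sum ii1]
      exact Finset.sum_congr rfl (fun e _ => intervalIntegral.integral_const_mul _ _)
    rw [intervalIntegral.integral_congr (fun y₁ _ => step1 y₁)]
    have ii2 : ∀ e ∈ E, IntervalIntegrable
        (fun y₁ => y e.1 e.2 * bump n g e.2.1 e.2.2 x₂ y₂ *
          ∫ x₁ in (0:ℝ)..x₂, bump n f e.1.1 e.1.2 x₁ y₁) volume y₂ 1 := fun e _ =>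
      (bump_pii_fst hfcont e.1.1 e.1.2 hx₂ y₂ 1).const_mul
        (y e.1 e.2 * bump n g e.2.1 e.2.2 x₂ y₂)
    rw [intervalIntegral.integral_finset_sum ii2]
    refine Finset.sum_congr rfl (fun e he => ?_)
    rw [intervalIntegral.integral_const_mul]
    by_cases hce : bump n g e.2.1 e.2.2 x₂ y₂ = 0
    · simp [hce]
    · obtain ⟨hx₂c, hy₂c⟩ := bump_mem hce
      rw [mass_yx hfcont hn0 (cL_nonneg _)
        ((cR_le_cL hn0 (hmemE e he).1).trans hx₂c.1.le)
        (hy₂c.2.trans (cR_le_cL hn0 (hmemE e he).2)) (cR_le_one hn0 _), mul_one]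
  -- almost-everywhere reduction to the open unit square
  have hae : ((Set.Icc (0:ℝ) 1 ×ˢ Set.Icc (0:ℝ) 1 : Set (ℝ × ℝ)))
      =ᵐ[volume] (Set.Ioc (0:ℝ) 1 ×ˢ Set.Ioc (0:ℝ) 1 : Set (ℝ × ℝ)) := by
    rw [MeasureTheory.ae_eq_set]
    constructor
    · apply measure_mono_null (t := ({(0:ℝ)} ×ˢ (Set.univ : Set ℝ)) ∪
        ((Set.univ : Set ℝ) ×ˢ ({(0:ℝ)} : Set ℝ)))
      · rintro ⟨p1, p2⟩ ⟨⟨hp1, hp2⟩, hnot⟩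
        simp only [Set.mem_prod, Set.mem_Ioc] at hnot
        by_cases h1 : p1 ∈ Set.Ioc (0:ℝ) 1
        · right
          have h2 : p2 ∉ Set.Ioc (0:ℝ) 1 := fun h2 => hnot ⟨h1, h2⟩
          simp only [Set.mem_Ioc, not_and_or, not_lt, not_le] at h2
          rcases h2 with h2 | h2
          · exact ⟨trivial, le_antisymm h2 hp2.1⟩
          · exact absurd hp2.2 (not_le.2 h2)
        · left
          simp only [Set.mem_Ioc, not_and_or, not_lt, not_le] at h1
          rcases h1 with h1 | h1
          · exact ⟨le_antisymm h1 hp1.1, trivial⟩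
          · exact absurd hp1.2 (not_le.2 h1)
      · apply measure_union_null
        · rw [Measure.volume_eq_prod, Measure.prod_prod, Real.volume_singleton,
            zero_mul]
        · rw [Measure.volume_eq_prod, Measure.prod_prod, Real.volume_singleton,
            mul_zero]
    · have : ((Set.Ioc (0:ℝ) 1 ×ˢ Set.Ioc (0:ℝ) 1 : Set (ℝ × ℝ)) \
          (Set.Icc (0:ℝ) 1 ×ˢ Set.Icc (0:ℝ) 1)) = ∅ := by
        rw [Set.diff_eq_empty]
        exact Set.prod_mono Set.Ioc_subset_Icc_self Set.Ioc_subset_Icc_self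
      rw [this]
      exact measure_empty
  refine ⟨γ, ⟨?_, ?_, ?_, ?_⟩, ?_⟩
  -- measurability
  · apply Finset.measurable_sum
    intro e _
    have m1 : Measurable fun q : ℝ × ℝ × ℝ × ℝ => bump n f e.1.1 e.1.2 q.1 q.2.1 :=
      (bump_meas hfcont e.1.1 e.1.2).comp
        (measurable_fst.prodMk (measurable_fst.comp measurable_snd))
    have m2 : Measurable fun q : ℝ × ℝ × ℝ × ℝ =>
        bump n g e.2.1 e.2.2 q.2.2.1 q.2.2.2 :=
      (bump_meas hgcont e.2.1 e.2.2).comp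
        ((measurable_fst.comp (measurable_snd.comp measurable_snd)).prodMk
          (measurable_snd.comp (measurable_snd.comp measurable_snd)))
    exact (m1.const_mul _).mul m2
  -- nonnegativity
  · apply MeasureTheory.ae_of_all
    intro q
    apply Finset.sum_nonneg
    intro e he
    exact mul_nonneg (mul_nonneg (hyE e he) (bump_nonneg hfpos hn0 _ _ _ _))
      (bump_nonneg hgpos hn0 _ _ _ _)
  -- constraint 1
  · rw [Measure.restrict_congr_set hae]
    apply MeasureTheory.ae_restrict_of_forall_mem (measurableSet_Ioc.prod measurableSet_Ioc)
    rintro ⟨x₁, y₁⟩ ⟨hx₁, hy₁⟩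
    obtain ⟨i0, hxc⟩ := cell_exists hn0 hx₁
    obtain ⟨j0, hyc⟩ := cell_exists hn0 hy₁
    dsimp only
    rw [key_inner x₁ y₁ hx₁.2]
    have hsum : ∑ e ∈ E, y e.1 e.2 * bump n f e.1.1 e.1.2 x₁ y₁
        = ∑ u : Fin n × Fin n,
            (∑ v ∈ Finset.univ.filter
              (fun v : Fin n × Fin n => u.1 < v.1 ∧ v.2 < u.2), y u v) *
              bump n f u.1 u.2 x₁ y₁ := by
      rw [hE, Finset.sum_filter, ← Finset.univ_product_univ, Finset.sum_product]
      refine Finset.sum_congr rfl fun u _ => ?_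
      rw [Finset.sum_filter, Finset.sum_mul]
      refine Finset.sum_congr rfl fun v _ => ?_
      by_cases hcond : u.1 < v.1 ∧ v.2 < u.2 <;> simp [hcond]
    rw [hsum]
    rw [Finset.sum_eq_single (i0, j0) (fun u _ hne => ?_)
      (fun habs => absurd (Finset.mem_univ _) habs)]
    · calc f x₁ y₁ ≤ gridWeight n f i0 j0 * bump n f i0 j0 x₁ y₁ :=
            h_le_bump hfcont hfpos hn0 hxc hyc
        _ ≤ _ := by
            apply mul_le_mul_of_nonneg_right (hu (i0, j0))
              (bump_nonneg hfpos hn0 _ _ _ _)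
    · have hbz : bump n f u.1 u.2 x₁ y₁ = 0 := by
        by_contra hbz
        obtain ⟨hxu, hyu⟩ := bump_mem hbz
        exact hne (Prod.ext (cell_unique hn0 hxu hxc) (cell_unique hn0 hyu hyc))
      rw [hbz, mul_zero]
  -- constraint 2
  · rw [Measure.restrict_congr_set hae]
    apply MeasureTheory.ae_restrict_of_forall_mem (measurableSet_Ioc.prod measurableSet_Ioc)
    rintro ⟨x₂, y₂⟩ ⟨hx₂, hy₂⟩
    obtain ⟨i0, hxc⟩ := cell_exists hn0 hx₂
    obtain ⟨j0, hyc⟩ := cell_exists hn0 hy₂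
    dsimp only
    rw [key_inner2 x₂ y₂ hx₂.1.le]
    have hsum : ∑ e ∈ E, y e.1 e.2 * bump n g e.2.1 e.2.2 x₂ y₂
        = ∑ v : Fin n × Fin n,
            (∑ u ∈ Finset.univ.filter
              (fun u : Fin n × Fin n => u.1 < v.1 ∧ v.2 < u.2), y u v) *
              bump n g v.1 v.2 x₂ y₂ := by
      rw [hE, Finset.sum_filter, ← Finset.univ_product_univ, Finset.sum_product_right]
      refine Finset.sum_congr rfl fun v _ => ?_
      rw [Finset.sum_filter, Finset.sum_mul]
      refine Finset.sum_congr rfl fun u _ => ?_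
      by_cases hcond : u.1 < v.1 ∧ v.2 < u.2 <;> simp [hcond]
    rw [hsum]
    rw [Finset.sum_eq_single (i0, j0) (fun v _ hne => ?_)
      (fun habs => absurd (Finset.mem_univ _) habs)]
    · calc g x₂ y₂ ≤ gridWeight n g i0 j0 * bump n g i0 j0 x₂ y₂ :=
            h_le_bump hgcont hgpos hn0 hxc hyc
        _ ≤ _ := by
            apply mul_le_mul_of_nonneg_right (hv (i0, j0))
              (bump_nonneg hgpos hn0 _ _ _ _)
    · have hbz : bump n g v.1 v.2 x₂ y₂ = 0 := by
        by_contra hbz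
        obtain ⟨hxu, hyu⟩ := bump_mem hbz
        exact hne (Prod.ext (cell_unique hn0 hxu hxc) (cell_unique hn0 hyu hyc))
      rw [hbz, mul_zero]
  -- the cost bound
  · have hcost : BCost γ = ∑ e ∈ E, y e.1 e.2 := by
      unfold BCost
      rw [intervalIntegral.integral_congr (fun x₁ hx₁ => intervalIntegral.integral_congr
        (fun y₁ _ => key_inner x₁ y₁ (by
          rw [Set.uIcc_of_le (by norm_num : (0:ℝ) ≤ 1)] at hx₁
          exact hx₁.2)))]
      have inner_eq : ∀ x₁ : ℝ,
          (∫ y₁ in (0:ℝ)..1, ∑ e ∈ E, y e.1 e.2 * bump n f e.1.1 e.1.2 x₁ y₁)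
            = ∑ e ∈ E, y e.1 e.2 * ∫ y₁ in (0:ℝ)..1, bump n f e.1.1 e.1.2 x₁ y₁ := by
        intro x₁
        have ii1 : ∀ e ∈ E, IntervalIntegrable
            (fun y₁ => y e.1 e.2 * bump n f e.1.1 e.1.2 x₁ y₁) volume 0 1 :=
          fun e _ => (bump_ii_snd hfcont e.1.1 e.1.2 x₁ 0 1).const_mul (y e.1 e.2)
        rw [intervalIntegral.integral_finset_sum ii1]
        exact Finset.sum_congr rfl (fun e _ => intervalIntegral.integral_const_mul _ _)
      rw [intervalIntegral.integral_congr (fun x₁ _ => inner_eq x₁)]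
      have ii2 : ∀ e ∈ E, IntervalIntegrable
          (fun x₁ => y e.1 e.2 * ∫ y₁ in (0:ℝ)..1, bump n f e.1.1 e.1.2 x₁ y₁)
            volume 0 1 := fun e _ =>
        (bump_pii_snd hfcont e.1.1 e.1.2 (by norm_num : (0:ℝ) ≤ 1) 0 1).const_mul
          (y e.1 e.2)
      rw [intervalIntegral.integral_finset_sum ii2]
      refine Finset.sum_congr rfl (fun e _ => ?_)
      rw [intervalIntegral.integral_const_mul,
        mass_xy hfcont hn0 (cL_nonneg _) (cR_le_one hn0 _)
          (cL_nonneg _) (cR_le_one hn0 _), mul_one]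
    rw [hcost]
    apply le_of_eq
    rw [hE, Finset.sum_filter, ← Finset.univ_product_univ, Finset.sum_product]
    refine Finset.sum_congr rfl fun u _ => ?_
    rw [Finset.sum_filter]
end

section
/- Near-optimality of grid auctions: let φ : [0,1]² → ℝ be Lipschitz continuous and strictly positive, and let f, g be marginal profit contribution functions for φ with values in [0,1]. There exists a constant c (depending only on φ) such that for every n ∈ ℕ, n ≥ 2, there is a valid allocation pair (α,β) in which α and β are constant on each interval [k/n, (k+1)/n), k = 0,…,n−1, whose profit satisfies Profit(α,β,φ) ≥ sup{ Profit(α',β',φ) : (α',β') a valid allocation pair } − c/n. -/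
open MeasureTheory
open Set

/-- `f, g` are marginal profit contribution functions for `φ`. -/
def IsMPC (φ f g : ℝ → ℝ → ℝ) : Prop :=
  Measurable (fun p : ℝ × ℝ => f p.1 p.2) ∧
  Measurable (fun p : ℝ × ℝ => g p.1 p.2) ∧
  (∀ x y, 0 ≤ f x y) ∧ (∀ x y, 0 ≤ g x y) ∧
  (∀ x ∈ Set.Icc (0:ℝ) 1, ∀ y ∈ Set.Icc (0:ℝ) 1,
    (∫ t in x..1, f t y) = sSup ((fun x' => RevF φ x' y) '' Set.Icc x 1)) ∧
  (∀ x ∈ Set.Icc (0:ℝ) 1, ∀ y ∈ Set.Icc (0:ℝ) 1,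
    (∫ t in y..1, g x t) = sSup ((fun y' => RevG φ x y') '' Set.Icc y 1))

noncomputable def Fd (h : ℝ → ℝ → ℝ) (x y : ℝ) : ℝ := ∫ t in x..1, h t y

-- interval integrability of a bounded measurable function
lemma II_of_bdd {h : ℝ → ℝ} {C a b : ℝ} (hm : Measurable h) (hb : ∀ x, |h x| ≤ C) :
    IntervalIntegrable h volume a b := by
  rw [intervalIntegrable_iff]
  refine Integrable.mono' (g := fun _ => C) ?_ hm.aestronglyMeasurable ?_
  · exact integrableOn_const measure_Ioc_lt_top.ne
  · exact Filter.Eventually.of_forall fun x => (Real.norm_eq_abs _ ▸ hb x)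

-- continuity of φ sections gives interval integrability
lemma II_of_contOn {h : ℝ → ℝ} {a b : ℝ} (hc : ContinuousOn h (Icc 0 1))
    (ha : a ∈ Icc (0:ℝ) 1) (hb : b ∈ Icc (0:ℝ) 1) :
    IntervalIntegrable h volume a b := by
  apply (hc.mono ?_).intervalIntegrable
  rw [uIcc_eq_union]
  refine union_subset (Icc_subset_Icc ha.1 hb.2) (Icc_subset_Icc hb.1 ha.2)

section aux

variable {ψ h : ℝ → ℝ → ℝ} {M Kr : ℝ}

-- A2 : RevF bound
lemma revF_bound (Hbd : ∀ x ∈ Icc (0:ℝ) 1, ∀ y ∈ Icc (0:ℝ) 1, |ψ x y| ≤ M)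
    {x y : ℝ} (hx : x ∈ Icc (0:ℝ) 1) (hy : y ∈ Icc (0:ℝ) 1) : |RevF ψ x y| ≤ M := by
  have hM : 0 ≤ M := le_trans (abs_nonneg _) (Hbd 0 (by norm_num) 0 (by norm_num))
  obtain ⟨hx0, hx1⟩ := hx
  have h1 : |∫ t in x..1, ψ t y| ≤ M * |1 - x| := by
    rw [← Real.norm_eq_abs]
    apply intervalIntegral.norm_integral_le_of_norm_le_const
    intro t ht
    rw [uIoc_of_le hx1] at ht
    rw [Real.norm_eq_abs]
    exact Hbd t ⟨le_trans hx0 ht.1.le, ht.2⟩ y hy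
  have h2 : |1 - x| ≤ 1 := by rw [abs_le]; constructor <;> linarith
  calc |RevF ψ x y| = |x| * |∫ t in x..1, ψ t y| := abs_mul _ _
    _ ≤ 1 * (M * 1) := by
        apply mul_le_mul (abs_le.2 ⟨by linarith, hx1⟩) ?_ (abs_nonneg _) one_pos.le
        exact le_trans h1 (by nlinarith [abs_nonneg (1-x)])
    _ = M := by ring


-- A3 : RevF Lipschitz in x
lemma revF_lipx (Hbd : ∀ x ∈ Icc (0:ℝ) 1, ∀ y ∈ Icc (0:ℝ) 1, |ψ x y| ≤ M)
    (Hcx : ∀ y ∈ Icc (0:ℝ) 1, ContinuousOn (fun t => ψ t y) (Icc 0 1))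
    {x x' y : ℝ} (hx : x ∈ Icc (0:ℝ) 1) (hx' : x' ∈ Icc (0:ℝ) 1) (hy : y ∈ Icc (0:ℝ) 1) :
    |RevF ψ x y - RevF ψ x' y| ≤ 2 * M * |x - x'| := by
  have hM : 0 ≤ M := le_trans (abs_nonneg _) (Hbd 0 (by norm_num) 0 (by norm_num))
  have hone : (1:ℝ) ∈ Icc (0:ℝ) 1 := by norm_num
  have hadd : (∫ t in x..x', ψ t y) + (∫ t in x'..1, ψ t y) = ∫ t in x..1, ψ t y :=
    intervalIntegral.integral_add_adjacent_intervals
      (II_of_contOn (Hcx y hy) hx hx') (II_of_contOn (Hcx y hy) hx' hone)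
  have key : RevF ψ x y - RevF ψ x' y
      = (x - x') * (∫ t in x..1, ψ t y) + x' * (∫ t in x..x', ψ t y) := by
    simp only [RevF]
    rw [← hadd]; ring
  have b1 : |∫ t in x..1, ψ t y| ≤ M := by
    rw [← Real.norm_eq_abs]
    have := intervalIntegral.norm_integral_le_of_norm_le_const (C := M) (a := x) (b := 1)
      (f := fun t => ψ t y) ?_
    · calc ‖∫ t in x..1, ψ t y‖ ≤ M * |1 - x| := this
        _ ≤ M * 1 := by
            apply mul_le_mul_of_nonneg_left _ hM
            rw [abs_le]; constructor <;> [linarith [hx.2]; linarith [hx.1]]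
        _ = M := mul_one M
    · intro t ht
      rw [uIoc_of_le hx.2] at ht
      rw [Real.norm_eq_abs]
      exact Hbd t ⟨le_trans hx.1 ht.1.le, ht.2⟩ y hy
  have b2 : |∫ t in x..x', ψ t y| ≤ M * |x' - x| := by
    rw [← Real.norm_eq_abs]
    apply intervalIntegral.norm_integral_le_of_norm_le_const
    intro t ht
    rw [Real.norm_eq_abs]
    have ht' : t ∈ Icc (0:ℝ) 1 := by
      rcases ht with ⟨h1, h2⟩
      constructor
      · exact le_trans (le_min hx.1 hx'.1) (le_of_lt (by simpa [min_comm] using h1))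
      · exact le_trans (by simpa [max_comm] using h2) (max_le hx.2 hx'.2)
    exact Hbd t ht' y hy
  rw [key]
  calc |(x - x') * (∫ t in x..1, ψ t y) + x' * (∫ t in x..x', ψ t y)|
      ≤ |(x - x') * (∫ t in x..1, ψ t y)| + |x' * (∫ t in x..x', ψ t y)| := abs_add_le _ _
    _ = |x - x'| * |∫ t in x..1, ψ t y| + |x'| * |∫ t in x..x', ψ t y| := by
        rw [abs_mul, abs_mul]
    _ ≤ |x - x'| * M + 1 * (M * |x' - x|) := by
        apply add_le_add
        · exact mul_le_mul_of_nonneg_left b1 (abs_nonneg _)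
        · exact mul_le_mul (abs_le.2 ⟨by linarith [hx'.1], hx'.2⟩) b2 (abs_nonneg _) one_pos.le
    _ = 2 * M * |x - x'| := by rw [abs_sub_comm x' x]; ring

-- A4 : RevF Lipschitz in y
lemma revF_lipy
    (Hcx : ∀ y ∈ Icc (0:ℝ) 1, ContinuousOn (fun t => ψ t y) (Icc 0 1))
    (Hly : ∀ t ∈ Icc (0:ℝ) 1, ∀ y ∈ Icc (0:ℝ) 1, ∀ y' ∈ Icc (0:ℝ) 1,
      |ψ t y - ψ t y'| ≤ Kr * |y - y'|)
    {x y y' : ℝ} (hx : x ∈ Icc (0:ℝ) 1) (hy : y ∈ Icc (0:ℝ) 1) (hy' : y' ∈ Icc (0:ℝ) 1) :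
    |RevF ψ x y - RevF ψ x y'| ≤ Kr * |y - y'| := by
  have hone : (1:ℝ) ∈ Icc (0:ℝ) 1 := by norm_num
  have hKd : 0 ≤ Kr * |y - y'| := by
    by_cases hyy : y = y'
    · simp [hyy]
    · have := Hly 0 (by norm_num) y hy y' hy'
      have h2 : 0 < |y - y'| := abs_pos.2 (sub_ne_zero.2 hyy)
      nlinarith [abs_nonneg (ψ 0 y - ψ 0 y')]
  have hsub : (∫ t in x..1, ψ t y) - (∫ t in x..1, ψ t y')
      = ∫ t in x..1, (ψ t y - ψ t y') := by
    rw [intervalIntegral.integral_sub (II_of_contOn (Hcx y hy) hx hone)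
      (II_of_contOn (Hcx y' hy') hx hone)]
  have hb : |∫ t in x..1, (ψ t y - ψ t y')| ≤ (Kr * |y - y'|) * |1 - x| := by
    rw [← Real.norm_eq_abs]
    apply intervalIntegral.norm_integral_le_of_norm_le_const
    intro t ht
    rw [uIoc_of_le hx.2] at ht
    rw [Real.norm_eq_abs]
    exact Hly t ⟨le_trans hx.1 ht.1.le, ht.2⟩ y hy y' hy'
  have key : RevF ψ x y - RevF ψ x y' = x * ∫ t in x..1, (ψ t y - ψ t y') := by
    simp only [RevF]; rw [← hsub]; ring
  rw [key, abs_mul]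
  calc |x| * |∫ t in x..1, (ψ t y - ψ t y')| ≤ 1 * ((Kr * |y - y'|) * 1) := by
        apply mul_le_mul (abs_le.2 ⟨by linarith [hx.1], hx.2⟩) ?_ (abs_nonneg _) one_pos.le
        refine le_trans hb ?_
        apply mul_le_mul_of_nonneg_left _ hKd
        rw [abs_le]; constructor <;> [linarith [hx.2]; linarith [hx.1]]
    _ = Kr * |y - y'| := by ring

-- A5 : RevF continuous in x on [0,1]
lemma revF_contx (Hbd : ∀ x ∈ Icc (0:ℝ) 1, ∀ y ∈ Icc (0:ℝ) 1, |ψ x y| ≤ M)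
    (Hcx : ∀ y ∈ Icc (0:ℝ) 1, ContinuousOn (fun t => ψ t y) (Icc 0 1))
    {y : ℝ} (hy : y ∈ Icc (0:ℝ) 1) :
    ContinuousOn (fun x => RevF ψ x y) (Icc 0 1) := by
  have hM : 0 ≤ M := le_trans (abs_nonneg _) (Hbd 0 (by norm_num) 0 (by norm_num))
  have : LipschitzOnWith (Real.toNNReal (2*M)) (fun x => RevF ψ x y) (Icc 0 1) := by
    rw [lipschitzOnWith_iff_dist_le_mul]
    intro a ha b hb
    rw [Real.dist_eq, Real.dist_eq]
    calc |RevF ψ a y - RevF ψ b y| ≤ 2 * M * |a - b| := revF_lipx Hbd Hcx ha hb hy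
      _ = (Real.toNNReal (2*M) : ℝ) * |a - b| := by
          rw [Real.coe_toNNReal _ (by linarith)]
  exact this.continuousOn


-- A6 : h sections interval integrable anywhere
lemma hsec_II (hmeas : Measurable (fun p : ℝ × ℝ => h p.1 p.2))
    (h0 : ∀ x y, 0 ≤ h x y) (h1 : ∀ x y, h x y ≤ 1) (y a b : ℝ) :
    IntervalIntegrable (fun t => h t y) volume a b := by
  apply II_of_bdd (C := 1)
  · exact hmeas.comp (measurable_id.prodMk measurable_const)
  · intro t; rw [abs_le]; exact ⟨by linarith [h0 t y], h1 t y⟩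

-- A7a : difference of Fd
lemma Fd_diff (hmeas : Measurable (fun p : ℝ × ℝ => h p.1 p.2))
    (h0 : ∀ x y, 0 ≤ h x y) (h1 : ∀ x y, h x y ≤ 1)
    {x x' : ℝ} (y : ℝ) (hxx : x ≤ x') :
    0 ≤ Fd h x y - Fd h x' y ∧ Fd h x y - Fd h x' y ≤ x' - x := by
  have hadd : (∫ t in x..x', h t y) + (∫ t in x'..1, h t y) = ∫ t in x..1, h t y :=
    intervalIntegral.integral_add_adjacent_intervals
      (hsec_II hmeas h0 h1 y x x') (hsec_II hmeas h0 h1 y x' 1)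
  have key : Fd h x y - Fd h x' y = ∫ t in x..x', h t y := by
    simp only [Fd]; rw [← hadd]; ring
  constructor
  · rw [key]
    exact intervalIntegral.integral_nonneg hxx (fun t _ => h0 t y)
  · rw [key]
    calc (∫ t in x..x', h t y) ≤ ∫ _t in x..x', (1:ℝ) :=
          intervalIntegral.integral_mono_on hxx (hsec_II hmeas h0 h1 y x x')
            intervalIntegrable_const (fun t _ => h1 t y)
      _ = x' - x := by simp

-- A7b : Fd Lipschitz (hence continuous) in x
lemma Fd_contx (hmeas : Measurable (fun p : ℝ × ℝ => h p.1 p.2))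
    (h0 : ∀ x y, 0 ≤ h x y) (h1 : ∀ x y, h x y ≤ 1) (y : ℝ) :
    Continuous (fun x => Fd h x y) := by
  have : LipschitzWith 1 (fun x => Fd h x y) := by
    apply LipschitzWith.of_dist_le_mul
    intro a b
    rw [Real.dist_eq, Real.dist_eq, NNReal.coe_one, one_mul]
    rcases le_total a b with hab | hab
    · obtain ⟨hl, hr⟩ := Fd_diff hmeas h0 h1 y hab
      rw [abs_le]
      exact ⟨by linarith [abs_nonneg (a-b)], by linarith [neg_abs_le (a-b)]⟩
    · obtain ⟨hl, hr⟩ := Fd_diff hmeas h0 h1 y hab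
      rw [abs_sub_comm, abs_le]
      exact ⟨by linarith [abs_nonneg (a-b)], by linarith [le_abs_self (a-b)]⟩
  exact this.continuous

-- A7c : joint measurability of Fd
lemma Fd_meas (hmeas : Measurable (fun p : ℝ × ℝ => h p.1 p.2))
    (h0 : ∀ x y, 0 ≤ h x y) (h1 : ∀ x y, h x y ≤ 1) :
    Measurable (fun p : ℝ × ℝ => Fd h p.1 p.2) := by
  have h2 : ∀ x, Measurable (fun y => Fd h x y) := by
    intro x
    have hm1 : Measurable (fun y => ∫ t in Ioc x 1, h t y) := by
      have : StronglyMeasurable (fun p : ℝ × ℝ => h p.2 p.1) :=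
        (hmeas.comp measurable_swap).stronglyMeasurable
      exact (MeasureTheory.StronglyMeasurable.integral_prod_right'
        (ν := volume.restrict (Ioc x 1)) this).measurable
    have hm2 : Measurable (fun y => ∫ t in Ioc 1 x, h t y) := by
      have : StronglyMeasurable (fun p : ℝ × ℝ => h p.2 p.1) :=
        (hmeas.comp measurable_swap).stronglyMeasurable
      exact (MeasureTheory.StronglyMeasurable.integral_prod_right'
        (ν := volume.restrict (Ioc 1 x)) this).measurable
    have : (fun y => Fd h x y)
        = fun y => (∫ t in Ioc x 1, h t y) - (∫ t in Ioc 1 x, h t y) := by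
      funext y; rfl
    rw [this]
    exact hm1.sub hm2
  exact measurable_uncurry_of_continuous_of_measurable
    (fun y => Fd_contx hmeas h0 h1 y) h2

-- A7d : Fd bounds on [0,1]
lemma Fd_bounds (hmeas : Measurable (fun p : ℝ × ℝ => h p.1 p.2))
    (h0 : ∀ x y, 0 ≤ h x y) (h1 : ∀ x y, h x y ≤ 1)
    {x : ℝ} (hx : x ∈ Icc (0:ℝ) 1) (y : ℝ) : 0 ≤ Fd h x y ∧ Fd h x y ≤ 1 := by
  have h10 : Fd h 1 y = 0 := by simp [Fd]
  obtain ⟨hl, hr⟩ := Fd_diff hmeas h0 h1 (x := x) (x' := 1) y hx.2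
  rw [h10] at hl hr
  exact ⟨by linarith, by linarith [hx.1]⟩


-- bddAbove of RevF image
lemma revF_image_bdd (Hbd : ∀ x ∈ Icc (0:ℝ) 1, ∀ y ∈ Icc (0:ℝ) 1, |ψ x y| ≤ M)
    {v y : ℝ} (hv : v ∈ Icc (0:ℝ) 1) (hy : y ∈ Icc (0:ℝ) 1) :
    BddAbove ((fun x' => RevF ψ x' y) '' Icc v 1) := by
  refine ⟨M, ?_⟩
  rintro r ⟨a, ha, rfl⟩
  have ha' : a ∈ Icc (0:ℝ) 1 := ⟨le_trans hv.1 ha.1, ha.2⟩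
  exact le_trans (le_abs_self _) (revF_bound Hbd ha' hy)

-- A9 : pointwise RevF ≤ Fd
lemma revF_le_Fd (Hbd : ∀ x ∈ Icc (0:ℝ) 1, ∀ y ∈ Icc (0:ℝ) 1, |ψ x y| ≤ M)
    (HF : ∀ x ∈ Icc (0:ℝ) 1, ∀ y ∈ Icc (0:ℝ) 1,
      (∫ t in x..1, h t y) = sSup ((fun x' => RevF ψ x' y) '' Icc x 1))
    {v w y : ℝ} (hv : v ∈ Icc (0:ℝ) 1) (hy : y ∈ Icc (0:ℝ) 1) (hw : w ∈ Icc v 1) :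
    RevF ψ w y ≤ Fd h v y := by
  have : Fd h v y = sSup ((fun x' => RevF ψ x' y) '' Icc v 1) := HF v hv y hy
  rw [this]
  exact le_csSup (revF_image_bdd Hbd hv hy) ⟨w, hw, rfl⟩

-- A10 : attainment of the max
lemma Fd_attained (Hbd : ∀ x ∈ Icc (0:ℝ) 1, ∀ y ∈ Icc (0:ℝ) 1, |ψ x y| ≤ M)
    (Hcx : ∀ y ∈ Icc (0:ℝ) 1, ContinuousOn (fun t => ψ t y) (Icc 0 1))
    (HF : ∀ x ∈ Icc (0:ℝ) 1, ∀ y ∈ Icc (0:ℝ) 1,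
      (∫ t in x..1, h t y) = sSup ((fun x' => RevF ψ x' y) '' Icc x 1))
    {B y : ℝ} (hB : B ∈ Icc (0:ℝ) 1) (hy : y ∈ Icc (0:ℝ) 1) :
    ∃ xs ∈ Icc B 1, Fd h B y = RevF ψ xs y := by
  have hne : (Icc B 1).Nonempty := Set.nonempty_Icc.2 hB.2
  have hcont : ContinuousOn (fun x => RevF ψ x y) (Icc B 1) :=
    (revF_contx Hbd Hcx hy).mono (Icc_subset_Icc hB.1 le_rfl)
  obtain ⟨xs, hxs, hmax⟩ := isCompact_Icc.exists_isMaxOn hne hcont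
  refine ⟨xs, hxs, ?_⟩
  have hFB : Fd h B y = sSup ((fun x' => RevF ψ x' y) '' Icc B 1) := HF B hB y hy
  rw [hFB]
  apply IsGreatest.csSup_eq
  constructor
  · exact ⟨xs, hxs, rfl⟩
  · rintro r ⟨a, ha, rfl⟩
    exact hmax ha

-- A8 : Fd Lipschitz in y on the square
lemma Fd_lipy (Hbd : ∀ x ∈ Icc (0:ℝ) 1, ∀ y ∈ Icc (0:ℝ) 1, |ψ x y| ≤ M)
    (Hcx : ∀ y ∈ Icc (0:ℝ) 1, ContinuousOn (fun t => ψ t y) (Icc 0 1))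
    (Hly : ∀ t ∈ Icc (0:ℝ) 1, ∀ y ∈ Icc (0:ℝ) 1, ∀ y' ∈ Icc (0:ℝ) 1,
      |ψ t y - ψ t y'| ≤ Kr * |y - y'|)
    (HF : ∀ x ∈ Icc (0:ℝ) 1, ∀ y ∈ Icc (0:ℝ) 1,
      (∫ t in x..1, h t y) = sSup ((fun x' => RevF ψ x' y) '' Icc x 1))
    {x y y' : ℝ} (hx : x ∈ Icc (0:ℝ) 1) (hy : y ∈ Icc (0:ℝ) 1) (hy' : y' ∈ Icc (0:ℝ) 1) :
    |Fd h x y - Fd h x y'| ≤ Kr * |y - y'| := by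
  have key : ∀ z ∈ Icc (0:ℝ) 1, ∀ z' ∈ Icc (0:ℝ) 1,
      Fd h x z - Fd h x z' ≤ Kr * |z - z'| := by
    intro z hz z' hz'
    obtain ⟨xs, hxs, hattain⟩ := Fd_attained Hbd Hcx HF hx hz
    have hxs' : xs ∈ Icc (0:ℝ) 1 := ⟨le_trans hx.1 hxs.1, hxs.2⟩
    have h1 : RevF ψ xs z ≤ RevF ψ xs z' + Kr * |z - z'| := by
      have := revF_lipy Hcx Hly hxs' hz hz'
      have := le_abs_self (RevF ψ xs z - RevF ψ xs z')
      linarith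
    have h2 : RevF ψ xs z' ≤ Fd h x z' := revF_le_Fd Hbd HF hx hz' hxs
    rw [hattain]; linarith
  have h1 := key y hy y' hy'
  have h2 := key y' hy' y hy
  rw [abs_sub_comm y' y] at h2
  rw [abs_le]; exact ⟨by linarith, h1⟩


-- integrability of y ↦ Fd h (v y) y
lemma Fd_comp_II (hmeas : Measurable (fun p : ℝ × ℝ => h p.1 p.2))
    (h0 : ∀ x y, 0 ≤ h x y) (h1 : ∀ x y, h x y ≤ 1)
    {v : ℝ → ℝ} (hvm : Measurable v) (hvI : ∀ y, v y ∈ Icc (0:ℝ) 1) (a b : ℝ) :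
    IntervalIntegrable (fun y => Fd h (v y) y) volume a b := by
  apply II_of_bdd (C := 1)
  · have h2 : Measurable (fun y : ℝ => (v y, y)) := hvm.prodMk measurable_id
    have h3 := (Fd_meas hmeas h0 h1).comp h2
    simp only [Function.comp_def] at h3
    exact h3
  · intro y
    obtain ⟨hl, hr⟩ := Fd_bounds hmeas h0 h1 (hvI y) y
    rw [abs_le]; exact ⟨by linarith, hr⟩

-- UB lemma : one side of the profit is at most the Fd-integral
set_option maxHeartbeats 1000000 in
lemma profit_side_ub (Hbd : ∀ x ∈ Icc (0:ℝ) 1, ∀ y ∈ Icc (0:ℝ) 1, |ψ x y| ≤ M)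
    (hmeas : Measurable (fun p : ℝ × ℝ => h p.1 p.2))
    (h0 : ∀ x y, 0 ≤ h x y) (h1 : ∀ x y, h x y ≤ 1)
    (HF : ∀ x ∈ Icc (0:ℝ) 1, ∀ y ∈ Icc (0:ℝ) 1,
      (∫ t in x..1, h t y) = sSup ((fun x' => RevF ψ x' y) '' Icc x 1))
    {v w : ℝ → ℝ} (hvm : Measurable v) (hvI : ∀ y, v y ∈ Icc (0:ℝ) 1)
    (hw : ∀ y ∈ Icc (0:ℝ) 1, w y ∈ Icc (v y) 1) :
    (∫ y in (0:ℝ)..1, RevF ψ (w y) y) ≤ ∫ y in (0:ℝ)..1, Fd h (v y) y := by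
  have hRint : IntervalIntegrable (fun y => Fd h (v y) y) volume 0 1 :=
    Fd_comp_II hmeas h0 h1 hvm hvI 0 1
  by_cases hL : IntervalIntegrable (fun y => RevF ψ (w y) y) volume 0 1
  · apply intervalIntegral.integral_mono_on (by norm_num) hL hRint
    intro y hy
    exact revF_le_Fd Hbd HF (hvI y) hy (hw y hy)
  · rw [intervalIntegral.integral_undef hL]
    apply intervalIntegral.integral_nonneg (by norm_num)
    intro y _
    exact (Fd_bounds hmeas h0 h1 (hvI y) y).1


-- RevF continuous in y on [0,1]
lemma revF_conty
    (Hcx : ∀ y ∈ Icc (0:ℝ) 1, ContinuousOn (fun t => ψ t y) (Icc 0 1))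
    (Hly : ∀ t ∈ Icc (0:ℝ) 1, ∀ y ∈ Icc (0:ℝ) 1, ∀ y' ∈ Icc (0:ℝ) 1,
      |ψ t y - ψ t y'| ≤ Kr * |y - y'|)
    (hKr : 0 ≤ Kr) {a : ℝ} (ha : a ∈ Icc (0:ℝ) 1) :
    ContinuousOn (fun y => RevF ψ a y) (Icc 0 1) := by
  have : LipschitzOnWith (Real.toNNReal Kr) (fun y => RevF ψ a y) (Icc 0 1) := by
    rw [lipschitzOnWith_iff_dist_le_mul]
    intro z hz z' hz'
    rw [Real.dist_eq, Real.dist_eq]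
    calc |RevF ψ a z - RevF ψ a z'| ≤ Kr * |z - z'| := revF_lipy Hcx Hly ha hz hz'
      _ = (Real.toNNReal Kr : ℝ) * |z - z'| := by rw [Real.coe_toNNReal _ hKr]
  exact this.continuousOn

-- the side approximation lemma
lemma side_approx (Hbd : ∀ x ∈ Icc (0:ℝ) 1, ∀ y ∈ Icc (0:ℝ) 1, |ψ x y| ≤ M)
    (Hcx : ∀ y ∈ Icc (0:ℝ) 1, ContinuousOn (fun t => ψ t y) (Icc 0 1))
    (Hly : ∀ t ∈ Icc (0:ℝ) 1, ∀ y ∈ Icc (0:ℝ) 1, ∀ y' ∈ Icc (0:ℝ) 1,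
      |ψ t y - ψ t y'| ≤ Kr * |y - y'|)
    (hKr : 0 ≤ Kr)
    (hmeas : Measurable (fun p : ℝ × ℝ => h p.1 p.2))
    (h0 : ∀ x y, 0 ≤ h x y) (h1 : ∀ x y, h x y ≤ 1)
    (HF : ∀ x ∈ Icc (0:ℝ) 1, ∀ y ∈ Icc (0:ℝ) 1,
      (∫ t in x..1, h t y) = sSup ((fun x' => RevF ψ x' y) '' Icc x 1))
    {u : ℝ → ℝ} (hum : Monotone u) (huI : ∀ y, u y ∈ Icc (0:ℝ) 1)
    {n : ℕ} (hn : 0 < n) :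
    ∃ A : ℕ → ℝ,
      (∀ k, k < n → A k ∈ Icc (0:ℝ) 1) ∧
      (∀ k, k < n → ∃ m : ℤ, A k = (m : ℝ) / n) ∧
      (∀ k, k < n → min 1 (u (((k:ℝ)+1)/n) + 1/n) ≤ A k) ∧
      (∫ y in (0:ℝ)..1, Fd h (u y) y)
        ≤ (∑ k ∈ Finset.range n, ∫ y in ((k:ℝ)/n)..(((k:ℝ)+1)/n), RevF ψ (A k) y)
          + (2 + 2*Kr + 2*M)/n := by
  have hM : 0 ≤ M := le_trans (abs_nonneg _) (Hbd 0 (by norm_num) 0 (by norm_num))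
  have hn' : (0:ℝ) < n := by exact_mod_cast hn
  set B : ℕ → ℝ := fun k => min 1 (u (((k:ℝ)+1)/n) + 1/n) with hBdef
  have hBI : ∀ k, B k ∈ Icc (0:ℝ) 1 := by
    intro k
    constructor
    · apply le_min (by norm_num)
      have := (huI (((k:ℝ)+1)/n)).1
      positivity
    · exact min_le_left _ _
  have hex : ∀ k : ℕ, ∃ xv, xv ∈ Icc (B k) 1 ∧
      (k < n → Fd h (B k) ((k:ℝ)/n) = RevF ψ xv ((k:ℝ)/n)) := by
    intro k
    by_cases hk : k < n
    · have hkn : ((k:ℝ)/n) ∈ Icc (0:ℝ) 1 := by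
        constructor
        · positivity
        · rw [div_le_one hn']; exact_mod_cast hk.le
      obtain ⟨xv, hx1, hx2⟩ := Fd_attained Hbd Hcx HF (hBI k) hkn
      exact ⟨xv, hx1, fun _ => hx2⟩
    · exact ⟨1, ⟨(hBI k).2, le_rfl⟩, fun hc => absurd hc hk⟩
  choose xs hxs1 hxs2 using hex
  have hxsI : ∀ k, xs k ∈ Icc (0:ℝ) 1 := fun k => ⟨le_trans (hBI k).1 (hxs1 k).1, (hxs1 k).2⟩
  set A : ℕ → ℝ := fun k => (⌈(n:ℝ) * xs k⌉ : ℝ) / n with hAdef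
  have hA1 : ∀ k, xs k ≤ A k := by
    intro k
    rw [hAdef, le_div_iff₀ hn', mul_comm]
    exact Int.le_ceil _
  have hA2 : ∀ k, A k ≤ xs k + 1/n := by
    intro k
    rw [hAdef, div_le_iff₀ hn']
    have := Int.ceil_lt_add_one ((n:ℝ) * xs k)
    have h1n : (1:ℝ)/n * n = 1 := by field_simp
    nlinarith [this]
  have hAI : ∀ k, A k ∈ Icc (0:ℝ) 1 := by
    intro k
    constructor
    · exact le_trans (hxsI k).1 (hA1 k)
    · rw [hAdef, div_le_one hn']
      have : (⌈(n:ℝ) * xs k⌉ : ℝ) ≤ ((n:ℤ) : ℝ) := by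
        exact_mod_cast Int.ceil_le.2 (by push_cast; nlinarith [(hxsI k).2, hn'.le])
      simpa using this
  refine ⟨A, fun k _ => hAI k, fun k _ => ⟨⌈(n:ℝ) * xs k⌉, rfl⟩,
    fun k _ => le_trans (hxs1 k).1 (hA1 k), ?_⟩
  -- the integral inequality
  have humeas : Measurable u := hum.measurable
  have cellII : ∀ k : ℕ, IntervalIntegrable (fun y => Fd h (u y) y) volume
      ((k:ℝ)/n) (((k:ℝ)+1)/n) := fun k => Fd_comp_II hmeas h0 h1 humeas huI _ _
  have hsplit : (∫ y in (0:ℝ)..1, Fd h (u y) y)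
      = ∑ k ∈ Finset.range n, ∫ y in ((k:ℝ)/n)..(((k:ℝ)+1)/n), Fd h (u y) y := by
    have key := intervalIntegral.sum_integral_adjacent_intervals
      (a := fun k : ℕ => (k:ℝ)/n) (μ := volume) (f := fun y => Fd h (u y) y)
      (n := n) ?_
    · have e0 : ((0:ℕ):ℝ)/(n:ℝ) = (0:ℝ) := by norm_num
      have e1 : ((n:ℕ):ℝ)/(n:ℝ) = (1:ℝ) := by field_simp
      rw [e0, e1] at key
      rw [← key]
      apply Finset.sum_congr rfl
      intro k _
      congr 1
      push_cast
      ring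
    · intro k _
      have := cellII k
      convert this using 2
      push_cast
      ring
  rw [hsplit]
  -- per-cell bound
  have cellbound : ∀ k ∈ Finset.range n,
      (∫ y in ((k:ℝ)/n)..(((k:ℝ)+1)/n), Fd h (u y) y)
        ≤ (∫ y in ((k:ℝ)/n)..(((k:ℝ)+1)/n), RevF ψ (A k) y)
          + ((B k - u ((k:ℝ)/n)) * (1/n) + (2*Kr + 2*M)/n * (1/n)) := by
    intro k hk
    rw [Finset.mem_range] at hk
    have hkn : ((k:ℝ)/n) ∈ Icc (0:ℝ) 1 := by
      constructor
      · positivity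
      · rw [div_le_one hn']; exact_mod_cast hk.le
    have hkn1 : (((k:ℝ)+1)/n) ∈ Icc (0:ℝ) 1 := by
      constructor
      · positivity
      · rw [div_le_one hn']
        have hc : ((k:ℝ)+1) = ((k+1 : ℕ) : ℝ) := by push_cast; ring
        rw [hc]; exact_mod_cast hk
    have hstep : ((k:ℝ)+1)/n = (k:ℝ)/n + 1/n := by ring
    have hinv : (0:ℝ) ≤ 1/n := by positivity
    have hcell_le : ((k:ℝ)/n) ≤ (((k:ℝ)+1)/n) := by rw [hstep]; linarith
    have hIcc_sub : Icc ((k:ℝ)/n) (((k:ℝ)+1)/n) ⊆ Icc (0:ℝ) 1 :=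
      Icc_subset_Icc hkn.1 hkn1.2
    have hBu : u ((k:ℝ)/n) ≤ B k := by
      apply le_min (huI _).2
      have := hum hcell_le
      linarith
    have hpoint : ∀ y ∈ Icc ((k:ℝ)/n) (((k:ℝ)+1)/n),
        Fd h (u y) y ≤ RevF ψ (A k) y + ((B k - u ((k:ℝ)/n)) + (2*Kr + 2*M)*(1/n)) := by
      intro y hy
      have hyI : y ∈ Icc (0:ℝ) 1 := hIcc_sub hy
      have e1 := (Fd_diff hmeas h0 h1 (x := u ((k:ℝ)/n)) (x' := u y) y (hum hy.1)).1
      have e2 := (Fd_diff hmeas h0 h1 (x := u ((k:ℝ)/n)) (x' := B k) y hBu).2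
      have e3 : |Fd h (B k) y - Fd h (B k) ((k:ℝ)/n)| ≤ Kr * |y - (k:ℝ)/n| :=
        Fd_lipy Hbd Hcx Hly HF (hBI k) hyI hkn
      have hdist : |y - (k:ℝ)/n| ≤ 1/n := by
        rw [abs_le]
        rw [hstep] at hy
        constructor <;> [linarith [hy.1]; linarith [hy.2]]
      have e3' : Fd h (B k) y ≤ Fd h (B k) ((k:ℝ)/n) + Kr * (1/n) := by
        have ha := le_abs_self (Fd h (B k) y - Fd h (B k) ((k:ℝ)/n))
        have hb : Kr * |y - (k:ℝ)/n| ≤ Kr * (1/n) := mul_le_mul_of_nonneg_left hdist hKr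
        linarith
      have e4 : Fd h (B k) ((k:ℝ)/n) = RevF ψ (xs k) ((k:ℝ)/n) := hxs2 k hk
      have habs : |xs k - A k| ≤ 1/n := by
        rw [abs_le]
        constructor <;> [linarith [hA2 k]; linarith [hA1 k]]
      have e5 : RevF ψ (xs k) ((k:ℝ)/n) ≤ RevF ψ (A k) ((k:ℝ)/n) + 2*M*(1/n) := by
        have h5 := revF_lipx Hbd Hcx (hxsI k) (hAI k) hkn
        have ha := le_abs_self (RevF ψ (xs k) ((k:ℝ)/n) - RevF ψ (A k) ((k:ℝ)/n))
        have hb : 2*M*|xs k - A k| ≤ 2*M*(1/n) :=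
          mul_le_mul_of_nonneg_left habs (by linarith)
        linarith
      have e6 : RevF ψ (A k) ((k:ℝ)/n) ≤ RevF ψ (A k) y + Kr * (1/n) := by
        have h6 := revF_lipy Hcx Hly (hAI k) hkn hyI
        have ha := le_abs_self (RevF ψ (A k) ((k:ℝ)/n) - RevF ψ (A k) y)
        have hd : |(k:ℝ)/n - y| ≤ 1/n := by rw [abs_sub_comm]; exact hdist
        have hb : Kr * |(k:ℝ)/n - y| ≤ Kr * (1/n) := mul_le_mul_of_nonneg_left hd hKr
        linarith
      linarith
    have hII_R : IntervalIntegrable (fun y => RevF ψ (A k) y) volume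
        ((k:ℝ)/n) (((k:ℝ)+1)/n) :=
      II_of_contOn (revF_conty Hcx Hly hKr (hAI k)) hkn hkn1
    have hmono := intervalIntegral.integral_mono_on hcell_le (cellII k)
      (hII_R.add intervalIntegrable_const) hpoint
    have hconstint : (∫ y in ((k:ℝ)/n)..(((k:ℝ)+1)/n),
        (RevF ψ (A k) y + ((B k - u ((k:ℝ)/n)) + (2*Kr + 2*M)*(1/n))))
        = (∫ y in ((k:ℝ)/n)..(((k:ℝ)+1)/n), RevF ψ (A k) y)
          + ((B k - u ((k:ℝ)/n)) * (1/n) + (2*Kr + 2*M)/n * (1/n)) := by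
      rw [intervalIntegral.integral_add hII_R intervalIntegrable_const,
        intervalIntegral.integral_const, smul_eq_mul]
      have : (((k:ℝ)+1)/n - (k:ℝ)/n) = 1/n := by rw [hstep]; ring
      rw [this]
      ring
    calc (∫ y in ((k:ℝ)/n)..(((k:ℝ)+1)/n), Fd h (u y) y)
        ≤ ∫ y in ((k:ℝ)/n)..(((k:ℝ)+1)/n),
            (RevF ψ (A k) y + ((B k - u ((k:ℝ)/n)) + (2*Kr + 2*M)*(1/n))) := hmono
      _ = _ := hconstint
  -- sum the per-cell bounds
  have hsum := Finset.sum_le_sum cellbound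
  have hdistrib : ∑ k ∈ Finset.range n,
      ((∫ y in ((k:ℝ)/n)..(((k:ℝ)+1)/n), RevF ψ (A k) y)
        + ((B k - u ((k:ℝ)/n)) * (1/n) + (2*Kr + 2*M)/n * (1/n)))
      = (∑ k ∈ Finset.range n, ∫ y in ((k:ℝ)/n)..(((k:ℝ)+1)/n), RevF ψ (A k) y)
        + ((∑ k ∈ Finset.range n, (B k - u ((k:ℝ)/n))) * (1/n)
          + (n:ℝ) * ((2*Kr + 2*M)/n * (1/n))) := by
    rw [Finset.sum_add_distrib, Finset.sum_add_distrib, ← Finset.sum_mul,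
      Finset.sum_const, Finset.card_range, nsmul_eq_mul]
  have htele : ∑ k ∈ Finset.range n, (B k - u ((k:ℝ)/n)) ≤ 2 := by
    have step1 : ∀ k ∈ Finset.range n, (B k - u ((k:ℝ)/n))
        ≤ (u (((k+1:ℕ):ℝ)/n) - u (((k:ℕ):ℝ)/n)) + 1/n := by
      intro k _
      have hmin : B k ≤ u (((k:ℝ)+1)/n) + 1/n := min_le_right _ _
      have hc : (((k+1:ℕ):ℝ)/n) = ((k:ℝ)+1)/n := by push_cast; ring
      rw [hc]
      linarith
    calc ∑ k ∈ Finset.range n, (B k - u ((k:ℝ)/n))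
        ≤ ∑ k ∈ Finset.range n, ((u (((k+1:ℕ):ℝ)/n) - u (((k:ℕ):ℝ)/n)) + 1/n) :=
          Finset.sum_le_sum step1
      _ = (u (((n:ℕ):ℝ)/n) - u (((0:ℕ):ℝ)/n)) + (n:ℝ) * (1/n) := by
          rw [Finset.sum_add_distrib, Finset.sum_range_sub (fun k : ℕ => u (((k:ℕ):ℝ)/n)),
            Finset.sum_const, Finset.card_range, nsmul_eq_mul]
      _ ≤ 2 := by
          have e1 : ((n:ℕ):ℝ)/n = (1:ℝ) := by field_simp
          have e2 : (n:ℝ) * (1/n) = 1 := by field_simp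
          rw [e1, e2]
          have := (huI 1).2
          have := (huI (((0:ℕ):ℝ)/n)).1
          linarith
  have hfinal : (∑ k ∈ Finset.range n, (B k - u ((k:ℝ)/n))) * (1/n)
      + (n:ℝ) * ((2*Kr + 2*M)/n * (1/n)) ≤ (2 + 2*Kr + 2*M)/n := by
    have e2 : (n:ℝ) * ((2*Kr + 2*M)/n * (1/n)) = (2*Kr + 2*M)/n := by field_simp
    have e3 : (∑ k ∈ Finset.range n, (B k - u ((k:ℝ)/n))) * (1/n) ≤ 2 * (1/n) :=
      mul_le_mul_of_nonneg_right htele (by positivity)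
    have e4 : (2:ℝ) * (1/n) + (2*Kr + 2*M)/n = (2 + 2*Kr + 2*M)/n := by field_simp; ring
    linarith
  calc ∑ k ∈ Finset.range n, ∫ y in ((k:ℝ)/n)..(((k:ℝ)+1)/n), Fd h (u y) y
      ≤ _ := hsum
    _ = _ := hdistrib
    _ ≤ (∑ k ∈ Finset.range n, ∫ y in ((k:ℝ)/n)..(((k:ℝ)+1)/n), RevF ψ (A k) y)
        + (2 + 2*Kr + 2*M)/n := by linarith

end aux

section step

-- the grid step function built from values A
noncomputable def stepf (A : ℕ → ℝ) (n : ℕ) : ℝ → ℝ := fun y =>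
  if 0 ≤ ⌊y * (n:ℝ)⌋ ∧ ⌊y * (n:ℝ)⌋ < (n:ℤ) then A (⌊y * (n:ℝ)⌋).toNat else 1

lemma stepf_measurable (A : ℕ → ℝ) (n : ℕ) : Measurable (stepf A n) := by
  have h1 : Measurable (fun y : ℝ => ⌊y * (n:ℝ)⌋) :=
    Int.measurable_floor.comp (measurable_id.mul_const _)
  have h2 : Measurable (fun m : ℤ =>
      if 0 ≤ m ∧ m < (n:ℤ) then A m.toNat else (1:ℝ)) := measurable_of_countable _
  exact h2.comp h1

lemma stepf_on_cell {A : ℕ → ℝ} {n k : ℕ} (hn : 0 < n) (hk : k < n)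
    {y : ℝ} (hy : y ∈ Ico ((k:ℝ)/n) (((k:ℝ)+1)/n)) : stepf A n y = A k := by
  have hn' : (0:ℝ) < n := by exact_mod_cast hn
  have hfl : ⌊y * (n:ℝ)⌋ = (k:ℤ) := by
    apply Int.floor_eq_iff.2
    constructor
    · push_cast
      calc ((k:ℝ)) = (k:ℝ)/n * n := by field_simp
        _ ≤ y * n := by
            apply mul_le_mul_of_nonneg_right hy.1 hn'.le
    · push_cast
      calc y * n < (((k:ℝ)+1)/n) * n := by
            apply mul_lt_mul_of_pos_right hy.2 hn'
        _ = (k:ℝ) + 1 := by field_simp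
  unfold stepf
  rw [hfl]
  have : (0:ℤ) ≤ (k:ℤ) ∧ (k:ℤ) < (n:ℤ) := ⟨Int.ofNat_nonneg k, by exact_mod_cast hk⟩
  rw [if_pos this]
  simp

lemma stepf_at_one {A : ℕ → ℝ} {n : ℕ} (hn : 0 < n) : stepf A n 1 = 1 := by
  have : ⌊(1:ℝ) * (n:ℝ)⌋ = (n:ℤ) := by
    rw [one_mul]
    exact_mod_cast Int.floor_natCast n
  unfold stepf
  rw [this, if_neg]
  rintro ⟨-, hc⟩
  exact lt_irrefl _ hc

lemma stepf_mem {A : ℕ → ℝ} {n : ℕ} (hA : ∀ k, k < n → A k ∈ Icc (0:ℝ) 1)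
    (y : ℝ) : stepf A n y ∈ Icc (0:ℝ) 1 := by
  unfold stepf
  split_ifs with hcond
  · apply hA
    rcases hcond with ⟨hge, hlt⟩
    omega
  · norm_num

end step

section thresh

noncomputable def bfun (β : ℝ → ℝ) (y : ℝ) : ℝ :=
  sSup (insert 0 {x | x ∈ Icc (0:ℝ) 1 ∧ β x ≤ y})

noncomputable def binvfun (β : ℝ → ℝ) (x : ℝ) : ℝ :=
  sInf (insert 1 {y | y ∈ Icc (0:ℝ) 1 ∧ x ≤ bfun β y})

lemma bfun_bddAbove (β : ℝ → ℝ) (y : ℝ) :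
    BddAbove (insert 0 {x | x ∈ Icc (0:ℝ) 1 ∧ β x ≤ y}) := by
  refine ⟨1, ?_⟩
  rintro r (rfl | ⟨hr, -⟩)
  · norm_num
  · exact hr.2

lemma bfun_mem (β : ℝ → ℝ) (y : ℝ) : bfun β y ∈ Icc (0:ℝ) 1 := by
  constructor
  · exact le_csSup (bfun_bddAbove β y) (mem_insert _ _)
  · apply csSup_le ⟨0, mem_insert _ _⟩
    rintro r (rfl | ⟨hr, -⟩)
    · norm_num
    · exact hr.2

lemma bfun_mono (β : ℝ → ℝ) : Monotone (bfun β) := by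
  intro y y' hyy
  apply csSup_le_csSup (bfun_bddAbove β y') ⟨0, mem_insert _ _⟩
  rintro r (rfl | ⟨hr1, hr2⟩)
  · exact mem_insert _ _
  · exact mem_insert_of_mem _ ⟨hr1, le_trans hr2 hyy⟩

lemma bfun_le_alpha {α β : ℝ → ℝ}
    (hv : ∀ x ∈ Icc (0:ℝ) 1, ∀ y ∈ Icc (0:ℝ) 1, β x ≤ y → x ≤ α y)
    {y : ℝ} (hy : y ∈ Icc (0:ℝ) 1) (hα0 : 0 ≤ α y) : bfun β y ≤ α y := by
  apply csSup_le ⟨0, mem_insert _ _⟩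
  rintro r (rfl | ⟨hr1, hr2⟩)
  · exact hα0
  · exact hv r hr1 y hy hr2

lemma binvfun_bddBelow (β : ℝ → ℝ) (x : ℝ) :
    BddBelow (insert 1 {y | y ∈ Icc (0:ℝ) 1 ∧ x ≤ bfun β y}) := by
  refine ⟨0, ?_⟩
  rintro r (rfl | ⟨hr, -⟩)
  · norm_num
  · exact hr.1

lemma binvfun_mem (β : ℝ → ℝ) (x : ℝ) : binvfun β x ∈ Icc (0:ℝ) 1 := by
  constructor
  · apply le_csInf ⟨1, mem_insert _ _⟩
    rintro r (rfl | ⟨hr, -⟩)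
    · norm_num
    · exact hr.1
  · exact csInf_le (binvfun_bddBelow β x) (mem_insert _ _)

lemma binvfun_mono (β : ℝ → ℝ) : Monotone (binvfun β) := by
  intro x x' hxx
  apply csInf_le_csInf (binvfun_bddBelow β x) ⟨1, mem_insert _ _⟩
  rintro r (rfl | ⟨hr1, hr2⟩)
  · exact mem_insert _ _
  · exact mem_insert_of_mem _ ⟨hr1, le_trans hxx hr2⟩

lemma binvfun_le_beta {β : ℝ → ℝ} {x : ℝ} (hx : x ∈ Icc (0:ℝ) 1)
    (hβ : β x ∈ Icc (0:ℝ) 1) : binvfun β x ≤ β x := by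
  apply csInf_le (binvfun_bddBelow β x)
  apply mem_insert_of_mem
  refine ⟨hβ, ?_⟩
  apply le_csSup (bfun_bddAbove β (β x))
  exact mem_insert_of_mem _ ⟨hx, le_rfl⟩

lemma binvfun_key {β : ℝ → ℝ} {x0 c : ℝ} (hlt : binvfun β x0 < c) (hc : c ≤ 1) :
    x0 ≤ bfun β c := by
  obtain ⟨e, he, helt⟩ := exists_lt_of_csInf_lt ⟨1, mem_insert _ _⟩ hlt
  rcases he with rfl | ⟨he1, he2⟩
  · linarith
  · exact le_trans he2 (bfun_mono β helt.le)

end thresh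

section stepint

variable {ψ : ℝ → ℝ → ℝ} {M Kr : ℝ}

lemma cell_le {n k : ℕ} (hn : 0 < n) : ((k:ℝ)/n) ≤ (((k:ℝ)+1)/n) := by
  have hn' : (0:ℝ) < n := by exact_mod_cast hn
  have hstep : ((k:ℝ)+1)/n = (k:ℝ)/n + 1/n := by ring
  have : (0:ℝ) ≤ 1/n := by positivity
  linarith

lemma ae_ne_pt (c : ℝ) : ∀ᵐ (y:ℝ) ∂volume, y ≠ c := by
  rw [MeasureTheory.ae_iff]
  have : {y : ℝ | ¬ y ≠ c} = {c} := by ext z; simp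
  rw [this]
  exact measure_singleton c

lemma step_cell_ae {A : ℕ → ℝ} {n k : ℕ} (hn : 0 < n) (hk : k < n) :
    (fun y => RevF ψ (stepf A n y) y)
      =ᵐ[volume.restrict (Set.uIoc ((k:ℝ)/n) (((k:ℝ)+1)/n))] (fun y => RevF ψ (A k) y) := by
  have hae : ∀ᵐ (y:ℝ) ∂(volume.restrict (Set.uIoc ((k:ℝ)/n) (((k:ℝ)+1)/n))),
      y ≠ (((k:ℝ)+1)/n) := MeasureTheory.ae_restrict_of_ae (ae_ne_pt _)
  have hmem : ∀ᵐ (y:ℝ) ∂(volume.restrict (Set.uIoc ((k:ℝ)/n) (((k:ℝ)+1)/n))),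
      y ∈ Set.uIoc ((k:ℝ)/n) (((k:ℝ)+1)/n) :=
    MeasureTheory.ae_restrict_mem measurableSet_uIoc
  filter_upwards [hae, hmem] with y hne hy
  have hy' : y ∈ Ico ((k:ℝ)/n) (((k:ℝ)+1)/n) := by
    rw [uIoc_of_le (cell_le hn)] at hy
    exact ⟨hy.1.le, lt_of_le_of_ne hy.2 hne⟩
  rw [stepf_on_cell hn hk hy']

lemma step_integral
    (Hcx : ∀ y ∈ Icc (0:ℝ) 1, ContinuousOn (fun t => ψ t y) (Icc 0 1))
    (Hly : ∀ t ∈ Icc (0:ℝ) 1, ∀ y ∈ Icc (0:ℝ) 1, ∀ y' ∈ Icc (0:ℝ) 1,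
      |ψ t y - ψ t y'| ≤ Kr * |y - y'|)
    (hKr : 0 ≤ Kr)
    {A : ℕ → ℝ} {n : ℕ} (hn : 0 < n) (hA : ∀ k, k < n → A k ∈ Icc (0:ℝ) 1) :
    (∫ y in (0:ℝ)..1, RevF ψ (stepf A n y) y)
      = ∑ k ∈ Finset.range n, ∫ y in ((k:ℝ)/n)..(((k:ℝ)+1)/n), RevF ψ (A k) y := by
  have hn' : (0:ℝ) < n := by exact_mod_cast hn
  have hkI : ∀ k : ℕ, k ≤ n → ((k:ℝ)/n) ∈ Icc (0:ℝ) 1 := by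
    intro k hkn
    constructor
    · positivity
    · rw [div_le_one hn']; exact_mod_cast hkn
  have cellII : ∀ k : ℕ, k < n → IntervalIntegrable (fun y => RevF ψ (A k) y)
      volume ((k:ℝ)/n) (((k:ℝ)+1)/n) := by
    intro k hk
    apply II_of_contOn (revF_conty Hcx Hly hKr (hA k hk)) (hkI k hk.le)
    have : (((k:ℝ)+1)/n) = (((k+1:ℕ)):ℝ)/n := by push_cast; ring
    rw [this]
    exact hkI (k+1) hk
  have cellII' : ∀ k : ℕ, k < n → IntervalIntegrable (fun y => RevF ψ (stepf A n y) y)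
      volume ((k:ℝ)/n) (((k:ℝ)+1)/n) := by
    intro k hk
    exact (cellII k hk).congr_ae (step_cell_ae hn hk).symm
  have key := intervalIntegral.sum_integral_adjacent_intervals
    (a := fun k : ℕ => (k:ℝ)/n) (μ := volume)
    (f := fun y => RevF ψ (stepf A n y) y) (n := n) ?_
  · have e0 : ((0:ℕ):ℝ)/(n:ℝ) = (0:ℝ) := by norm_num
    have e1 : ((n:ℕ):ℝ)/(n:ℝ) = (1:ℝ) := by field_simp
    rw [e0, e1] at key
    rw [← key]
    apply Finset.sum_congr rfl
    intro k hk
    rw [Finset.mem_range] at hk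
    have hc : (((k+1:ℕ)):ℝ)/n = ((k:ℝ)+1)/n := by push_cast; ring
    calc (∫ y in (((k:ℕ)):ℝ)/n..(((k+1:ℕ)):ℝ)/n, RevF ψ (stepf A n y) y)
        = ∫ y in ((k:ℝ)/n)..(((k:ℝ)+1)/n), RevF ψ (stepf A n y) y := by
          congr 1
      _ = ∫ y in ((k:ℝ)/n)..(((k:ℝ)+1)/n), RevF ψ (A k) y :=
          intervalIntegral.integral_congr_ae
            ((MeasureTheory.ae_restrict_iff' measurableSet_uIoc).1 (step_cell_ae hn hk)
              |>.filter_mono (MeasureTheory.ae_mono le_rfl))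
  · intro k hk
    have := cellII' k hk
    convert this using 2
    push_cast
    ring
  -- done

end stepint

section main

-- continuity from a pointwise Lipschitz bound on [0,1]
lemma lip_cont {w : ℝ → ℝ} {Kr : ℝ} (hKr : 0 ≤ Kr)
    (hl : ∀ a ∈ Icc (0:ℝ) 1, ∀ b ∈ Icc (0:ℝ) 1, |w a - w b| ≤ Kr * |a - b|) :
    ContinuousOn w (Icc 0 1) := by
  have : LipschitzOnWith (Real.toNNReal Kr) w (Icc 0 1) := by
    rw [lipschitzOnWith_iff_dist_le_mul]
    intro a ha b hb
    rw [Real.dist_eq, Real.dist_eq]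
    calc |w a - w b| ≤ Kr * |a - b| := hl a ha b hb
      _ = (Real.toNNReal Kr : ℝ) * |a - b| := by rw [Real.coe_toNNReal _ hKr]
  exact this.continuousOn

-- decomposing points of [0,1) into grid cells
lemma floor_cell {n : ℕ} (hn : 0 < n) {z : ℝ} (hz0 : 0 ≤ z) (hz1 : z < 1) :
    (⌊z*(n:ℝ)⌋).toNat < n ∧
      z ∈ Ico ((((⌊z*(n:ℝ)⌋).toNat:ℝ))/n) (((((⌊z*(n:ℝ)⌋).toNat:ℝ))+1)/n) := by
  have hn' : (0:ℝ) < n := by exact_mod_cast hn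
  have h0 : (0:ℤ) ≤ ⌊z*(n:ℝ)⌋ := Int.floor_nonneg.2 (by positivity)
  have hlt : ⌊z*(n:ℝ)⌋ < (n:ℤ) := by
    have : z * n < n := by nlinarith
    have h2 : (⌊z*(n:ℝ)⌋ : ℝ) ≤ z * n := Int.floor_le _
    exact_mod_cast lt_of_le_of_lt h2 this
  have hcast : (((⌊z*(n:ℝ)⌋).toNat : ℕ) : ℝ) = ((⌊z*(n:ℝ)⌋ : ℤ) : ℝ) := by
    exact_mod_cast Int.toNat_of_nonneg h0
  constructor
  · omega
  · constructor
    · rw [div_le_iff₀ hn']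
      have h2 : ((⌊z*(n:ℝ)⌋ : ℤ) : ℝ) ≤ z * n := Int.floor_le _
      linarith
    · rw [lt_div_iff₀ hn']
      have h3 := Int.lt_floor_add_one (z * (n:ℝ))
      linarith

end main

/-- near-optimality of grid auctions: there is a constant `c`
(depending only on `φ`) such that for every `n ≥ 2` some valid allocation pair
whose curves are constant on each interval `[k/n, (k+1)/n)` extracts profit
within `c/n` of the optimum over all valid allocation pairs. -/
theorem grid_auctions_near_optimal
    (φ f g : ℝ → ℝ → ℝ)
    (hφlip : ∃ K : NNReal, LipschitzOnWith K (fun p : ℝ × ℝ => φ p.1 p.2)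
      (Set.Icc (0:ℝ) 1 ×ˢ Set.Icc (0:ℝ) 1))
    (hφpos : ∀ p ∈ (Set.Icc (0:ℝ) 1 ×ˢ Set.Icc (0:ℝ) 1), 0 < φ p.1 p.2)
    (hmpc : IsMPC φ f g)
    (hf1 : ∀ x y, f x y ≤ 1) (hg1 : ∀ x y, g x y ≤ 1) :
    ∃ c : ℝ, ∀ n : ℕ, 2 ≤ n →
      ∃ α β : ℝ → ℝ, ValidPairC α β ∧
        (∀ k : ℕ, k < n → ∀ y ∈ Set.Ico ((k : ℝ) / n) (((k : ℝ) + 1) / n),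
          α y = α ((k : ℝ) / n)) ∧
        (∀ k : ℕ, k < n → ∀ x ∈ Set.Ico ((k : ℝ) / n) (((k : ℝ) + 1) / n),
          β x = β ((k : ℝ) / n)) ∧
        Profit α β φ ≥
          sSup {r : ℝ | ∃ α' β' : ℝ → ℝ, ValidPairC α' β' ∧
              r = Profit α' β' φ}
            - c / n := by
  classical
  obtain ⟨K, hlip⟩ := hφlip
  set Kr : ℝ := (K : ℝ) with hKrdef
  have hKr : 0 ≤ Kr := K.coe_nonneg
  set Mv : ℝ := |φ 0 0| + Kr with hMvdef
  -- pointwise Lipschitz facts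
  have hdist : ∀ x ∈ Icc (0:ℝ) 1, ∀ y ∈ Icc (0:ℝ) 1, ∀ x' ∈ Icc (0:ℝ) 1,
      ∀ y' ∈ Icc (0:ℝ) 1, |φ x y - φ x' y'| ≤ Kr * max |x - x'| |y - y'| := by
    intro x hx y hy x' hx' y' hy'
    have := LipschitzOnWith.dist_le_mul hlip (x, y) (mk_mem_prod hx hy)
      (x', y') (mk_mem_prod hx' hy')
    rw [Prod.dist_eq, Real.dist_eq, Real.dist_eq, Real.dist_eq] at this
    exact this
  have h01 : (0:ℝ) ∈ Icc (0:ℝ) 1 := by norm_num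
  have h11 : (1:ℝ) ∈ Icc (0:ℝ) 1 := by norm_num
  have Hbd : ∀ x ∈ Icc (0:ℝ) 1, ∀ y ∈ Icc (0:ℝ) 1, |φ x y| ≤ Mv := by
    intro x hx y hy
    have h1 := hdist x hx y hy 0 h01 0 h01
    have h2 : max |x - 0| |y - 0| ≤ 1 := by
      apply max_le <;> rw [abs_le] <;> constructor <;> first
        | linarith [hx.1, hx.2] | linarith [hy.1, hy.2]
    have h3 : |φ x y| ≤ |φ x y - φ 0 0| + |φ 0 0| := by
      have := abs_add_le (φ x y - φ 0 0) (φ 0 0); simpa using this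
    have h4 : Kr * max |x - 0| |y - 0| ≤ Kr * 1 := mul_le_mul_of_nonneg_left h2 hKr
    rw [hMvdef]; linarith
  have Hlx : ∀ y ∈ Icc (0:ℝ) 1, ∀ t ∈ Icc (0:ℝ) 1, ∀ t' ∈ Icc (0:ℝ) 1,
      |φ t y - φ t' y| ≤ Kr * |t - t'| := by
    intro y hy t ht t' ht'
    have h1 := hdist t ht y hy t' ht' y hy
    have h2 : max |t - t'| |y - y| = |t - t'| := by
      rw [sub_self, abs_zero]; exact max_eq_left (abs_nonneg _)
    rw [h2] at h1; exact h1
  have Hly : ∀ t ∈ Icc (0:ℝ) 1, ∀ y ∈ Icc (0:ℝ) 1, ∀ y' ∈ Icc (0:ℝ) 1,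
      |φ t y - φ t y'| ≤ Kr * |y - y'| := by
    intro t ht y hy y' hy'
    have h1 := hdist t ht y hy t ht y' hy'
    have h2 : max |t - t| |y - y'| = |y - y'| := by
      rw [sub_self, abs_zero]; exact max_eq_right (abs_nonneg _)
    rw [h2] at h1; exact h1
  have Hcx : ∀ y ∈ Icc (0:ℝ) 1, ContinuousOn (fun t => φ t y) (Icc 0 1) :=
    fun y hy => lip_cont hKr (fun a ha b hb => Hlx y hy a ha b hb)
  -- transpose
  set φT : ℝ → ℝ → ℝ := fun a b => φ b a with hφTdef
  set gT : ℝ → ℝ → ℝ := fun a b => g b a with hgTdef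
  have Hbd_T : ∀ x ∈ Icc (0:ℝ) 1, ∀ y ∈ Icc (0:ℝ) 1, |φT x y| ≤ Mv :=
    fun x hx y hy => Hbd y hy x hx
  have Hcx_T : ∀ y ∈ Icc (0:ℝ) 1, ContinuousOn (fun t => φT t y) (Icc 0 1) :=
    fun y hy => lip_cont hKr (fun a ha b hb => Hly y hy a ha b hb)
  have Hly_T : ∀ t ∈ Icc (0:ℝ) 1, ∀ y ∈ Icc (0:ℝ) 1, ∀ y' ∈ Icc (0:ℝ) 1,
      |φT t y - φT t y'| ≤ Kr * |y - y'| :=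
    fun t ht y hy y' hy' => Hlx t ht y hy y' hy'
  obtain ⟨hfmeas, hgmeas, hf0, hg0, hFf, hFg⟩ := hmpc
  have hgTmeas : Measurable (fun p : ℝ × ℝ => gT p.1 p.2) := hgmeas.comp measurable_swap
  have hgT0 : ∀ x y, 0 ≤ gT x y := fun x y => hg0 y x
  have hgT1 : ∀ x y, gT x y ≤ 1 := fun x y => hg1 y x
  have HF_T : ∀ x ∈ Icc (0:ℝ) 1, ∀ y ∈ Icc (0:ℝ) 1,
      (∫ t in x..1, gT t y) = sSup ((fun x' => RevF φT x' y) '' Icc x 1) := by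
    intro x hx y hy
    have := hFg y hy x hx
    exact this
  -- the target supremum
  set SetR : Set ℝ := {r : ℝ | ∃ α' β' : ℝ → ℝ, ValidPairC α' β' ∧ r = Profit α' β' φ}
    with hSetR
  have hne : SetR.Nonempty := by
    refine ⟨Profit (fun _ => 1) (fun _ => 1) φ, (fun _ => 1), (fun _ => 1), ?_, rfl⟩
    refine ⟨measurable_const, measurable_const, fun y _ => h11, fun x _ => h11, ?_⟩
    intro x hx y hy _
    exact le_trans hx.2 (le_refl 1)
  set S : ℝ := sSup SetR with hS
  refine ⟨5 + 4*Kr + 4*Mv, ?_⟩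
  intro n hn2
  have hn : 0 < n := by omega
  have hn' : (0:ℝ) < n := by exact_mod_cast hn
  have hinv : (0:ℝ) < 1/n := by positivity
  -- a near-optimal valid pair
  obtain ⟨r, hrmem, hrgt⟩ := exists_lt_of_lt_csSup hne
    (show S - 1/n < S by linarith)
  obtain ⟨α, β, hvp, rfl⟩ := hrmem
  obtain ⟨hαm, hβm, hαI, hβI, hval⟩ := hvp
  -- threshold functions
  set b : ℝ → ℝ := bfun β with hbdef
  set binv : ℝ → ℝ := binvfun β with hbinvdef
  have hbI : ∀ y, b y ∈ Icc (0:ℝ) 1 := bfun_mem β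
  have hbinvI : ∀ x, binv x ∈ Icc (0:ℝ) 1 := binvfun_mem β
  have hbmono : Monotone b := bfun_mono β
  have hbinvmono : Monotone binv := binvfun_mono β
  -- the profit upper bound
  have hub1 : (∫ y in (0:ℝ)..1, RevF φ (α y) y) ≤ ∫ y in (0:ℝ)..1, Fd f (b y) y := by
    apply profit_side_ub Hbd hfmeas hf0 hf1 hFf hbmono.measurable hbI
    intro y hy
    exact ⟨bfun_le_alpha hval hy (hαI y hy).1, (hαI y hy).2⟩
  have hub2 : (∫ x in (0:ℝ)..1, RevG φ x (β x)) ≤ ∫ x in (0:ℝ)..1, Fd gT (binv x) x := by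
    have hEq : (∫ x in (0:ℝ)..1, RevG φ x (β x))
        = ∫ x in (0:ℝ)..1, RevF φT (β x) x := rfl
    rw [hEq]
    apply profit_side_ub Hbd_T hgTmeas hgT0 hgT1 HF_T hbinvmono.measurable hbinvI
    intro x hx
    exact ⟨binvfun_le_beta hx (hβI x hx), (hβI x hx).2⟩
  -- the two side approximations
  obtain ⟨A, hA_I, hA_grid, hA_min, hA_int⟩ :=
    side_approx Hbd Hcx Hly hKr hfmeas hf0 hf1 hFf hbmono hbI hn
  obtain ⟨Bv, hB_I, hB_grid, hB_min, hB_int⟩ :=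
    side_approx Hbd_T Hcx_T Hly_T hKr hgTmeas hgT0 hgT1 HF_T hbinvmono hbinvI hn
  -- the grid pair
  refine ⟨stepf A n, stepf Bv n, ?_, ?_, ?_, ?_⟩
  · -- validity
    refine ⟨stepf_measurable A n, stepf_measurable Bv n,
      fun y _ => stepf_mem hA_I y, fun x _ => stepf_mem hB_I x, ?_⟩
    intro x hx y hy hle
    by_cases hy1 : (1:ℝ) ≤ y
    · have hy1' : y = 1 := le_antisymm hy.2 hy1
      rw [hy1', stepf_at_one hn]
      exact hx.2
    push_neg at hy1
    by_cases hx1 : (1:ℝ) ≤ x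
    · exfalso
      have hx1' : x = 1 := le_antisymm hx.2 hx1
      rw [hx1', stepf_at_one hn] at hle
      linarith
    push_neg at hx1
    obtain ⟨hjlt, hjmem⟩ := floor_cell hn hx.1 hx1
    obtain ⟨hklt, hkmem⟩ := floor_cell hn hy.1 hy1
    set j : ℕ := (⌊x*(n:ℝ)⌋).toNat
    set k : ℕ := (⌊y*(n:ℝ)⌋).toNat
    rw [stepf_on_cell hn hjlt hjmem] at hle
    rw [stepf_on_cell hn hklt hkmem]
    -- Bv j ≤ k/n
    obtain ⟨m, hm⟩ := hB_grid j hjlt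
    have hBv_le : Bv j ≤ (k:ℝ)/n := by
      have h1 : Bv j < ((k:ℝ)+1)/n := lt_of_le_of_lt hle hkmem.2
      rw [hm] at h1 ⊢
      rw [div_lt_div_iff₀ hn' hn'] at h1
      rw [div_le_div_iff₀ hn' hn']
      have : (m:ℝ) < (k:ℝ)+1 := by nlinarith
      have hmk : m < (k:ℤ)+1 := by exact_mod_cast this
      have hmk' : (m:ℝ) ≤ (k:ℝ) := by exact_mod_cast Int.lt_add_one_iff.1 hmk
      nlinarith
    have hkn_lt1 : (k:ℝ)/n < 1 := by
      rw [div_lt_one hn']; exact_mod_cast hklt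
    -- extract the binv bound
    have hminle : min 1 (binv (((j:ℝ)+1)/n) + 1/n) ≤ (k:ℝ)/n :=
      le_trans (hB_min j hjlt) hBv_le
    have hbinv_lt : binv (((j:ℝ)+1)/n) < (k:ℝ)/n := by
      rcases le_total (binv (((j:ℝ)+1)/n) + 1/n) 1 with hz | hz
      · rw [min_eq_right hz] at hminle; linarith
      · rw [min_eq_left hz] at hminle; linarith
    have hbk : ((j:ℝ)+1)/n ≤ b ((k:ℝ)/n) :=
      binvfun_key hbinv_lt hkn_lt1.le
    -- conclude
    have hAk : ((j:ℝ)+1)/n ≤ A k := by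
      apply le_trans ?_ (hA_min k hklt)
      apply le_min
      · rw [div_le_one hn']
        have : ((j:ℝ)+1) = ((j+1:ℕ):ℝ) := by push_cast; ring
        rw [this]; exact_mod_cast hjlt
      · have h2 : b ((k:ℝ)/n) ≤ b (((k:ℝ)+1)/n) := hbmono (cell_le hn)
        linarith
    exact le_trans hjmem.2.le hAk
  · -- α constancy
    intro k hk y hy
    rw [stepf_on_cell hn hk hy, stepf_on_cell hn hk]
    refine ⟨le_rfl, ?_⟩
    have := cell_le (n := n) (k := k) hn
    have hne' : ((k:ℝ)/n) ≠ ((k:ℝ)+1)/n := by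
      have : ((k:ℝ)+1)/n = (k:ℝ)/n + 1/n := by ring
      rw [this]; intro hcon; linarith
    exact lt_of_le_of_ne this hne'
  · -- β constancy
    intro k hk x hx
    rw [stepf_on_cell hn hk hx, stepf_on_cell hn hk]
    refine ⟨le_rfl, ?_⟩
    have := cell_le (n := n) (k := k) hn
    have hne' : ((k:ℝ)/n) ≠ ((k:ℝ)+1)/n := by
      have : ((k:ℝ)+1)/n = (k:ℝ)/n + 1/n := by ring
      rw [this]; intro hcon; linarith
    exact lt_of_le_of_ne this hne'
  · -- the profit bound
    have hstep1 : (∫ y in (0:ℝ)..1, RevF φ (stepf A n y) y)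
        = ∑ k ∈ Finset.range n, ∫ y in ((k:ℝ)/n)..(((k:ℝ)+1)/n), RevF φ (A k) y :=
      step_integral Hcx Hly hKr hn hA_I
    have hstep2 : (∫ x in (0:ℝ)..1, RevG φ x (stepf Bv n x))
        = ∑ k ∈ Finset.range n, ∫ x in ((k:ℝ)/n)..(((k:ℝ)+1)/n), RevF φT (Bv k) x := by
      have hEq : (∫ x in (0:ℝ)..1, RevG φ x (stepf Bv n x))
          = ∫ x in (0:ℝ)..1, RevF φT (stepf Bv n x) x := rfl
      rw [hEq]
      exact step_integral Hcx_T Hly_T hKr hn hB_I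
    have hgridP : Profit (stepf A n) (stepf Bv n) φ
        = (∑ k ∈ Finset.range n, ∫ y in ((k:ℝ)/n)..(((k:ℝ)+1)/n), RevF φ (A k) y)
          + ∑ k ∈ Finset.range n, ∫ x in ((k:ℝ)/n)..(((k:ℝ)+1)/n), RevF φT (Bv k) x := by
      rw [Profit, hstep1, hstep2]
    have hP : Profit α β φ
        = (∫ y in (0:ℝ)..1, RevF φ (α y) y) + ∫ x in (0:ℝ)..1, RevG φ x (β x) := rfl
    have hcdiv : (5 + 4*Kr + 4*Mv)/(n:ℝ) = 1/n + ((2 + 2*Kr + 2*Mv)/n + (2 + 2*Kr + 2*Mv)/n) := by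
      field_simp
      ring
    rw [ge_iff_le, hgridP]
    have hchain : Profit α β φ
        ≤ (∑ k ∈ Finset.range n, ∫ y in ((k:ℝ)/n)..(((k:ℝ)+1)/n), RevF φ (A k) y)
          + (∑ k ∈ Finset.range n, ∫ x in ((k:ℝ)/n)..(((k:ℝ)+1)/n), RevF φT (Bv k) x)
          + ((2 + 2*Kr + 2*Mv)/n + (2 + 2*Kr + 2*Mv)/n) := by
      rw [hP]
      have c1 := le_trans hub1 hA_int
      have c2 := le_trans hub2 hB_int
      linarith
    rw [hcdiv]
    linarith
end
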